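/- arXiv:1611.06861 — 18 statements merged into one kernel-verified Lean document; each statement's English description precedes it below -/
import Mathlib

section
/- If f: S → ℂ satisfies the Kannappan-type equation f(xyz₀) + μ(y)f(xτ(y)z₀) = 2f(x)f(y) for all x,y ∈ S, then f(x) = μ(x)f(τ(x)) for all x ∈ S. -/
theorem stmt_0 {S : Type*} [Semigroup S] (τ : S → S)
    (hτinv : ∀ x, τ (τ x) = x)
    (hτ : (∀ x y, τ (x * y) = τ x * τ y) ∨ (∀ x y, τ (x * y) = τ y * τ x))
    (μ : S → ℂ) (hμ : ∀ x y, μ (x * y) = μ x * μ y)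
    (hμτ : ∀ x, μ (x * τ x) = 1)
    (z₀ : S) (hz₀ : ∀ x, z₀ * x = x * z₀)
    (f : S → ℂ) (hf : ∀ x y, f (x * y * z₀) + μ y * f (x * τ y * z₀) = 2 * f x * f y) :
    ∀ x, f x = μ x * f (τ x) := by
  have key : ∀ x y, f x * (f y - μ y * f (τ y)) = 0 := by
    intro x y
    have h1 := hf x y
    have h2 := hf x (τ y)
    rw [hτinv] at h2
    have hm : μ y * μ (τ y) = 1 := by rw [← hμ]; exact hμτ y
    linear_combination (-(1/2 : ℂ)) * h1 + (μ y / 2) * h2 - (f (x * y * z₀) / 2) * hm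
  by_cases hz : ∀ x, f x = 0
  · intro x; simp [hz]
  · push_neg at hz
    obtain ⟨x₀, hx₀⟩ := hz
    intro y
    have := key x₀ y
    rcases mul_eq_zero.mp this with h | h
    · exact absurd h hx₀
    · exact sub_eq_zero.mp h
end

section
/- If f: S → ℂ satisfies f(xyz₀) + μ(y)f(xτ(y)z₀) = 2f(x)f(y) for all x,y ∈ S, then f(xτ(z₀)z₀) = μ(τ(z₀))f(z₀)f(x) for all x ∈ S. -/
theorem stmt_1 {S : Type*} [Semigroup S] (τ : S → S)
    (hτinv : ∀ x, τ (τ x) = x)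
    (hτ : (∀ x y, τ (x * y) = τ x * τ y) ∨ (∀ x y, τ (x * y) = τ y * τ x))
    (μ : S → ℂ) (hμ : ∀ x y, μ (x * y) = μ x * μ y)
    (hμτ : ∀ x, μ (x * τ x) = 1)
    (z₀ : S) (hz₀ : ∀ x, z₀ * x = x * z₀)
    (f : S → ℂ) (hf : ∀ x y, f (x * y * z₀) + μ y * f (x * τ y * z₀) = 2 * f x * f y) :
    ∀ x, f (x * τ z₀ * z₀) = μ (τ z₀) * f z₀ * f x := by
  -- τ z₀ is central
  have hτz : ∀ t : S, τ z₀ * t = t * τ z₀ := by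
    intro t
    rcases hτ with h | h
    · calc τ z₀ * t = τ z₀ * τ (τ t) := by rw [hτinv]
        _ = τ (z₀ * τ t) := (h z₀ (τ t)).symm
        _ = τ (τ t * z₀) := by rw [hz₀]
        _ = τ (τ t) * τ z₀ := h (τ t) z₀
        _ = t * τ z₀ := by rw [hτinv]
    · calc τ z₀ * t = τ z₀ * τ (τ t) := by rw [hτinv]
        _ = τ (τ t * z₀) := (h (τ t) z₀).symm
        _ = τ (z₀ * τ t) := by rw [hz₀]
        _ = τ (τ t) * τ z₀ := h z₀ (τ t)
        _ = t * τ z₀ := by rw [hτinv]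
  have hcz : ∀ a b : S, a * z₀ * b = a * b * z₀ := fun a b => by
    rw [mul_assoc, hz₀ b, ← mul_assoc]
  have hct : ∀ a b : S, a * τ z₀ * b = a * b * τ z₀ := fun a b => by
    rw [mul_assoc, hτz b, ← mul_assoc]
  have hμz : μ z₀ * μ (τ z₀) = 1 := by rw [← hμ]; exact hμτ z₀
  intro x
  by_cases hr : ∀ w, f w = 0
  · simp [hr]
  · push_neg at hr
    obtain ⟨w, hw⟩ := hr
    have hμw : μ w * μ (τ w) = 1 := by rw [← hμ]; exact hμτ w
    -- cleaned instance of hf x (τ z₀ * w * z₀)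
    have hE2 : f (x * τ z₀ * z₀ * w * z₀) + μ w * f (x * τ z₀ * z₀ * τ w * z₀)
        = 2 * f x * f (τ z₀ * w * z₀) := by
      have h0 := hf x (τ z₀ * w * z₀)
      have hμ2 : μ (τ z₀ * w * z₀) = μ w := by
        rw [hμ, hμ]; linear_combination μ w * hμz
      have r1 : x * (τ z₀ * w * z₀) * z₀ = x * τ z₀ * z₀ * w * z₀ := by
        simp only [← mul_assoc]
        rw [← hcz (x * τ z₀) w]
      have r2 : x * τ (τ z₀ * w * z₀) * z₀ = x * τ z₀ * z₀ * τ w * z₀ := by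
        rcases hτ with h | h
        · rw [h, h, hτinv]
          simp only [← mul_assoc]
          rw [← hct (x * z₀) (τ w), hcz x (τ z₀)]
        · rw [h, h, hτinv]
          simp only [← mul_assoc]
          rw [← hcz (x * τ z₀) (τ w)]
      rw [r1, r2, hμ2] at h0
      exact h0
    -- cleaned instance of hf x (τ z₀ * τ w * z₀)
    have hE3 : f (x * τ z₀ * z₀ * τ w * z₀) + μ (τ w) * f (x * τ z₀ * z₀ * w * z₀)
        = 2 * f x * f (τ z₀ * τ w * z₀) := by
      have h0 := hf x (τ z₀ * τ w * z₀)
      have hμ3 : μ (τ z₀ * τ w * z₀) = μ (τ w) := by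
        rw [hμ, hμ]; linear_combination μ (τ w) * hμz
      have r3 : x * (τ z₀ * τ w * z₀) * z₀ = x * τ z₀ * z₀ * τ w * z₀ := by
        simp only [← mul_assoc]
        rw [← hcz (x * τ z₀) (τ w)]
      have r4 : x * τ (τ z₀ * τ w * z₀) * z₀ = x * τ z₀ * z₀ * w * z₀ := by
        rcases hτ with h | h
        · rw [h, h, hτinv, hτinv]
          simp only [← mul_assoc]
          rw [← hct (x * z₀) w, hcz x (τ z₀)]
        · rw [h, h, hτinv, hτinv]
          simp only [← mul_assoc]
          rw [← hcz (x * τ z₀) w]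
      rw [r3, r4, hμ3] at h0
      exact h0
    have hE1 := hf (τ z₀) w
    have hE4 := hf (x * τ z₀ * z₀) w
    have hE6 : f (x * τ z₀ * z₀) + μ (τ z₀) * f (x * z₀ * z₀) = 2 * f x * f (τ z₀) := by
      have h0 := hf x (τ z₀)
      rwa [hτinv] at h0
    have hkey : f (x * τ z₀ * z₀) = μ (τ z₀) * f (x * z₀ * z₀) := by
      have h2 : 2 * f w * f (x * τ z₀ * z₀) = 2 * f w * (μ (τ z₀) * f (x * z₀ * z₀)) := by
        linear_combination hE2 + μ w * hE3 - f (x * τ z₀ * z₀ * w * z₀) * hμw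
          - 2 * hE4 + 2 * f x * hE1 - 2 * f w * hE6
      exact mul_left_cancel₀ (mul_ne_zero two_ne_zero hw) h2
    have hE7 := hf x z₀
    linear_combination (hkey + μ (τ z₀) * hE7 - f (x * τ z₀ * z₀) * hμz) / 2
end

section
/- If f: S → ℂ satisfies f(xyz₀) + μ(y)f(xτ(y)z₀) = 2f(x)f(y) for all x,y ∈ S, then f(xz₀²) = f(x)f(z₀) for all x ∈ S. -/
theorem stmt_2 {S : Type*} [Semigroup S] (τ : S → S)
    (hτinv : ∀ x, τ (τ x) = x)
    (hτ : (∀ x y, τ (x * y) = τ x * τ y) ∨ (∀ x y, τ (x * y) = τ y * τ x))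
    (μ : S → ℂ) (hμ : ∀ x y, μ (x * y) = μ x * μ y)
    (hμτ : ∀ x, μ (x * τ x) = 1)
    (z₀ : S) (hz₀ : ∀ x, z₀ * x = x * z₀)
    (f : S → ℂ) (hf : ∀ x y, f (x * y * z₀) + μ y * f (x * τ y * z₀) = 2 * f x * f y) :
    ∀ x, f (x * (z₀ * z₀)) = f x * f z₀ := by
  by_cases hf0 : ∀ x, f x = 0
  · intro x; simp [hf0]
  push_neg at hf0
  obtain ⟨a, ha⟩ := hf0
  -- basic μ facts
  have hμz : μ z₀ * μ (τ z₀) = 1 := by rw [← hμ]; exact hμτ z₀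
  have hμzne : μ z₀ ≠ 0 := left_ne_zero_of_mul_eq_one hμz
  have hμτzne : μ (τ z₀) ≠ 0 := right_ne_zero_of_mul_eq_one hμz
  -- τ z₀ is central
  have hcτ : ∀ s : S, τ z₀ * s = s * τ z₀ := by
    intro s
    rcases hτ with h | h
    · conv_lhs => rw [← hτinv s]
      rw [← h, hz₀ (τ s), h, hτinv]
    · conv_lhs => rw [← hτinv s]
      rw [← h, ← hz₀ (τ s), h, hτinv]
  -- w := z₀ * τ z₀ is central
  have hwc : ∀ s : S, (z₀ * τ z₀) * s = s * (z₀ * τ z₀) := by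
    intro s
    rw [mul_assoc, hcτ s, ← mul_assoc, hz₀ s, mul_assoc]
  have hτw : τ (z₀ * τ z₀) = z₀ * τ z₀ := by
    rcases hτ with h | h
    · rw [h, hτinv, hz₀]
    · rw [h, hτinv]
  have hτzz : τ (z₀ * z₀) = τ z₀ * τ z₀ := by
    rcases hτ with h | h <;> rw [h]
  -- f ∘ τ
  have hfτ : ∀ y, f (τ y) = μ (τ y) * f y := by
    have key : ∀ y, f a * f y = μ y * f a * f (τ y) := by
      intro y
      have h1 := hf a y
      have h2 := hf a (τ y)
      rw [hτinv] at h2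
      have hμy : μ y * μ (τ y) = 1 := by rw [← hμ]; exact hμτ y
      linear_combination (μ y * h2 - h1 - f (a * y * z₀) * hμy) / 2
    intro y
    have h3 := key y
    have hμy : μ y * μ (τ y) = 1 := by rw [← hμ]; exact hμτ y
    have h4 : f a * (f (τ y) - μ (τ y) * f y) = 0 := by
      linear_combination (-(μ (τ y))) * h3 - f a * f (τ y) * hμy
    rcases mul_eq_zero.mp h4 with h5 | h5
    · exact absurd h5 ha
    · linear_combination h5
  -- (†) : f (x * w * z₀) = f x * f w
  have hdag : ∀ x, f (x * (z₀ * τ z₀) * z₀) = f x * f (z₀ * τ z₀) := by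
    intro x
    have h1 := hf x (z₀ * τ z₀)
    rw [hτw, hμτ z₀, one_mul] at h1
    linear_combination h1 / 2
  -- (R5) : f x * f (y*w) = f (x*w) * f y
  have hR5 : ∀ x y, f x * f (y * (z₀ * τ z₀)) = f (x * (z₀ * τ z₀)) * f y := by
    intro x y
    have h1 := hf x (y * (z₀ * τ z₀))
    have h2 := hf (x * (z₀ * τ z₀)) y
    have e1 : x * (y * (z₀ * τ z₀)) * z₀ = x * y * (z₀ * τ z₀) * z₀ := by
      rw [mul_assoc x y]
    have eτ : τ (y * (z₀ * τ z₀)) = τ y * (z₀ * τ z₀) := by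
      rcases hτ with h | h
      · rw [h, hτw]
      · rw [h, hτw, hwc (τ y)]
    have e2 : x * (τ y * (z₀ * τ z₀)) * z₀ = x * τ y * (z₀ * τ z₀) * z₀ := by
      rw [mul_assoc x (τ y)]
    have e3 : x * (z₀ * τ z₀) * y * z₀ = x * y * (z₀ * τ z₀) * z₀ := by
      rw [mul_assoc x (z₀ * τ z₀), hwc y, ← mul_assoc x y]
    have e4 : x * (z₀ * τ z₀) * τ y * z₀ = x * τ y * (z₀ * τ z₀) * z₀ := by
      rw [mul_assoc x (z₀ * τ z₀), hwc (τ y), ← mul_assoc x (τ y)]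
    have eμ : μ (y * (z₀ * τ z₀)) = μ y := by
      rw [hμ, hμτ z₀, mul_one]
    rw [e1, eτ, e2, eμ] at h1
    rw [e3, e4] at h2
    linear_combination (h2 - h1) / 2
  -- (R7)
  have hR7 : ∀ x, f a * (f x * f (z₀ * τ z₀)) = f (a * (z₀ * τ z₀)) * f (x * z₀) := by
    intro x
    have h1 := hdag x
    have e : x * (z₀ * τ z₀) * z₀ = x * z₀ * (z₀ * τ z₀) := by
      rw [mul_assoc x (z₀ * τ z₀), hwc z₀, ← mul_assoc x z₀]
    rw [e] at h1
    have h2 := hR5 a (x * z₀)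
    rw [h1] at h2
    exact h2
  intro x
  by_cases hA : f (a * (z₀ * τ z₀)) = 0
  · -- degenerate case : f (y*w) = 0 for all y, f z₀ = 0
    have fw0 : ∀ y, f (y * (z₀ * τ z₀)) = 0 := by
      intro y
      have h := hR5 a y
      rw [hA, zero_mul] at h
      exact (mul_eq_zero.mp h).resolve_left ha
    have fτz0 : f (τ z₀) = 0 := by
      have h := hf (τ z₀) a
      have e1 : τ z₀ * a * z₀ = a * (z₀ * τ z₀) := by
        rw [hcτ a, mul_assoc, ← hz₀ (τ z₀)]
      have e2 : τ z₀ * τ a * z₀ = τ a * (z₀ * τ z₀) := by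
        rw [hcτ (τ a), mul_assoc, ← hz₀ (τ z₀)]
      rw [e1, e2, fw0, fw0, mul_zero, add_zero] at h
      rcases mul_eq_zero.mp h.symm with h5 | h5
      · rcases mul_eq_zero.mp h5 with h6 | h6
        · exact absurd h6 two_ne_zero
        · exact h6
      · exact absurd h5 ha
    have c0 : f z₀ = 0 := by
      have h6 := hfτ z₀
      rw [fτz0] at h6
      exact (mul_eq_zero.mp h6.symm).resolve_left hμτzne
    have h := hf x z₀
    have e3 : x * τ z₀ * z₀ = x * (z₀ * τ z₀) := by
      rw [mul_assoc, ← hz₀ (τ z₀)]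
    rw [e3, fw0, mul_zero, add_zero, c0, mul_zero] at h
    have e4 : x * (z₀ * z₀) = x * z₀ * z₀ := (mul_assoc x z₀ z₀).symm
    rw [e4, h, c0, mul_zero]
  · -- proportional case
    set lam := f a * f (z₀ * τ z₀) / f (a * (z₀ * τ z₀)) with hlam
    have hprop : ∀ y, f (y * z₀) = lam * f y := by
      intro y
      rw [hlam, div_mul_eq_mul_div, eq_div_iff hA]
      linear_combination -(hR7 y)
    have hlamne : lam ≠ 0 := by
      intro h0
      have hz : ∀ y, f (y * z₀) = 0 := by intro y; rw [hprop, h0, zero_mul]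
      have h := hf a a
      rw [hz (a * a), hz (a * τ a), mul_zero, add_zero] at h
      rcases mul_eq_zero.mp h.symm with h1 | h1
      · rcases mul_eq_zero.mp h1 with h2 | h2
        · exact two_ne_zero h2
        · exact ha h2
      · exact ha h1
    have hP1 : ∀ y, μ z₀ * lam * f (y * τ z₀) = (2 * f z₀ - lam ^ 2) * f y := by
      intro y
      have h := hf y z₀
      have e1 : f (y * z₀ * z₀) = lam * (lam * f y) := by
        rw [hprop (y * z₀), hprop y]
      have e2 : f (y * τ z₀ * z₀) = lam * f (y * τ z₀) := hprop (y * τ z₀)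
      rw [e1, e2] at h
      linear_combination h
    have hkey : (lam ^ 2 - f z₀) * (lam ^ 2 - 2 * f z₀) = 0 := by
      have h := hf a (z₀ * z₀)
      have e1 : f (a * (z₀ * z₀) * z₀) = lam * (lam * (lam * f a)) := by
        have e : a * (z₀ * z₀) * z₀ = a * z₀ * z₀ * z₀ := by
          rw [← mul_assoc a z₀ z₀]
        rw [e, hprop, hprop, hprop]
      have eμ2 : μ (z₀ * z₀) = μ z₀ * μ z₀ := hμ z₀ z₀
      have eτarg : a * τ (z₀ * z₀) * z₀ = a * τ z₀ * τ z₀ * z₀ := by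
        rw [hτzz, ← mul_assoc a (τ z₀) (τ z₀)]
      have e2 : f (a * τ z₀ * τ z₀ * z₀) = lam * f (a * τ z₀ * τ z₀) := hprop _
      have e3 : f (z₀ * z₀) = lam * f z₀ := hprop z₀
      rw [e1, eμ2, eτarg, e2, e3] at h
      have h3 := hP1 (a * τ z₀)
      have h4 := hP1 a
      have H : μ z₀ * f a * (2 * (lam ^ 2 - f z₀) * (lam ^ 2 - 2 * f z₀)) = 0 := by
        linear_combination (μ z₀ * lam) * h - (μ z₀ ^ 2 * lam) * h3 -
          (μ z₀ * (2 * f z₀ - lam ^ 2)) * h4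
      rcases mul_eq_zero.mp H with h1 | h1
      · exact absurd h1 (mul_ne_zero hμzne ha)
      · rcases mul_eq_zero.mp h1 with h2 | h2
        · rcases mul_eq_zero.mp h2 with h5 | h5
          · exact absurd h5 two_ne_zero
          · exact mul_eq_zero_of_left h5 _
        · exact mul_eq_zero_of_right _ h2
    rcases mul_eq_zero.mp hkey with h1 | h1
    · -- lam ^ 2 = f z₀ : done
      have e4 : x * (z₀ * z₀) = x * z₀ * z₀ := (mul_assoc x z₀ z₀).symm
      rw [e4, hprop (x * z₀), hprop x]
      linear_combination f x * h1
    · -- lam ^ 2 = 2 * f z₀ : contradiction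
      exfalso
      have hzero : ∀ y, f (y * τ z₀) = 0 := by
        intro y
        have h := hP1 y
        have h' : μ z₀ * lam * f (y * τ z₀) = 0 := by
          linear_combination h - f y * h1
        rcases mul_eq_zero.mp h' with h'' | h''
        · exact absurd h'' (mul_ne_zero hμzne hlamne)
        · exact h''
      have hzz : f (τ (z₀ * z₀)) = 0 := by rw [hτzz]; exact hzero (τ z₀)
      have h6 := hfτ (z₀ * z₀)
      rw [hzz] at h6
      have hμ2 : μ (z₀ * z₀) * μ (τ (z₀ * z₀)) = 1 := by
        rw [← hμ]; exact hμτ (z₀ * z₀)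
      have hμ2ne : μ (τ (z₀ * z₀)) ≠ 0 := right_ne_zero_of_mul_eq_one hμ2
      have hfzz : f (z₀ * z₀) = 0 := (mul_eq_zero.mp h6.symm).resolve_left hμ2ne
      rw [hprop z₀] at hfzz
      rcases mul_eq_zero.mp hfzz with h5 | h5
      · exact hlamne h5
      · -- f z₀ = 0 so lam ^ 2 = 0
        have hl : lam * lam = 0 := by
          rw [h5] at h1
          linear_combination h1
        rcases mul_eq_zero.mp hl with h7 | h7 <;> exact hlamne h7
end

section
/- If f: S → ℂ satisfies f(xyz₀) + μ(y)f(xτ(y)z₀) = 2f(x)f(y) for all x,y ∈ S, then f(z₀) ≠ 0 if and only if f is not identically zero. -/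
theorem stmt_3 {S : Type*} [Semigroup S] (τ : S → S)
    (hτinv : ∀ x, τ (τ x) = x)
    (hτ : (∀ x y, τ (x * y) = τ x * τ y) ∨ (∀ x y, τ (x * y) = τ y * τ x))
    (μ : S → ℂ) (hμ : ∀ x y, μ (x * y) = μ x * μ y)
    (hμτ : ∀ x, μ (x * τ x) = 1)
    (z₀ : S) (hz₀ : ∀ x, z₀ * x = x * z₀)
    (f : S → ℂ) (hf : ∀ x y, f (x * y * z₀) + μ y * f (x * τ y * z₀) = 2 * f x * f y) :
    f z₀ ≠ 0 ↔ f ≠ 0 := by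
  constructor
  · intro h hf0
    exact h (by rw [hf0]; rfl)
  · intro hne hz
    -- hz : f z₀ = 0, derive False
    obtain ⟨a, ha⟩ := Function.ne_iff.mp hne
    simp only [Pi.zero_apply] at ha
    -- τ z₀ is central
    have hτc : ∀ x, τ z₀ * x = x * τ z₀ := by
      intro x
      rcases hτ with h | h
      · calc τ z₀ * x = τ z₀ * τ (τ x) := by rw [hτinv]
          _ = τ (z₀ * τ x) := (h z₀ (τ x)).symm
          _ = τ (τ x * z₀) := by rw [hz₀]
          _ = τ (τ x) * τ z₀ := h (τ x) z₀
          _ = x * τ z₀ := by rw [hτinv]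
      · calc τ z₀ * x = τ z₀ * τ (τ x) := by rw [hτinv]
          _ = τ (τ x * z₀) := (h (τ x) z₀).symm
          _ = τ (z₀ * τ x) := by rw [hz₀ (τ x)]
          _ = τ (τ x) * τ z₀ := h z₀ (τ x)
          _ = x * τ z₀ := by rw [hτinv]
    have L1 : ∀ u v : S, u * z₀ * v = u * v * z₀ := by
      intro u v; rw [mul_assoc, hz₀, ← mul_assoc]
    -- G : from hf w z₀ and f z₀ = 0
    have G : ∀ w, f (w * z₀ * z₀) + μ z₀ * f (w * τ z₀ * z₀) = 0 := by
      intro w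
      have h := hf w z₀
      rw [hz] at h
      linear_combination h
    -- B
    have B : ∀ x y, f (x * y * z₀ * z₀) + μ y * f (x * τ y * z₀ * z₀)
        = 2 * f (x * z₀) * f y := by
      intro x y
      have h := hf (x * z₀) y
      rw [L1 x y, L1 x (τ y)] at h
      exact h
    -- A'
    have A' : ∀ x y, f (x * y * z₀ * z₀) - μ y * f (x * τ y * z₀ * z₀)
        = 2 * f x * f (y * z₀) := by
      intro x y
      have hA := hf x (y * z₀)
      rw [show x * (y * z₀) = x * y * z₀ from (mul_assoc x y z₀).symm, hμ] at hA
      have hτyz : x * τ (y * z₀) * z₀ = x * τ y * τ z₀ * z₀ := by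
        rcases hτ with h | h
        · rw [h, ← mul_assoc x (τ y) (τ z₀)]
        · rw [h, hτc (τ y), ← mul_assoc x (τ y) (τ z₀)]
      rw [hτyz] at hA
      have hG := G (x * τ y)
      linear_combination hA - μ y * hG
    -- sine addition formula
    have K : ∀ x y, f (x * y * z₀ * z₀) = f x * f (y * z₀) + f (x * z₀) * f y := by
      intro x y
      linear_combination (A' x y + B x y) / 2
    -- I
    have I : ∀ x y, f (x * y) * f (z₀ * z₀)
        = f x * f (y * z₀ * z₀) + f (x * z₀) * f (y * z₀) := by
      intro x y
      have k1 := K (x * y) z₀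
      rw [hz] at k1
      have k2 := K x (y * z₀)
      rw [← mul_assoc x y z₀] at k2
      linear_combination k2 - k1
    -- III'
    have III' : ∀ x y, f (x * y * z₀ * z₀ * z₀) = f (z₀ * z₀) * f (x * y) := by
      intro x y
      have k1 := K (x * y) z₀
      rw [hz] at k1
      linear_combination k1
    -- I'
    have I' : ∀ x y, f (z₀ * z₀) * f (x * y)
        = f (x * z₀) * f (y * z₀) + f (x * z₀ * z₀) * f y := by
      intro x y
      have k3 := K z₀ (x * y)
      rw [hz₀ (x * y), hz] at k3
      have k4 := K (z₀ * x) y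
      rw [hz₀ x, L1 x y] at k4
      linear_combination k4 - k3
    -- symmetry of k
    have sym : ∀ x y, f x * f (y * z₀ * z₀) = f (x * z₀ * z₀) * f y := by
      intro x y
      linear_combination I' x y - I x y
    -- k z₀ = 0
    have kz : f (z₀ * z₀ * z₀) = 0 := by
      have h := sym z₀ a
      rw [hz] at h
      have h2 : f (z₀ * z₀ * z₀) * f a = 0 := by linear_combination -h
      exact (mul_eq_zero.mp h2).resolve_right ha
    -- c = 0
    have c0 : f (z₀ * z₀) = 0 := by
      have s := sym a (z₀ * z₀ * z₀)
      rw [kz, mul_zero] at s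
      have h5 : f (z₀ * z₀ * z₀ * z₀ * z₀) = 0 := (mul_eq_zero.mp s).resolve_left ha
      have h := III' z₀ z₀
      rw [h5] at h
      exact mul_self_eq_zero.mp h.symm
    -- key : f (x * y * z₀) = 0 for all x y
    have hxyz : ∀ x y : S, f (x * y * z₀) = 0 := by
      by_cases hka : f (a * z₀ * z₀) = 0
      · have hk : ∀ s, f (s * z₀ * z₀) = 0 := by
          intro s
          have h := sym a s
          rw [hka, zero_mul] at h
          exact (mul_eq_zero.mp h).resolve_left ha
        have hH : ∀ s, f (s * z₀) = 0 := by
          intro s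
          have h := I s s
          rw [c0, hk s, mul_zero, mul_zero] at h
          have h2 : f (s * z₀) * f (s * z₀) = 0 := by linear_combination -h
          exact mul_self_eq_zero.mp h2
        intro x y
        exact hH (x * y)
      · intro x y
        have h := sym a (x * y * z₀)
        have h3 := III' x y
        rw [c0, zero_mul] at h3
        rw [h3, mul_zero] at h
        exact (mul_eq_zero.mp h.symm).resolve_left hka
    -- final contradiction
    have h := hf a a
    rw [hxyz a a, hxyz a (τ a)] at h
    have h2 : f a * f a = 0 := by linear_combination -h / 2
    exact ha (mul_self_eq_zero.mp h2)
end

section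
/- If g: S → ℂ satisfies the μ-d'Alembert equation g(xy) + μ(y)g(xτ(y)) = 2g(x)g(y) with g(z₀) ≠ 0 and g(xz₀) = g(z₀)g(x) for all x ∈ S, then f := g(z₀)·g is a nonzero solution of f(xyz₀) + μ(y)f(xτ(y)z₀) = 2f(x)f(y). -/
theorem stmt_4 {S : Type*} [Semigroup S] (τ : S → S)
    (hτinv : ∀ x, τ (τ x) = x)
    (hτ : (∀ x y, τ (x * y) = τ x * τ y) ∨ (∀ x y, τ (x * y) = τ y * τ x))
    (μ : S → ℂ) (hμ : ∀ x y, μ (x * y) = μ x * μ y)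
    (hμτ : ∀ x, μ (x * τ x) = 1)
    (z₀ : S) (hz₀ : ∀ x, z₀ * x = x * z₀)
    (g : S → ℂ)
    (hg : ∀ x y, g (x * y) + μ y * g (x * τ y) = 2 * g x * g y)
    (hgz : g z₀ ≠ 0) (hgz2 : ∀ x, g (x * z₀) = g z₀ * g x) :
    (fun x => g z₀ * g x) ≠ 0 ∧
    ∀ x y, (fun x => g z₀ * g x) (x * y * z₀) + μ y * (fun x => g z₀ * g x) (x * τ y * z₀) =
      2 * (fun x => g z₀ * g x) x * (fun x => g z₀ * g x) y := by
  constructor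
  · intro h
    have := congrFun h z₀
    simp at this
    exact hgz this
  · intro x y
    simp only
    rw [hgz2, hgz2]
    linear_combination g z₀ * g z₀ * hg x y
end

section
/- If f: S → ℂ is a nonzero solution of f(xyz₀) + μ(y)f(xτ(y)z₀) = 2f(x)f(y), then the function g(x) := f(xz₀)/f(z₀) satisfies the μ-d'Alembert equation g(xy) + μ(y)g(xτ(y)) = 2g(x)g(y), satisfies g(xz₀) = g(z₀)g(x) for all x, has g(z₀) ≠ 0, and f = g(z₀)·g. -/
theorem stmt_5 {S : Type*} [Semigroup S] (τ : S → S)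
    (hτinv : ∀ x, τ (τ x) = x)
    (hτ : (∀ x y, τ (x * y) = τ x * τ y) ∨ (∀ x y, τ (x * y) = τ y * τ x))
    (μ : S → ℂ) (hμ : ∀ x y, μ (x * y) = μ x * μ y)
    (hμτ : ∀ x, μ (x * τ x) = 1)
    (z₀ : S) (hz₀ : ∀ x, z₀ * x = x * z₀)
    (f : S → ℂ) (hf0 : f ≠ 0) (hf : ∀ x y, f (x * y * z₀) + μ y * f (x * τ y * z₀) = 2 * f x * f y) :
    (∀ x y, (fun x => f (x * z₀) / f z₀) (x * y) + μ y * (fun x => f (x * z₀) / f z₀) (x * τ y) =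
      2 * (fun x => f (x * z₀) / f z₀) x * (fun x => f (x * z₀) / f z₀) y) ∧
    (∀ x, (fun x => f (x * z₀) / f z₀) (x * z₀) =
      (fun x => f (x * z₀) / f z₀) z₀ * (fun x => f (x * z₀) / f z₀) x) ∧
    (fun x => f (x * z₀) / f z₀) z₀ ≠ 0 ∧
    (∀ x, f x = (fun x => f (x * z₀) / f z₀) z₀ * (fun x => f (x * z₀) / f z₀) x) := by
  obtain ⟨x₀, hx₀⟩ : ∃ x, f x ≠ 0 := by
    by_contra h
    push_neg at h
    exact hf0 (funext fun x => h x)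
  have hswap : ∀ a b : S, a * z₀ * b = a * b * z₀ := by
    intro a b
    rw [mul_assoc, hz₀ b, ← mul_assoc]
  have hμ1 : ∀ x, μ x * μ (τ x) = 1 := by
    intro x
    rw [← hμ]
    exact hμτ x
  have hA : ∀ y, μ y * f (τ y) = f y := by
    intro y
    have e1 := hf x₀ y
    have e2 := hf x₀ (τ y)
    rw [hτinv] at e2
    have h3 : f x₀ * (μ y * f (τ y)) = f x₀ * f y := by
      linear_combination (1/2 : ℂ) * (e1 - μ y * e2 + f (x₀ * y * z₀) * hμ1 y)
    exact mul_left_cancel₀ hx₀ h3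
  have hβ : ∀ u, μ z₀ * f (u * (τ z₀ * z₀)) + f (u * z₀ * z₀) = 2 * f z₀ * f u := by
    intro u
    have e := hf u (τ z₀)
    rw [hτinv] at e
    rw [mul_assoc u (τ z₀) z₀] at e
    linear_combination μ z₀ * e - f (u * z₀ * z₀) * hμ1 z₀ + 2 * f u * hA z₀
  have hiii : ∀ x y, f (x * y * z₀ * z₀) + μ y * f (x * τ y * z₀ * z₀) = 2 * f (x * z₀) * f y := by
    intro x y
    have e := hf (x * z₀) y
    rw [hswap x y, hswap x (τ y)] at e
    exact e
  -- Main step: f x * f (y*z₀) = f y * f (x*z₀)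
  have SEP : ∀ x y, f x * f (y * z₀) = f y * f (x * z₀) := by
    rcases hτ with hhom | hanti
    · -- homomorphism case
      have hii2 : ∀ x y, f (x * y * z₀ * z₀) + 2 * (μ y * (f z₀ * f (x * τ y))) =
          2 * f x * f (y * z₀) + μ y * f (x * τ y * z₀ * z₀) := by
        intro x y
        have e := hf x (y * z₀)
        rw [hhom] at e
        rw [← mul_assoc x y z₀] at e
        have harg : x * (τ y * τ z₀) * z₀ = x * τ y * (τ z₀ * z₀) := by
          rw [← mul_assoc x (τ y) (τ z₀), mul_assoc (x * τ y) (τ z₀) z₀]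
        rw [harg, hμ] at e
        have b := hβ (x * τ y)
        linear_combination e - μ y * b
      have hH1 : ∀ x y, f (x * y * z₀ * z₀) + μ y * (f z₀ * f (x * τ y)) =
          f x * f (y * z₀) + f (x * z₀) * f y := by
        intro x y
        linear_combination (hii2 x y + hiii x y) / 2
      have hH5 : ∀ x y, f (x * z₀) * (f (y * z₀) + μ y * f (τ y * z₀)) =
          2 * (f z₀ * (f x * f y)) := by
        intro x y
        have h1 := hH1 (x * z₀) y
        have h2 := hH1 (x * z₀) (τ y)
        rw [hτinv] at h2
        have h3 := hiii (x * z₀) y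
        -- H4 for x*z₀:
        have h4 : f (x * z₀) * (f (y * z₀) + μ y * f (τ y * z₀)) =
            f z₀ * (f (x * z₀ * y) + μ y * f (x * z₀ * τ y)) := by
          linear_combination (-1 : ℂ) * h1 - μ y * h2 + h3 - f (x * z₀ * z₀) * hA y +
            f z₀ * f (x * z₀ * y) * hμ1 y
        rw [hswap x y, hswap x (τ y)] at h4
        linear_combination h4 + f z₀ * hf x y
      by_cases hfz : f z₀ = 0
      · exfalso
        have hψcase : (∀ u, f (u * z₀) = 0) → False := by
          intro hall
          have e := hf x₀ x₀
          rw [hall (x₀ * x₀), hall (x₀ * τ x₀)] at e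
          have h6 : f x₀ * f x₀ = 0 := by linear_combination (-1/2 : ℂ) * e
          exact hx₀ (mul_self_eq_zero.mp h6)
        by_cases hψ : ∀ y, f (y * z₀) + μ y * f (τ y * z₀) = 0
        · have W : ∀ x y, f (x * y * z₀ * z₀) = f x * f (y * z₀) + f (x * z₀) * f y := by
            intro x y
            linear_combination hH1 x y - μ y * f (x * τ y) * hfz
          have ksep : ∀ x y, f x * f (y * z₀ * z₀) = f (x * z₀ * z₀) * f y := by
            intro x y
            have w1 := W x (y * z₀)
            have w2 := W (x * z₀) y
            rw [← mul_assoc x y z₀] at w1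
            rw [hswap x y] at w2
            linear_combination w2 - w1
          by_cases hL' : f (x₀ * z₀ * z₀) = 0
          · have hz2 : ∀ u, f (u * z₀ * z₀) = 0 := by
              intro u
              have e := ksep u x₀
              rw [hL', mul_zero] at e
              rcases mul_eq_zero.mp e.symm with h | h
              · exact h
              · exact absurd h hx₀
            have hxz0 : f (x₀ * z₀) = 0 := by
              have e := W x₀ x₀
              rw [hz2 (x₀ * x₀)] at e
              have h6 : f x₀ * f (x₀ * z₀) = 0 := by linear_combination (-1/2 : ℂ) * e
              rcases mul_eq_zero.mp h6 with h | h
              · exact absurd h hx₀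
              · exact h
            have hall : ∀ u, f (u * z₀) = 0 := by
              intro u
              have e := W u x₀
              rw [hz2 (u * x₀), hxz0] at e
              have h6 : f (u * z₀) * f x₀ = 0 := by linear_combination -e
              rcases mul_eq_zero.mp h6 with h | h
              · exact h
              · exact absurd h hx₀
            exact hψcase hall
          · have hρ : ∀ x, f (x₀ * z₀ * z₀) * f (x * z₀) = f x₀ * (f x * f (z₀ * z₀)) := by
              intro x
              have w3 := W x z₀
              have hk := ksep x₀ (x * z₀)
              linear_combination f x₀ * w3 - hk + f x₀ * f (x * z₀) * hfz
            have hC : f (z₀ * z₀) = 0 := by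
              have h5 := hψ x₀
              have e : f (x₀ * z₀ * z₀) * (f (x₀ * z₀) + μ x₀ * f (τ x₀ * z₀)) =
                  2 * (f x₀ * (f x₀ * f (z₀ * z₀))) := by
                linear_combination hρ x₀ + μ x₀ * hρ (τ x₀) + f x₀ * f (z₀ * z₀) * hA x₀
              rw [h5, mul_zero] at e
              have h6 : f x₀ * (f x₀ * f (z₀ * z₀)) = 0 := by linear_combination (-1/2 : ℂ) * e
              rcases mul_eq_zero.mp h6 with h | h
              · exact absurd h hx₀
              rcases mul_eq_zero.mp h with h' | h'
              · exact absurd h' hx₀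
              · exact h'
            have hall : ∀ u, f (u * z₀) = 0 := by
              intro u
              have e := hρ u
              rw [hC] at e
              have h6 : f (x₀ * z₀ * z₀) * f (u * z₀) = 0 := by linear_combination e
              rcases mul_eq_zero.mp h6 with h | h
              · exact absurd h hL'
              · exact h
            exact hψcase hall
        · push_neg at hψ
          obtain ⟨y₁, hy₁⟩ := hψ
          have hall : ∀ u, f (u * z₀) = 0 := by
            intro u
            have e := hH5 u y₁
            rw [hfz] at e
            have h6 : f (u * z₀) * (f (y₁ * z₀) + μ y₁ * f (τ y₁ * z₀)) = 0 := by
              linear_combination e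
            rcases mul_eq_zero.mp h6 with h | h
            · exact h
            · exact absurd h hy₁
          exact hψcase hall
      · -- f z₀ ≠ 0
        have hne : f (x₀ * z₀) * (f (x₀ * z₀) + μ x₀ * f (τ x₀ * z₀)) ≠ 0 := by
          rw [hH5 x₀ x₀]
          exact mul_ne_zero two_ne_zero (mul_ne_zero hfz (mul_ne_zero hx₀ hx₀))
        have hψ0 : f (x₀ * z₀) + μ x₀ * f (τ x₀ * z₀) ≠ 0 := right_ne_zero_of_mul hne
        intro x y
        have e1 := hH5 x x₀
        have e2 := hH5 y x₀
        have h6 : f x * f (y * z₀) * (f (x₀ * z₀) + μ x₀ * f (τ x₀ * z₀)) =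
            f y * f (x * z₀) * (f (x₀ * z₀) + μ x₀ * f (τ x₀ * z₀)) := by
          linear_combination f x * e2 - f y * e1
        exact mul_right_cancel₀ hψ0 h6
    · -- anti-homomorphism case
      have hK : ∀ u, f (u * z₀ * z₀) = μ u * f (τ u * z₀ * z₀) := by
        intro u
        have hs := hA (z₀ * u * τ z₀)
        have hμs : μ (z₀ * u * τ z₀) = μ z₀ * μ u * μ (τ z₀) := by rw [hμ, hμ]
        have ht : τ (z₀ * u * τ z₀) = τ u * (τ z₀ * z₀) := by
          rw [hanti, hτinv, hanti, hz₀, mul_assoc]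
        have harg : z₀ * u * τ z₀ = u * (τ z₀ * z₀) := by
          rw [hz₀ u, mul_assoc, hz₀ (τ z₀)]
        rw [hμs, ht, harg] at hs
        have b1 := hβ u
        have b2 := hβ (τ u)
        linear_combination b1 - μ u * b2 + μ z₀ * hs - 2 * f z₀ * hA u -
          μ z₀ * μ u * f (τ u * (τ z₀ * z₀)) * hμ1 z₀
      have hKp : ∀ x y, μ y * f (x * τ y * z₀ * z₀) = μ x * f (y * τ x * z₀ * z₀) := by
        intro x y
        have e := hK (x * τ y)
        have ht : τ (x * τ y) = y * τ x := by rw [hanti, hτinv]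
        rw [ht, hμ] at e
        linear_combination μ y * e + μ x * f (y * τ x * z₀ * z₀) * hμ1 y
      have hii : ∀ x y, f (x * y * z₀ * z₀) + μ y * μ z₀ * f (x * (τ z₀ * z₀) * τ y) =
          2 * f x * f (y * z₀) := by
        intro x y
        have e := hf x (y * z₀)
        rw [hanti] at e
        rw [← mul_assoc x y z₀] at e
        have harg : x * (τ z₀ * τ y) * z₀ = x * (τ z₀ * z₀) * τ y := by
          rw [← mul_assoc x (τ z₀) (τ y), ← hswap (x * τ z₀) (τ y), mul_assoc x (τ z₀) z₀]
        rw [harg, hμ] at e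
        linear_combination e
      have hG : ∀ x y, μ y * f (x * (τ z₀ * z₀) * τ y) = μ x * f (y * (τ z₀ * z₀) * τ x) := by
        intro x y
        have hs := hA (x * (τ z₀ * z₀) * τ y)
        have hμs : μ (x * (τ z₀ * z₀) * τ y) = μ x * (μ (τ z₀) * μ z₀) * μ (τ y) := by
          rw [hμ, hμ, hμ]
        have ht : τ (x * (τ z₀ * z₀) * τ y) = y * (τ z₀ * z₀) * τ x := by
          rw [hanti, hτinv, hanti, hanti, hτinv, ← mul_assoc]
        rw [hμs, ht] at hs
        linear_combination (-(μ y)) * hs +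
          μ x * (μ (τ z₀) * μ z₀) * f (y * (τ z₀ * z₀) * τ x) * hμ1 y +
          μ x * f (y * (τ z₀ * z₀) * τ x) * hμ1 z₀
      intro x y
      linear_combination (1/4 : ℂ) * (- hii x y + hii y x + μ z₀ * hG x y + hiii x y -
        hiii y x - hKp x y)
  -- Endgame
  obtain ⟨L, hlam⟩ : ∃ L, ∀ x, f (x * z₀) = L * f x := by
    refine ⟨f (x₀ * z₀) / f x₀, fun x => ?_⟩
    field_simp
    linear_combination SEP x₀ x
  have hL0 : L ≠ 0 := by
    intro h0
    have e := hf x₀ x₀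
    rw [hlam (x₀ * x₀), hlam (x₀ * τ x₀), h0] at e
    have h6 : f x₀ * f x₀ = 0 := by linear_combination (-1/2 : ℂ) * e
    exact hx₀ (mul_self_eq_zero.mp h6)
  have hL2 : L * L = f z₀ := by
    have e := hf x₀ z₀
    rw [hlam (x₀ * z₀), hlam x₀, hlam (x₀ * τ z₀)] at e
    have hs := hA (x₀ * τ z₀)
    have ht : τ (x₀ * τ z₀) = τ x₀ * z₀ := by
      rcases hτ with hhom | hanti
      · rw [hhom, hτinv]
      · rw [hanti, hτinv, hz₀]
    rw [ht, hμ, hlam (τ x₀)] at hs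
    have key : 2 * f x₀ * (L * L) = 2 * f x₀ * f z₀ := by
      linear_combination e + μ z₀ * L * hs - L * L * (μ x₀ * f (τ x₀)) * hμ1 z₀ -
        L * L * hA x₀
    exact mul_left_cancel₀ (mul_ne_zero two_ne_zero hx₀) key
  have hfz : f z₀ ≠ 0 := by
    rw [← hL2]
    exact mul_ne_zero hL0 hL0
  refine ⟨fun x y => ?_, fun x => ?_, ?_, fun x => ?_⟩
  · show f (x * y * z₀) / f z₀ + μ y * (f (x * τ y * z₀) / f z₀) =
      2 * (f (x * z₀) / f z₀) * (f (y * z₀) / f z₀)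
    calc f (x * y * z₀) / f z₀ + μ y * (f (x * τ y * z₀) / f z₀)
        = (f (x * y * z₀) + μ y * f (x * τ y * z₀)) / f z₀ := by ring
      _ = (2 * f x * f y) / f z₀ := by rw [hf x y]
      _ = 2 * (f (x * z₀) / f z₀) * (f (y * z₀) / f z₀) := by
          rw [hlam x, hlam y, ← hL2]
          field_simp
          try ring
  · show f (x * z₀ * z₀) / f z₀ = f (z₀ * z₀) / f z₀ * (f (x * z₀) / f z₀)
    rw [hlam (x * z₀), hlam z₀, hlam x, ← hL2]
    field_simp
    try ring
  · show f (z₀ * z₀) / f z₀ ≠ 0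
    rw [hlam z₀]
    exact div_ne_zero (mul_ne_zero hL0 hfz) hfz
  · show f x = f (z₀ * z₀) / f z₀ * (f (x * z₀) / f z₀)
    rw [hlam z₀, hlam x, ← hL2]
    field_simp
    try ring
end

section
/- Every nonzero solution f: S → ℂ of f(xyz₀) + μ(y)f(xτ(y)z₀) = 2f(x)f(y) is of the form f = g(z₀)·g where g satisfies g(xy) + μ(y)g(xτ(y)) = 2g(x)g(y), g(z₀) ≠ 0, and g(xz₀) = g(z₀)g(x); moreover f(x) = g(xz₀) = μ(z₀)g(xτ(z₀)) for all x. -/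
theorem stmt_6 {S : Type*} [Semigroup S] (τ : S → S)
    (hτinv : ∀ x, τ (τ x) = x)
    (hτ : (∀ x y, τ (x * y) = τ x * τ y) ∨ (∀ x y, τ (x * y) = τ y * τ x))
    (μ : S → ℂ) (hμ : ∀ x y, μ (x * y) = μ x * μ y)
    (hμτ : ∀ x, μ (x * τ x) = 1)
    (z₀ : S) (hz₀ : ∀ x, z₀ * x = x * z₀)
    (f : S → ℂ) (hf0 : f ≠ 0) (hf : ∀ x y, f (x * y * z₀) + μ y * f (x * τ y * z₀) = 2 * f x * f y) :
    ∃ g : S → ℂ, (∀ x y, g (x * y) + μ y * g (x * τ y) = 2 * g x * g y) ∧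
      g z₀ ≠ 0 ∧ (∀ x, g (x * z₀) = g z₀ * g x) ∧
      (∀ x, f x = g z₀ * g x) ∧ (∀ x, f x = g (x * z₀)) ∧
      (∀ x, f x = μ z₀ * g (x * τ z₀)) := by
  obtain ⟨y₀, hy₀⟩ : ∃ y, f y ≠ 0 := by
    by_contra h; push_neg at h
    exact hf0 (funext fun x => h x)
  have hμτinv : ∀ x, μ x * μ (τ x) = 1 := fun x => by rw [← hμ]; exact hμτ x
  have hμne : ∀ x, μ x ≠ 0 := fun x hx => by
    have h := hμτinv x; rw [hx, zero_mul] at h; exact one_ne_zero h.symm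
  have hτz₀ : ∀ x, τ z₀ * x = x * τ z₀ := by
    intro x
    rcases hτ with h | h
    · calc τ z₀ * x = τ z₀ * τ (τ x) := by rw [hτinv]
        _ = τ (z₀ * τ x) := (h z₀ (τ x)).symm
        _ = τ (τ x * z₀) := by rw [hz₀]
        _ = τ (τ x) * τ z₀ := h (τ x) z₀
        _ = x * τ z₀ := by rw [hτinv]
    · calc τ z₀ * x = τ z₀ * τ (τ x) := by rw [hτinv]
        _ = τ (τ x * z₀) := (h (τ x) z₀).symm
        _ = τ (z₀ * τ x) := by rw [hz₀]
        _ = τ (τ x) * τ z₀ := h z₀ (τ x)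
        _ = x * τ z₀ := by rw [hτinv]
  have τmulz : ∀ y, τ (y * z₀) = τ y * τ z₀ := by
    intro y; rcases hτ with h | h
    · exact h y z₀
    · rw [h y z₀, hτz₀]
  have τmulτz : ∀ y, τ (y * τ z₀) = τ y * z₀ := by
    intro y; rcases hτ with h | h
    · rw [h y (τ z₀), hτinv]
    · rw [h y (τ z₀), hτinv, hz₀]
  have bub : ∀ a b : S, a * z₀ * b = a * b * z₀ := fun a b => by
    rw [mul_assoc, hz₀ b, ← mul_assoc]
  have bubτ : ∀ a b : S, a * τ z₀ * b = a * b * τ z₀ := fun a b => by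
    rw [mul_assoc, hτz₀ b, ← mul_assoc]
  have swz : ∀ a : S, a * τ z₀ * z₀ = a * z₀ * τ z₀ := fun a => bubτ a z₀
  -- instances of the functional equation
  have I1 : ∀ x, f (x*z₀*z₀) + μ z₀ * f (x*z₀*τ z₀) = 2 * f x * f z₀ := by
    intro x; have h := hf x z₀; rwa [swz x] at h
  have I3 : ∀ x y, f (x*y*z₀*z₀) + μ y * μ z₀ * f (x*τ y*z₀*τ z₀) = 2 * f x * f (y*z₀) := by
    intro x y
    have h := hf x (y * z₀)
    rw [τmulz y, hμ, ← mul_assoc x y z₀, ← mul_assoc x (τ y) (τ z₀), swz (x * τ y)] at h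
    exact h
  have I4 : ∀ x y, f (x*y*z₀*z₀) + μ y * f (x*τ y*z₀*z₀) = 2 * f (x*z₀) * f y := by
    intro x y
    have h := hf (x*z₀) y
    rw [bub x y, bub x (τ y)] at h
    exact h
  have I5 : ∀ x y, f (x*y*z₀*τ z₀) + μ y * f (x*τ y*z₀*τ z₀) = 2 * f (x*τ z₀) * f y := by
    intro x y
    have h := hf (x*τ z₀) y
    rw [bubτ x y, bubτ x (τ y), swz (x*y), swz (x*τ y)] at h
    exact h
  have I6 : ∀ x y, f (x*y*z₀*τ z₀) + μ y * μ (τ z₀) * f (x*τ y*z₀*z₀) = 2 * f x * f (y*τ z₀) := by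
    intro x y
    have h := hf x (y * τ z₀)
    rw [τmulτz y, hμ, ← mul_assoc x y (τ z₀), swz (x*y), ← mul_assoc x (τ y) z₀] at h
    exact h
  have Q1 : ∀ x y, f (x*y*z₀*z₀) - μ z₀ * f (x*y*z₀*τ z₀)
      = 2 * f x * f (y*z₀) - 2 * (μ z₀ * f (x*τ z₀) * f y) := by
    intro x y
    linear_combination I3 x y - μ z₀ * I5 x y
  have Q2 : ∀ x y, (f (x*y*z₀*z₀) - μ z₀ * f (x*y*z₀*τ z₀))
      + μ y * (f (x*τ y*z₀*z₀) - μ z₀ * f (x*τ y*z₀*τ z₀))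
      = 2 * (f (x*z₀) - μ z₀ * f (x*τ z₀)) * f y := by
    intro x y
    linear_combination I4 x y - μ z₀ * I5 x y
  have Q3 : ∀ x y, f x * (f (y*z₀) + μ y * f (τ y*z₀))
      = f (x*z₀) * f y + μ z₀ * μ y * f (τ y) * f (x*τ z₀) := by
    intro x y
    linear_combination -(Q1 x y)/2 - (μ y/2) * Q1 x (τ y) + (Q2 x y)/2
  obtain ⟨A, B, hLR⟩ : ∃ A B : ℂ, ∀ x, f (x*z₀) = A * f x + B * f (x*τ z₀) := by
    refine ⟨(f (y₀*z₀) + μ y₀ * f (τ y₀ * z₀)) / f y₀, -(μ z₀ * μ y₀ * f (τ y₀)) / f y₀, fun x => ?_⟩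
    field_simp
    linear_combination -Q3 x y₀
  have hcoef : ∀ y x, (f (y*z₀) + μ y * f (τ y*z₀) - A * f y) * f x
      = (B * f y + μ z₀ * μ y * f (τ y)) * f (x*τ z₀) := by
    intro y x
    linear_combination Q3 x y + f y * hLR x
  by_cases hex : ∃ lam : ℂ, ∀ x, f (x * τ z₀) = lam * f x
  · -- main case
    obtain ⟨lam, hlam⟩ := hex
    obtain ⟨c, hFc⟩ : ∃ c : ℂ, ∀ w, f (w * z₀) = c * f w :=
      ⟨A + B * lam, fun w => by rw [hLR w, hlam w]; ring⟩
    have hc0 : c ≠ 0 := by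
      intro h
      have h1 := hf y₀ y₀
      rw [hFc (y₀*y₀), hFc (y₀*τ y₀), h] at h1
      have h2 : f y₀ * f y₀ = 0 := by linear_combination -h1/2
      exact hy₀ (mul_self_eq_zero.mp h2)
    have dAlc : ∀ x y, c * f (x*y) + c * (μ y * f (x*τ y)) = 2 * f x * f y := by
      intro x y
      have h := hf x y
      rw [hFc (x*y), hFc (x*τ y)] at h
      linear_combination h
    have hβ : ∀ x y, μ y * ((μ (τ z₀) * c * c - lam * c) * f (x*τ y)) = 0 := by
      intro x y
      have h := I6 x y
      rw [hlam (x*y*z₀), hFc (x*y), hFc (x*τ y*z₀), hFc (x*τ y), hlam y] at h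
      linear_combination h - lam * dAlc x y
    have hlamc : μ z₀ * lam = c := by
      by_cases hK : μ (τ z₀) * c * c - lam * c = 0
      · have h1 : μ (τ z₀) * c * c = lam * c := sub_eq_zero.mp hK
        have h2 : (μ z₀ * lam) * c = c * c := by
          linear_combination -(μ z₀ * h1) + c*c*(hμτinv z₀)
        exact mul_right_cancel₀ hc0 h2
      · exfalso
        have hzero : ∀ x y, f (x * τ y) = 0 := by
          intro x y
          have h := hβ x y
          rcases mul_eq_zero.mp h with h' | h'
          · exact absurd h' (hμne y)
          · rcases mul_eq_zero.mp h' with h'' | h''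
            · exact absurd h'' hK
            · exact h''
        have h1 : f (y₀ * y₀) = 0 := by
          have h := hzero y₀ (τ y₀); rwa [hτinv] at h
        have h2 := dAlc y₀ y₀
        rw [h1, hzero y₀ y₀] at h2
        have h3 : f y₀ * f y₀ = 0 := by linear_combination -h2/2
        exact hy₀ (mul_self_eq_zero.mp h3)
      -- end
    have hcsq : c * c = f z₀ := by
      have h := I1 y₀
      rw [hFc (y₀*z₀), hlam (y₀*z₀), hFc y₀] at h
      have h2 : (c*c - f z₀) * f y₀ = 0 := by
        linear_combination h/2 - (c * f y₀/2) * hlamc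
      have h3 := (mul_eq_zero.mp h2).resolve_right hy₀
      exact sub_eq_zero.mp h3
    have hgz : c⁻¹ * f z₀ = c := by
      rw [← hcsq, inv_mul_cancel_left₀ hc0]
    refine ⟨fun x => c⁻¹ * f x, fun x y => ?_, ?_, fun x => ?_, fun x => ?_, fun x => ?_, fun x => ?_⟩
    · show c⁻¹ * f (x*y) + μ y * (c⁻¹ * f (x*τ y)) = 2 * (c⁻¹ * f x) * (c⁻¹ * f y)
      have h := dAlc x y
      field_simp
      linear_combination h
    · show c⁻¹ * f z₀ ≠ 0
      rw [hgz]; exact hc0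
    · show c⁻¹ * f (x*z₀) = (c⁻¹ * f z₀) * (c⁻¹ * f x)
      rw [hgz, hFc x, inv_mul_cancel_left₀ hc0, mul_inv_cancel_left₀ hc0]
    · show f x = (c⁻¹ * f z₀) * (c⁻¹ * f x)
      rw [hgz, mul_inv_cancel_left₀ hc0]
    · show f x = c⁻¹ * f (x*z₀)
      rw [hFc x, inv_mul_cancel_left₀ hc0]
    · show f x = μ z₀ * (c⁻¹ * f (x*τ z₀))
      rw [hlam x]
      rw [← hlamc] at hc0 ⊢
      have hlam0 : lam ≠ 0 := fun h => hc0 (by rw [h, mul_zero])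
      field_simp
      rw [mul_div_cancel_right₀ _ (hμne z₀)]
  · -- degenerate case: contradiction
    exfalso
    have hc₂ : ∀ y, B * f y + μ z₀ * μ y * f (τ y) = 0 := by
      intro y
      by_contra hne
      refine hex ⟨(f (y*z₀) + μ y * f (τ y*z₀) - A * f y) / (B * f y + μ z₀ * μ y * f (τ y)),
        fun x => ?_⟩
      rw [div_mul_eq_mul_div, eq_div_iff hne]
      linear_combination -hcoef y x
    have hB0 : B ≠ 0 := by
      intro hB
      have hft : ∀ y, f (τ y) = 0 := by
        intro y
        have h := hc₂ y; rw [hB, zero_mul, zero_add] at h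
        rcases mul_eq_zero.mp h with h' | h'
        · rcases mul_eq_zero.mp h' with h'' | h''
          · exact absurd h'' (hμne z₀)
          · exact absurd h'' (hμne y)
        · exact h'
      have h : f y₀ = 0 := by have h := hft (τ y₀); rwa [hτinv] at h
      exact hy₀ h
    have hB2 : B * B = μ z₀ * μ z₀ := by
      have h1 := hc₂ y₀
      have h2 := hc₂ (τ y₀); rw [hτinv] at h2
      have h3 : (μ z₀ * μ z₀ - B * B) * f y₀ = 0 := by
        linear_combination μ y₀ * μ z₀ * h2 - B * h1 - (μ z₀ * μ z₀ * f y₀) * hμτinv y₀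
      have h4 := (mul_eq_zero.mp h3).resolve_right hy₀
      linear_combination -h4
    have hsplit : B = μ z₀ ∨ B = -μ z₀ := by
      have h : (B - μ z₀) * (B + μ z₀) = 0 := by linear_combination hB2
      rcases mul_eq_zero.mp h with h' | h'
      · left; exact sub_eq_zero.mp h'
      · right; exact eq_neg_of_add_eq_zero_left h'
    rcases hsplit with hBp | hBn
    · -- B = μ z₀ : impossible
      have hcε : ∀ y, μ y * f (τ y) = -f y := by
        intro y
        have h := hc₂ y; rw [hBp] at h
        have h' : μ z₀ * (f y + μ y * f (τ y)) = 0 := by linear_combination h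
        have h'' := (mul_eq_zero.mp h').resolve_left (hμne z₀)
        linear_combination h''
      have key : f y₀ * f y₀ = 0 := by
        have h1 := hf y₀ y₀
        have h2 := hf y₀ (τ y₀); rw [hτinv] at h2
        linear_combination -(h1)/4 + (μ y₀/4)*h2 - (f (y₀*y₀*z₀)/4)*hμτinv y₀ + (f y₀/2)*hcε y₀
      exact hy₀ (mul_self_eq_zero.mp key)
    · -- B = -μ z₀
      have hA : ∀ x, A * f (x*z₀) = 2 * f x * f z₀ := by
        intro x
        have h1 := I1 x
        have h2 := hLR (x*z₀); rw [hBn] at h2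
        linear_combination h1 - h2
      by_cases hA0 : A = 0
      · -- A = 0
        have hfz : f z₀ = 0 := by
          have h := hA y₀; rw [hA0, zero_mul] at h
          have h2 : f y₀ * f z₀ = 0 := by linear_combination -h/2
          exact (mul_eq_zero.mp h2).resolve_left hy₀
        have hFG : ∀ w, f (w*z₀) = -(μ z₀ * f (w*τ z₀)) := by
          intro w
          have h := hLR w; rw [hA0, hBn] at h
          linear_combination h
        have SA : ∀ x y, f (x*y*z₀*z₀) = f x * f (y*z₀) + f (x*z₀) * f y := by
          intro x y
          linear_combination (Q1 x y)/2 + (hFG (x*y*z₀))/2 - f y * hFG x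
        have N1 : ∀ x, f (x*z₀*z₀*z₀) = f x * f (z₀*z₀) := by
          intro x
          have h := SA x z₀; rw [hfz] at h
          linear_combination h
        have N4 : ∀ x y, f (x*y*z₀*z₀*z₀) + μ y * f (x*τ y*z₀*z₀*z₀) = 2 * f x * f (y*z₀*z₀) := by
          intro x y
          have h := hf x (y*z₀*z₀)
          rw [τmulz (y*z₀), τmulz y, hμ (y*z₀) z₀, hμ y z₀,
            ← mul_assoc x (y*z₀) z₀, ← mul_assoc x y z₀,
            ← mul_assoc x (τ y * τ z₀) (τ z₀), ← mul_assoc x (τ y) (τ z₀),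
            swz (x*τ y*τ z₀), swz (x*τ y)] at h
          have k1 := hFG (x*τ y*z₀*τ z₀)
          rw [swz (x*τ y*z₀)] at k1
          have k2 := hFG (x*τ y*z₀*z₀)
          linear_combination h + μ y * k2 - μ y * μ z₀ * k1
        have N3 : ∀ x y, f (x*y*z₀*z₀*z₀) + μ y * f (x*τ y*z₀*z₀*z₀) = 2 * f (x*z₀*z₀) * f y := by
          intro x y
          have h := hf (x*z₀*z₀) y
          rw [bub (x*z₀) y, bub x y, bub (x*z₀) (τ y), bub x (τ y)] at h
          exact h
        have hH : ∀ x y, f (x*z₀*z₀) * f y = f x * f (y*z₀*z₀) := by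
          intro x y
          linear_combination (N4 x y)/2 - (N3 x y)/2
        by_cases hκ : f (y₀*z₀*z₀) = 0
        · have hH0 : ∀ x, f (x*z₀*z₀) = 0 := by
            intro x
            have h := hH x y₀
            rw [hκ, mul_zero] at h
            exact (mul_eq_zero.mp h).resolve_right hy₀
          have hF0 : ∀ x, f (x*z₀) = 0 := by
            intro x
            have h := I4 x y₀
            rw [hH0 (x*y₀), hH0 (x*τ y₀)] at h
            have h2 : f (x*z₀) * f y₀ = 0 := by linear_combination -h/2
            exact (mul_eq_zero.mp h2).resolve_right hy₀
          have h3 : f y₀ * f y₀ = 0 := by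
            have h := hf y₀ y₀
            rw [hF0 (y₀*y₀), hF0 (y₀*τ y₀)] at h
            linear_combination -h/2
          exact hy₀ (mul_self_eq_zero.mp h3)
        · have hκf : ∀ x, f (x*z₀*z₀) * f y₀ = f (y₀*z₀*z₀) * f x := by
            intro x; linear_combination hH x y₀
          have E1 : ∀ x, f (y₀*z₀*z₀) * f (x*z₀) = f (z₀*z₀) * f y₀ * f x := by
            intro x
            have h1 := N1 x
            have h2 := hκf (x*z₀)
            linear_combination -h2 + f y₀ * h1
          refine hex ⟨-(f (z₀*z₀) * f y₀) / (μ z₀ * f (y₀*z₀*z₀)), fun x => ?_⟩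
          rw [div_mul_eq_mul_div, eq_div_iff (mul_ne_zero (hμne z₀) hκ)]
          have h3 := hFG x
          linear_combination f (y₀*z₀*z₀) * h3 - E1 x
      · -- A ≠ 0
        refine hex ⟨(A*A - 2*f z₀)/(A*μ z₀), fun x => ?_⟩
        rw [div_mul_eq_mul_div, eq_div_iff (mul_ne_zero hA0 (hμne z₀))]
        have h2 := hLR x; rw [hBn] at h2
        linear_combination A * h2 - hA x
end

section
/- If f: S → ℂ satisfies the variant equation f(xyz₀) + μ(y)f(τ(y)xz₀) = 2f(x)f(y) for all x,y ∈ S, then f(x) = μ(x)f(τ(x)) for all x ∈ S. -/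
theorem stmt_8 {S : Type*} [Semigroup S] (τ : S → S)
    (hτinv : ∀ x, τ (τ x) = x)
    (hτ : (∀ x y, τ (x * y) = τ x * τ y) ∨ (∀ x y, τ (x * y) = τ y * τ x))
    (μ : S → ℂ) (hμ : ∀ x y, μ (x * y) = μ x * μ y)
    (hμτ : ∀ x, μ (x * τ x) = 1)
    (z₀ : S) (hz₀ : ∀ x, z₀ * x = x * z₀)
    (f : S → ℂ) (hf : ∀ x y, f (x * y * z₀) + μ y * f (τ y * x * z₀) = 2 * f x * f y) :
    ∀ x, f x = μ x * f (τ x) := by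
  have hm : ∀ u, μ u * μ (τ u) = 1 := by
    intro u; rw [← hμ]; exact hμτ u
  have key : ∀ u, f (u * u * z₀) - μ u * μ u * f (τ u * τ u * z₀) =
      2 * (μ u * f (τ u)) * (f u - μ u * f (τ u)) := by
    intro u
    have e1 := hf u (τ u)
    have e2 := hf (τ u) (τ u)
    rw [hτinv] at e1 e2
    linear_combination (μ u) * e1 - (μ u)^2 * e2 +
      (μ u * f (u * τ u * z₀) - f (u * u * z₀)) * hm u
  intro x
  have k1 := key x
  have k2 := key (τ x)
  rw [hτinv] at k2
  have hsq : (f x - μ x * f (τ x)) ^ 2 = 0 := by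
    linear_combination ((1:ℂ)/2) * k1 + ((μ x)^2/2) * k2 +
      ((μ x * μ (τ x) + 1) * f (x * x * z₀) / 2 + μ x * f x * f (τ x)
        - (μ x * μ (τ x) + 1) * (f x)^2) * hm x
  have := pow_eq_zero_iff (n := 2) (by norm_num) |>.mp hsq
  linear_combination this
end

section
/- If f: S → ℂ satisfies f(xyz₀) + μ(y)f(τ(y)xz₀) = 2f(x)f(y) for all x,y ∈ S, then f(xτ(z₀)z₀) = μ(τ(z₀))f(z₀)f(x) and f(xz₀²) = f(x)f(z₀) for all x ∈ S. -/
theorem stmt_9 {S : Type*} [Semigroup S] (τ : S → S)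
    (hτinv : ∀ x, τ (τ x) = x)
    (hτ : (∀ x y, τ (x * y) = τ x * τ y) ∨ (∀ x y, τ (x * y) = τ y * τ x))
    (μ : S → ℂ) (hμ : ∀ x y, μ (x * y) = μ x * μ y)
    (hμτ : ∀ x, μ (x * τ x) = 1)
    (z₀ : S) (hz₀ : ∀ x, z₀ * x = x * z₀)
    (f : S → ℂ) (hf : ∀ x y, f (x * y * z₀) + μ y * f (τ y * x * z₀) = 2 * f x * f y) :
    (∀ x, f (x * τ z₀ * z₀) = μ (τ z₀) * f z₀ * f x) ∧
    (∀ x, f (x * (z₀ * z₀)) = f x * f z₀) := by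
  -- τ z₀ is central
  have hca : ∀ x : S, τ z₀ * x = x * τ z₀ := by
    intro x
    rcases hτ with h | h
    · calc τ z₀ * x = τ z₀ * τ (τ x) := by rw [hτinv]
        _ = τ (z₀ * τ x) := (h z₀ (τ x)).symm
        _ = τ (τ x * z₀) := by rw [hz₀]
        _ = τ (τ x) * τ z₀ := h (τ x) z₀
        _ = x * τ z₀ := by rw [hτinv]
    · calc τ z₀ * x = τ z₀ * τ (τ x) := by rw [hτinv]
        _ = τ (τ x * z₀) := (h (τ x) z₀).symm
        _ = τ (z₀ * τ x) := by rw [hz₀]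
        _ = τ (τ x) * τ z₀ := h z₀ (τ x)
        _ = x * τ z₀ := by rw [hτinv]
  -- s := τ z₀ * z₀ is central
  have hs : ∀ x : S, (τ z₀ * z₀) * x = x * (τ z₀ * z₀) := by
    intro x
    calc (τ z₀ * z₀) * x = τ z₀ * (z₀ * x) := mul_assoc _ _ _
      _ = τ z₀ * (x * z₀) := by rw [hz₀]
      _ = (τ z₀ * x) * z₀ := (mul_assoc _ _ _).symm
      _ = (x * τ z₀) * z₀ := by rw [hca]
      _ = x * (τ z₀ * z₀) := mul_assoc _ _ _
  -- τ fixes s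
  have hτs : τ (τ z₀ * z₀) = τ z₀ * z₀ := by
    rcases hτ with h | h
    · rw [h, hτinv, hz₀]
    · rw [h, hτinv]
  -- τ (y * s) = τ y * s
  have hτys : ∀ y : S, τ (y * (τ z₀ * z₀)) = τ y * (τ z₀ * z₀) := by
    intro y
    rcases hτ with h | h
    · rw [h, hτs]
    · rw [h, hτs, hs]
  -- μ s = 1
  have hμτ' : μ z₀ * μ (τ z₀) = 1 := by rw [← hμ]; exact hμτ z₀
  have hμs : μ (τ z₀ * z₀) = 1 := by rw [hμ, mul_comm]; exact hμτ'
  -- KEY1 : f (x * s * z₀) = f x * f s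
  have key1 : ∀ x : S, f (x * (τ z₀ * z₀) * z₀) = f x * f (τ z₀ * z₀) := by
    intro x
    have h := hf x (τ z₀ * z₀)
    have e : τ (τ z₀ * z₀) * x * z₀ = x * (τ z₀ * z₀) * z₀ := by
      rw [hτs, hs]
    rw [e, hμs] at h
    linear_combination h / 2
  -- KEY2 : f (x*y) * f s + μ y * (f (τ y * x) * f s) = 2 * f (x*s) * f y
  have key2 : ∀ x y : S,
      f (x * y) * f (τ z₀ * z₀) + μ y * (f (τ y * x) * f (τ z₀ * z₀))
        = 2 * f (x * (τ z₀ * z₀)) * f y := by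
    intro x y
    have h := hf (x * (τ z₀ * z₀)) y
    have e1 : x * (τ z₀ * z₀) * y * z₀ = (x * y) * (τ z₀ * z₀) * z₀ := by
      rw [mul_assoc x (τ z₀ * z₀) y, hs y, ← mul_assoc x y (τ z₀ * z₀)]
    have e2 : τ y * (x * (τ z₀ * z₀)) * z₀ = (τ y * x) * (τ z₀ * z₀) * z₀ := by
      rw [← mul_assoc (τ y) x (τ z₀ * z₀)]
    rw [e1, e2, key1 (x * y), key1 (τ y * x)] at h
    linear_combination h
  -- KEY2' : same LHS = 2 * f x * f (y*s)
  have key2' : ∀ x y : S,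
      f (x * y) * f (τ z₀ * z₀) + μ y * (f (τ y * x) * f (τ z₀ * z₀))
        = 2 * f x * f (y * (τ z₀ * z₀)) := by
    intro x y
    have h := hf x (y * (τ z₀ * z₀))
    have e1 : x * (y * (τ z₀ * z₀)) * z₀ = (x * y) * (τ z₀ * z₀) * z₀ := by
      rw [← mul_assoc x y (τ z₀ * z₀)]
    have e2 : τ (y * (τ z₀ * z₀)) * x * z₀ = (τ y * x) * (τ z₀ * z₀) * z₀ := by
      rw [hτys y, mul_assoc (τ y) (τ z₀ * z₀) x, hs x, ← mul_assoc (τ y) x (τ z₀ * z₀)]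
    have e3 : μ (y * (τ z₀ * z₀)) = μ y := by rw [hμ, hμs, mul_one]
    rw [e1, e2, e3, key1 (x * y), key1 (τ y * x)] at h
    linear_combination h
  -- KEY4 : f (x*s) * f y = f x * f (y*s)
  have key4 : ∀ x y : S,
      f (x * (τ z₀ * z₀)) * f y = f x * f (y * (τ z₀ * z₀)) := by
    intro x y
    have h2 := key2 x y
    have h3 := key2' x y
    linear_combination (h3 - h2) / 2
  -- GEN : f x * f s * f y = f (x*z₀) * f (y*s)
  have gen : ∀ x y : S,
      f x * f (τ z₀ * z₀) * f y = f (x * z₀) * f (y * (τ z₀ * z₀)) := by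
    intro x y
    have h := key4 (x * z₀) y
    have e : (x * z₀) * (τ z₀ * z₀) = x * (τ z₀ * z₀) * z₀ := by
      rw [mul_assoc x z₀ (τ z₀ * z₀), hz₀ (τ z₀ * z₀), ← mul_assoc x (τ z₀ * z₀) z₀]
    rw [e, key1 x] at h
    exact h
  -- A : f (x*z₀*z₀) + μ z₀ * f (x*s) = 2 f x f z₀
  have hA : ∀ x : S, f (x * z₀ * z₀) + μ z₀ * f (x * (τ z₀ * z₀)) = 2 * f x * f z₀ := by
    intro x
    have h := hf x z₀
    have e : τ z₀ * x * z₀ = x * (τ z₀ * z₀) := by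
      rw [hca x, mul_assoc]
    rwa [e] at h
  -- B : f (x*s) + μ (τ z₀) * f (x*z₀*z₀) = 2 f x f (τ z₀)
  have hB : ∀ x : S, f (x * (τ z₀ * z₀)) + μ (τ z₀) * f (x * z₀ * z₀) = 2 * f x * f (τ z₀) := by
    intro x
    have h := hf x (τ z₀)
    have e1 : x * τ z₀ * z₀ = x * (τ z₀ * z₀) := mul_assoc _ _ _
    have e2 : τ (τ z₀) * x * z₀ = x * z₀ * z₀ := by
      rw [hτinv, hz₀ x]
    rwa [e1, e2] at h
  -- Main lemma P : f (x * s) = μ (τ z₀) * f z₀ * f x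
  have P : ∀ x : S, f (x * (τ z₀ * z₀)) = μ (τ z₀) * f z₀ * f x := by
    by_cases hex : ∀ u : S, f u = 0
    · intro x
      rw [hex (x * (τ z₀ * z₀)), hex x, mul_zero]
    · push_neg at hex
      obtain ⟨x₀, hx₀⟩ := hex
      -- h1 : f (τ z₀) = μ (τ z₀) * f z₀
      have h1 : f (τ z₀) = μ (τ z₀) * f z₀ := by
        have h0 : f x₀ * (μ (τ z₀) * f z₀ - f (τ z₀)) = 0 := by
          linear_combination (-(μ (τ z₀)) / 2) * hA x₀ + (1 / 2) * hB x₀ +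
            (f (x₀ * (τ z₀ * z₀)) / 2) * hμτ'
        rcases mul_eq_zero.mp h0 with h | h
        · exact absurd h hx₀
        · exact (sub_eq_zero.mp h).symm
      by_cases haz : f (τ z₀ * z₀) = 0
      · -- then f (x*s) = 0 for all x, and f z₀ = 0
        have hP0 : ∀ x : S, f (x * (τ z₀ * z₀)) = 0 := by
          intro x
          have h := key2 x x₀
          rw [haz] at h
          have h' : 2 * f (x * (τ z₀ * z₀)) * f x₀ = 0 := by linear_combination -h
          rcases mul_eq_zero.mp h' with h'' | h''
          · rcases mul_eq_zero.mp h'' with h3 | h3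
            · norm_num at h3
            · exact h3
          · exact absurd h'' hx₀
        have hz0 : f z₀ = 0 := by
          have h := hf (τ z₀) z₀
          have e1 : τ z₀ * z₀ * z₀ = z₀ * (τ z₀ * z₀) := (hz₀ (τ z₀ * z₀)).symm
          have e2 : τ z₀ * τ z₀ * z₀ = τ z₀ * (τ z₀ * z₀) := mul_assoc _ _ _
          rw [e1, e2, hP0 z₀, hP0 (τ z₀)] at h
          -- h : 0 + μ z₀ * 0 = 2 * f (τ z₀) * f z₀
          have hμne : μ (τ z₀) ≠ 0 := by
            intro hc
            rw [hc, mul_zero] at hμτ'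
            norm_num at hμτ'
          have h2 : μ (τ z₀) * (f z₀ * f z₀) = 0 := by
            linear_combination -h / 2 - f z₀ * h1
          rcases mul_eq_zero.mp h2 with h3 | h3
          · exact absurd h3 hμne
          · exact mul_self_eq_zero.mp h3
        intro x
        rw [hP0 x, hz0]
        ring
      · -- f s ≠ 0
        have hx₀s : f (x₀ * (τ z₀ * z₀)) = f (τ z₀) * f x₀ := by
          have h := gen (τ z₀) x₀
          -- h : f (τ z₀) * f s * f x₀ = f (τ z₀ * z₀) * f (x₀ * s)
          have h' : f (τ z₀ * z₀) * (f (x₀ * (τ z₀ * z₀)) - f (τ z₀) * f x₀) = 0 := by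
            linear_combination -h
          rcases mul_eq_zero.mp h' with h'' | h''
          · exact absurd h'' haz
          · exact sub_eq_zero.mp h''
        intro x
        have h := key4 x x₀
        have h2 : (f (x * (τ z₀ * z₀)) - μ (τ z₀) * f z₀ * f x) * f x₀ = 0 := by
          linear_combination h + f x * hx₀s + (f x * f x₀) * h1
        rcases mul_eq_zero.mp h2 with h3 | h3
        · exact sub_eq_zero.mp h3
        · exact absurd h3 hx₀
  constructor
  · intro x
    rw [mul_assoc x (τ z₀) z₀]
    exact P x
  · intro x
    rw [← mul_assoc x z₀ z₀]
    linear_combination hA x - μ z₀ * P x - f z₀ * f x * hμτ'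
end

section
/- If f: S → ℂ is a nonzero solution of f(xyz₀) + μ(y)f(τ(y)xz₀) = 2f(x)f(y), then g(x) := f(xz₀)/f(z₀) satisfies the variant d'Alembert equation g(xy) + μ(y)g(τ(y)x) = 2g(x)g(y) and g(xz₀) = g(z₀)g(x) for all x ∈ S. -/
theorem stmt_10 {S : Type*} [Semigroup S] (τ : S → S)
    (hτinv : ∀ x, τ (τ x) = x)
    (hτ : (∀ x y, τ (x * y) = τ x * τ y) ∨ (∀ x y, τ (x * y) = τ y * τ x))
    (μ : S → ℂ) (hμ : ∀ x y, μ (x * y) = μ x * μ y)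
    (hμτ : ∀ x, μ (x * τ x) = 1)
    (z₀ : S) (hz₀ : ∀ x, z₀ * x = x * z₀)
    (f : S → ℂ) (hf0 : f ≠ 0) (hf : ∀ x y, f (x * y * z₀) + μ y * f (τ y * x * z₀) = 2 * f x * f y) :
    (∀ x y, (fun x => f (x * z₀) / f z₀) (x * y) + μ y * (fun x => f (x * z₀) / f z₀) (τ y * x) =
      2 * (fun x => f (x * z₀) / f z₀) x * (fun x => f (x * z₀) / f z₀) y) ∧
    (∀ x, (fun x => f (x * z₀) / f z₀) (x * z₀) =
      (fun x => f (x * z₀) / f z₀) z₀ * (fun x => f (x * z₀) / f z₀) x) := by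
  obtain ⟨a, ha⟩ : ∃ a, f a ≠ 0 := by
    by_contra h
    push_neg at h
    exact hf0 (funext fun x => h x)
  -- τ z₀ is central
  have htc : ∀ s, τ z₀ * s = s * τ z₀ := by
    intro s
    rcases hτ with h | h
    · calc τ z₀ * s = τ z₀ * τ (τ s) := by rw [hτinv]
        _ = τ (z₀ * τ s) := (h _ _).symm
        _ = τ (τ s * z₀) := by rw [hz₀]
        _ = τ (τ s) * τ z₀ := h _ _
        _ = s * τ z₀ := by rw [hτinv]
    · calc τ z₀ * s = τ z₀ * τ (τ s) := by rw [hτinv]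
        _ = τ (τ s * z₀) := (h _ _).symm
        _ = τ (z₀ * τ s) := by rw [hz₀]
        _ = τ (τ s) * τ z₀ := h _ _
        _ = s * τ z₀ := by rw [hτinv]
  have hτz : ∀ y, τ (y * z₀) = τ y * τ z₀ := by
    intro y
    rcases hτ with h | h
    · rw [h]
    · rw [h, htc]
  have hμne : ∀ x, μ x ≠ 0 := by
    intro x hx
    have h1 := hμτ x
    rw [hμ, hx, zero_mul] at h1
    exact zero_ne_one h1
  -- f cannot vanish on all (·*z₀)
  have hFnot : ¬ (∀ u, f (u * z₀) = 0) := by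
    intro h
    have h2 := hf a a
    rw [h (a * a), h (τ a * a)] at h2
    have : (2:ℂ) * f a * f a ≠ 0 := mul_ne_zero (mul_ne_zero two_ne_zero ha) ha
    exact this (by linear_combination -h2)
  -- Basic instances
  have hIII : ∀ u, f (u * z₀ * z₀) + μ z₀ * f (τ z₀ * u * z₀) = 2 * f z₀ * f u := by
    intro u
    linear_combination hf u z₀
  have hI : ∀ x y, f (x * y * z₀ * z₀) + μ y * f (τ y * x * z₀ * z₀) = 2 * f (x * z₀) * f y := by
    intro x y
    have h := hf (x * z₀) y
    rw [mul_assoc x z₀ y, hz₀ y, ← mul_assoc x y z₀, ← mul_assoc (τ y) x z₀] at h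
    exact h
  have hII : ∀ x y, f (x * y * z₀ * z₀) + μ y * μ z₀ * f (τ z₀ * (τ y * x) * z₀)
      = 2 * f x * f (y * z₀) := by
    intro x y
    have h := hf x (y * z₀)
    rw [← mul_assoc x y z₀, hμ y z₀, hτz y, ← htc (τ y), mul_assoc (τ z₀) (τ y) x,
      mul_assoc (μ y) (μ z₀)] at h
    linear_combination h
  have hstar : ∀ x y, μ y * (f (τ y * x * z₀ * z₀) - f z₀ * f (τ y * x))
      = f (x * z₀) * f y - f x * f (y * z₀) := by
    intro x y
    linear_combination (hI x y) / 2 - (hII x y) / 2 + (μ y) * (hIII (τ y * x)) / 2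
  have hW : ∀ x y, f z₀ * (f (x * y) + μ y * f (τ y * x))
      = (μ z₀ * f (τ z₀ * x) + f (x * z₀)) * f y := by
    intro x y
    have hA' := hf (τ z₀ * x) y
    rw [mul_assoc (τ z₀) x y, ← mul_assoc (τ y) (τ z₀) x, ← htc (τ y),
      mul_assoc (τ z₀) (τ y) x] at hA'
    linear_combination -(hIII (x * y)) / 2 - (μ y) * (hIII (τ y * x)) / 2
      + (μ z₀) * hA' / 2 + (hI x y) / 2
  have hVII : ∀ x y, f (x * y * z₀ * z₀) - f z₀ * f (x * y)
      = f x * f (y * z₀) - μ z₀ * f (τ z₀ * x) * f y := by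
    intro x y
    linear_combination (hI x y) - (hW x y) - (hstar x y)
  have hY : ∀ x, f z₀ * (μ z₀ * f (τ z₀ * x) + f (x * z₀))
      = (μ z₀ * f (τ z₀ * z₀) + f (z₀ * z₀)) * f x := by
    intro x
    have h1 := hVII x z₀
    have h2 := hVII z₀ x
    rw [hz₀ x] at h2
    linear_combination h1 - h2
  have hXfull : ∀ x, (μ z₀ * f (τ z₀ * z₀) + f (z₀ * z₀)) * f (x * z₀)
      = 2 * f z₀ * f z₀ * f x := by
    intro x
    have h := hY (x * z₀)
    rw [← mul_assoc (τ z₀) x z₀] at h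
    linear_combination (f z₀) * (hIII x) - h
  have hcne : f z₀ ≠ 0 := by
    intro hc0
    have hP2 : ∀ x y, f (x * y * z₀ * z₀) = f (x * z₀) * f y + f x * f (y * z₀) := by
      intro x y
      linear_combination (hI x y) - (hstar x y) - (μ y * f (τ y * x)) * hc0
    have hP3 : ∀ x y, f x * f (y * z₀ * z₀) = f (x * z₀ * z₀) * f y := by
      intro x y
      have h1 := hP2 x (y * z₀)
      rw [← mul_assoc x y z₀] at h1
      have h2 := hP2 (x * z₀) y
      rw [mul_assoc x z₀ y, hz₀ y, ← mul_assoc x y z₀] at h2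
      linear_combination h2 - h1
    have hGz : f (z₀ * z₀ * z₀ * z₀) = 0 := by
      linear_combination (hP2 z₀ z₀) + (2 * f (z₀ * z₀)) * hc0
    have hGf : ∀ x, f (x * z₀ * z₀) * f (z₀ * z₀) = 0 := by
      intro x
      linear_combination -(hP3 x (z₀ * z₀)) + (f x) * hGz
    have hG0 : ∀ x, f (x * z₀ * z₀) = 0 := by
      by_cases hz2 : f (z₀ * z₀) = 0
      · have h3 : ∀ x, f (x * z₀ * z₀ * z₀) = 0 := by
          intro x
          have h := hP2 x z₀
          rw [hc0, hz2] at h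
          simpa using h
        have h4 : ∀ x y, f (x * z₀ * z₀) * f (y * z₀) = 0 := by
          intro x y
          have h := hP3 x (y * z₀)
          rw [h3 y] at h
          linear_combination -h
        obtain ⟨u, hu⟩ : ∃ u, f (u * z₀) ≠ 0 := by
          by_contra hcon
          push_neg at hcon
          exact hFnot hcon
        intro x
        exact (mul_eq_zero.mp (h4 x u)).resolve_right hu
      · intro x
        exact (mul_eq_zero.mp (hGf x)).resolve_right hz2
    have hFF : ∀ x y, f (x * z₀) * f y + f x * f (y * z₀) = 0 := by
      intro x y
      have h := hP2 x y
      rw [hG0 (x * y)] at h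
      exact h.symm
    have hFa : f (a * z₀) = 0 := by
      have h2 : f (a * z₀) * f a = 0 := by linear_combination (hFF a a) / 2
      exact (mul_eq_zero.mp h2).resolve_right ha
    have hF0 : ∀ x, f (x * z₀) = 0 := by
      intro x
      have h := hFF x a
      rw [hFa] at h
      have h2 : f (x * z₀) * f a = 0 := by linear_combination h
      exact (mul_eq_zero.mp h2).resolve_right ha
    exact hFnot hF0
  obtain ⟨L, hX⟩ : ∃ L : ℂ, ∀ x, L * f (x * z₀) = 2 * f z₀ * f z₀ * f x :=
    ⟨_, hXfull⟩
  have hlne : L ≠ 0 := by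
    intro hl
    have h := hX a
    rw [hl, zero_mul] at h
    exact (mul_ne_zero (mul_ne_zero (mul_ne_zero two_ne_zero hcne) hcne) ha) h.symm
  -- (4 c^4 - c L^2) * f (τ y * x) = 0
  have hPP : ∀ x y, (4 * (f z₀)^4 - f z₀ * (L * L)) * f (τ y * x) = 0 := by
    intro x y
    have h := hstar x y
    have h2 : μ y * ((4 * (f z₀)^4 - f z₀ * (L * L)) * f (τ y * x)) = μ y * 0 := by
      linear_combination L * L * h - (μ y * L) * (hX (τ y * x * z₀))
        - (2 * (f z₀)^2 * μ y) * (hX (τ y * x)) + (L * f y) * (hX x) - (L * f x) * (hX y)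
    exact mul_left_cancel₀ (hμne y) h2
  have hk2 : f z₀ * (L * L) = 4 * (f z₀)^4 := by
    by_contra hne
    apply hFnot
    intro u
    have h := hPP z₀ (τ u)
    rw [hτinv u] at h
    have hfac : (4 * (f z₀)^4 - f z₀ * (L * L)) ≠ 0 :=
      sub_ne_zero.mpr (fun hh => hne hh.symm)
    exact (mul_eq_zero.mp h).resolve_left hfac
  have hFf : ∀ x y, L * L * (f (x * z₀) * f (y * z₀)) =
      4 * (f z₀)^2 * (f z₀)^2 * (f x * f y) := by
    intro x y
    linear_combination (L * f (y * z₀)) * (hX x) + (2 * (f z₀)^2 * f x) * (hX y)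
  have hA : ∀ x y, f (x * z₀) * f (y * z₀) = f z₀ * (f x * f y) := by
    intro x y
    apply mul_left_cancel₀ (mul_ne_zero hlne hlne)
    linear_combination (hFf x y) - (f x * f y) * hk2
  have hB : ∀ x, f z₀ * f (x * z₀ * z₀) = f (z₀ * z₀) * f (x * z₀) := by
    intro x
    apply mul_left_cancel₀ hlne
    linear_combination (f z₀) * (hX (x * z₀)) - (f (x * z₀)) * (hX z₀)
  constructor
  · intro x y
    show f (x * y * z₀) / f z₀ + μ y * (f (τ y * x * z₀) / f z₀)
      = 2 * (f (x * z₀) / f z₀) * (f (y * z₀) / f z₀)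
    field_simp
    linear_combination (f z₀) * (hf x y) - 2 * (hA x y)
  · intro x
    show f (x * z₀ * z₀) / f z₀ = f (z₀ * z₀) / f z₀ * (f (x * z₀) / f z₀)
    field_simp
    linear_combination (hB x)
end

section
/- Let τ be an involutive automorphism of S. The nonzero solutions f: S → ℂ of f(xyz₀) + μ(y)f(τ(y)xz₀) = 2f(x)f(y) are exactly the functions f(x) = χ(z₀)·(χ(x) + μ(x)χ(τ(x)))/2 where χ: S → ℂ is multiplicative with χ(z₀) ≠ 0 and μ(z₀)χ(τ(z₀)) = χ(z₀). -/
theorem base_sol {S : Type*} [Semigroup S] (τ : S → S)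
    (hτinv : ∀ x, τ (τ x) = x)
    (hτ : ∀ x y, τ (x * y) = τ x * τ y)
    (μ : S → ℂ) (hμ : ∀ x y, μ (x * y) = μ x * μ y)
    (hμτ : ∀ x, μ (x * τ x) = 1)
    (g : S → ℂ)
    (hE : ∀ x y, g (x * y) + μ y * g (τ y * x) = 2 * g x * g y) :
    ∃ χ : S → ℂ, (∀ x y, χ (x * y) = χ x * χ y) ∧
      (∀ x, 2 * g x = χ x + μ x * χ (τ x)) := by
  have hμinv : ∀ x, μ x * μ (τ x) = 1 := fun x => by rw [← hμ]; exact hμτ x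
  have hgg : ∀ x, μ x * g (τ x) = g x := by
    have key : ∀ u v, (g u - μ u * g (τ u)) * (g v - μ v * g (τ v)) = 0 := by
      intro u v
      have A1 := hE u v
      have A2 := hE (τ v) u
      have A3 := hE (τ u) (τ v)
      have A4 := hE v (τ u)
      rw [hτinv] at A3 A4
      have mu := hμinv u
      have mv := hμinv v
      linear_combination (μ v / 2) * A2 - A1 / 2 - (μ u * μ v / 2) * A3 + (μ u / 2) * A4
        + (μ u * g (v * τ u) / 2) * mv - (g (u * v) / 2) * mu
    intro x
    have h := mul_self_eq_zero.mp (key x x)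
    linear_combination -h
  have hK : ∀ x y z, g (x * (y * z)) =
      g (x * y) * g z + g (x * z) * g y + g (y * z) * g x - 2 * g x * g y * g z := by
    intro x y z
    have H1 := hE (x * y) z
    have H2 := hE (τ z * x) y
    have H3 := hE x (y * z)
    have H4 := hE x z
    rw [hτ, hμ] at H3
    simp only [mul_assoc] at H1 H2 H3 ⊢
    linear_combination (H1 - μ z * H2 + H3 - 2 * g y * H4) / 2
  have hR : ∀ x y z w, (g (x * y) - g x * g y) * (g (z * w) - g z * g w)
      = (g (x * w) - g x * g w) * (g (y * z) - g y * g z) := by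
    intro x y z w
    have e1 := hK x y (z * w)
    have e4 := hK x z w
    have e5 := hK y z w
    have e2 := hK x (y * z) w
    simp only [mul_assoc] at e2
    have e6 := hK x y z
    linear_combination e2 - e1 + g w * e6 - g y * e4
  by_cases hcase : ∀ x y, g (x * y) = g x * g y
  · refine ⟨g, hcase, fun x => by rw [← hgg x]; ring⟩
  · push_neg at hcase
    obtain ⟨a, b, hab⟩ := hcase
    have hab' : g (a * b) - g a * g b ≠ 0 := sub_ne_zero.mpr hab
    have hsymm_a : ∀ v, g (a * v) - g a * g v = g (v * a) - g v * g a := by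
      intro v
      have h1 := hR a v a b
      apply mul_left_cancel₀ hab'
      linear_combination h1
    have hΨaa : g (a * a) - g a * g a ≠ 0 := by
      intro h
      have h2 := hR a a b b
      rw [h, zero_mul] at h2
      exact mul_ne_zero hab' hab' h2.symm
    obtain ⟨s, hs⟩ := IsAlgClosed.exists_pow_nat_eq (g (a * a) - g a * g a) (n := 2) (by norm_num)
    have hs0 : s ≠ 0 := by
      intro h; rw [h] at hs; simp at hs; exact hΨaa hs.symm
    refine ⟨fun x => g x + (g (x * a) - g x * g a) / s, fun x y => ?_, fun x => ?_⟩
    · show g (x * y) + (g (x * y * a) - g (x * y) * g a) / s = _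
      have hP1 : (g (x * y) - g x * g y) * (g (a * a) - g a * g a)
          = (g (x * a) - g x * g a) * (g (y * a) - g y * g a) := hR x y a a
      have hP2 : g (x * y * a) - g (x * y) * g a
          = g x * (g (y * a) - g y * g a) + g y * (g (x * a) - g x * g a) := by
        rw [mul_assoc]
        linear_combination hK x y a
      rw [← hs] at hP1
      field_simp
      linear_combination hP1 + s * hP2
    · show 2 * g x = (g x + (g (x * a) - g x * g a) / s) + μ x * (g (τ x) + (g (τ x * a) - g (τ x) * g a) / s)
      have hT : μ x * (g (τ x * a) - g (τ x) * g a) = -(g (x * a) - g x * g a) := by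
        have h1 := hE a x
        have h2 := hgg x
        have h3 := hsymm_a x
        linear_combination h1 - g a * h2 - h3
      have h2 := hgg x
      field_simp
      linear_combination -s * h2 - hT

theorem stmt_11 {S : Type*} [Semigroup S] (τ : S → S)
    (hτinv : ∀ x, τ (τ x) = x)
    (hτ : ∀ x y, τ (x * y) = τ x * τ y)
    (μ : S → ℂ) (hμ : ∀ x y, μ (x * y) = μ x * μ y)
    (hμτ : ∀ x, μ (x * τ x) = 1)
    (z₀ : S) (hz₀ : ∀ x, z₀ * x = x * z₀)
    (f : S → ℂ) :
    (f ≠ 0 ∧ ∀ x y, f (x * y * z₀) + μ y * f (τ y * x * z₀) = 2 * f x * f y) ↔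
    ∃ χ : S → ℂ, (∀ x y, χ (x * y) = χ x * χ y) ∧ χ z₀ ≠ 0 ∧
      μ z₀ * χ (τ z₀) = χ z₀ ∧
      ∀ x, f x = χ z₀ * (χ x + μ x * χ (τ x)) / 2 := by
  have hμinv : ∀ x, μ x * μ (τ x) = 1 := fun x => by rw [← hμ]; exact hμτ x
  have hμne : ∀ x, μ x ≠ 0 := fun x => left_ne_zero_of_mul_eq_one (hμinv x)
  constructor
  · rintro ⟨hf0, hEq⟩
    obtain ⟨x₀, hx₀⟩ : ∃ x, f x ≠ 0 := by
      by_contra h; push_neg at h; exact hf0 (funext h)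
    -- K★ identity
    have hKs : ∀ x y z, 2 * f (x * (y * z) * z₀) =
        2 * f (x * y) * f z + 2 * f x * f (y * z) - 2 * μ z * f (τ z * x) * f y := by
      intro x y z
      have H1 := hEq (x * y) z
      have H2 := hEq (τ z * x) y
      have H3 := hEq x (y * z)
      rw [hτ, hμ] at H3
      simp only [mul_assoc] at H1 H2 H3 ⊢
      linear_combination H1 - μ z * H2 + H3
    -- the W identity
    have hW : ∀ x z, f z₀ * (f (x * z) + μ z * f (τ z * x))
        = f x * (f (z * z₀) + μ z * f (τ z * z₀)) := by
      intro x z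
      have S1 := hKs x z₀ z
      have S2 := hKs z₀ x z
      simp only [mul_assoc, hz₀] at S1 S2 ⊢
      linear_combination (S1 - S2) / 2
    -- W2
    have hW2 : ∀ x z, f (x * z₀) * (f (z * z₀) + μ z * f (τ z * z₀))
        = 2 * f z₀ * f x * f z := by
      intro x z
      have h := hW (x * z₀) z
      have h2 := hEq x z
      simp only [mul_assoc, hz₀] at h h2 ⊢
      linear_combination -h + f z₀ * h2
    -- f z₀ ≠ 0
    have hfz₀ : f z₀ ≠ 0 := by
      intro h0
      have hG : ∀ z, f (z * z₀) + μ z * f (τ z * z₀) = 0 := by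
        intro z
        have h := hW x₀ z
        rw [h0, zero_mul] at h
        exact ((mul_eq_zero.mp h.symm).resolve_left hx₀)
      have hff : ∀ x y, (f x - μ x * f (τ x)) * (f y - μ y * f (τ y)) = 0 := by
        intro x y
        have B1 := hEq x (τ y)
        have B2 := hEq (τ y) (τ x)
        have B3 := hEq (τ x) y
        have B4 := hEq y x
        rw [hτinv] at B1 B2
        have G5 := hG (y * x)
        rw [hτ, hμ] at G5
        have mxe := hμinv x
        have mye := hμinv y
        simp only [mul_assoc] at B1 B2 B3 B4 G5
        have s5 : μ y * f (x * (τ y * z₀)) + f (y * (x * z₀)) = 2 * f x * (μ y * f (τ y)) := by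
          linear_combination μ y * B1 - f (y * (x * z₀)) * mye
        have s4 : -f (y * (x * z₀)) + μ y * f (x * (τ y * z₀))
            = 2 * (μ x * f (τ x)) * (μ y * f (τ y)) := by
          linear_combination (μ x * μ y) * B2 - G5 - (μ y * f (x * (τ y * z₀))) * mxe
        have s45 : f (y * (x * z₀)) = f x * (μ y * f (τ y)) - (μ x * f (τ x)) * (μ y * f (τ y)) := by
          linear_combination (s5 - s4) / 2
        have s6 : μ x * f (τ x * (y * z₀)) - f (y * (x * z₀)) = 2 * (μ x * f (τ x)) * f y := by
          linear_combination μ x * B3 - G5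
        have s67 : f (y * (x * z₀)) = f y * f x - (μ x * f (τ x)) * f y := by
          linear_combination (B4 - s6) / 2
        linear_combination s45 - s67
      have hffd : ∀ x, f x = μ x * f (τ x) := by
        intro x
        have h := mul_self_eq_zero.mp (hff x x)
        linear_combination h
      have hU2 : ∀ x y, f (y * x * z₀) = 0 := by
        intro x y
        have B1 := hEq x (τ y)
        have B2 := hEq (τ y) (τ x)
        have B3 := hEq (τ x) y
        have B4 := hEq y x
        rw [hτinv] at B1 B2
        have G5 := hG (y * x)
        rw [hτ, hμ] at G5
        simp only [mul_assoc] at B1 B2 B3 B4 G5 ⊢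
        have s6 : μ x * f (τ x * (y * z₀)) - f (y * (x * z₀)) = 2 * (μ x * f (τ x)) * f y := by
          linear_combination μ x * B3 - G5
        have s67 : f (y * (x * z₀)) = f y * f x - (μ x * f (τ x)) * f y := by
          linear_combination (B4 - s6) / 2
        rw [s67, ← hffd x]
        ring
      have := hEq x₀ x₀
      rw [hU2 x₀ x₀] at this
      rw [hU2 x₀ (τ x₀)] at this
      have : f x₀ * f x₀ = 0 := by linear_combination -this / 2
      exact hx₀ ((mul_self_eq_zero).mp this)
    -- nonvanishing of G somewhere
    obtain ⟨z₁, hz₁⟩ : ∃ z, f (z * z₀) + μ z * f (τ z * z₀) ≠ 0 := by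
      by_contra h; push_neg at h
      have := hW2 x₀ x₀
      rw [h x₀, mul_zero] at this
      have : f z₀ * (f x₀ * f x₀) = 0 := by linear_combination -this / 2
      rcases mul_eq_zero.mp this with h' | h'
      · exact hfz₀ h'
      · exact hx₀ (mul_self_eq_zero.mp h')
    set G₁ := f (z₁ * z₀) + μ z₁ * f (τ z₁ * z₀) with hG₁def
    set c := 2 * f z₀ * f z₁ / G₁ with hcdef
    have hF : ∀ x, f (x * z₀) = c * f x := by
      intro x
      have h := hW2 x z₁
      rw [hcdef]
      field_simp
      linear_combination h
    have hc : c ≠ 0 := by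
      intro h
      have h1 := hEq x₀ x₀
      have e1 : f (x₀ * x₀ * z₀) = 0 := by rw [hF (x₀ * x₀), h, zero_mul]
      have e2 : f (τ x₀ * x₀ * z₀) = 0 := by rw [hF (τ x₀ * x₀), h, zero_mul]
      rw [e1, e2] at h1
      have : f x₀ * f x₀ = 0 := by linear_combination -h1 / 2
      exact hx₀ (mul_self_eq_zero.mp this)
    have hgE : ∀ x y, (f (x * y) / c) + μ y * (f (τ y * x) / c)
        = 2 * (f x / c) * (f y / c) := by
      intro x y
      have h1 := hEq x y
      rw [hF (x * y)] at h1
      rw [hF (τ y * x)] at h1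
      field_simp
      linear_combination h1
    obtain ⟨χ, hχm, hχg⟩ := base_sol τ hτinv hτ μ hμ hμτ (fun x => f x / c) hgE
    have hfχ : ∀ x, 2 * f x = c * (χ x + μ x * χ (τ x)) := by
      intro x
      have h := hχg x
      field_simp at h
      linear_combination h
    have hgx₀ : χ x₀ + μ x₀ * χ (τ x₀) ≠ 0 := by
      intro h
      have h1 := hfχ x₀
      rw [h, mul_zero] at h1
      exact hx₀ (by linear_combination h1 / 2)
    -- the key pointwise identity (†)
    have hdag : ∀ x, (χ z₀ - c) * χ x + (μ z₀ * χ (τ z₀) - c) * (μ x * χ (τ x)) = 0 := by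
      intro x
      have h1 := hF x
      have h2 := hfχ (x * z₀)
      rw [hχm, hμ, hτ, hχm] at h2
      have h3 := hfχ x
      have hmul : c * ((χ z₀ - c) * χ x + (μ z₀ * χ (τ z₀) - c) * (μ x * χ (τ x))) = 0 := by
        linear_combination 2 * h1 + c * h3 - h2
      exact (mul_eq_zero.mp hmul).resolve_left hc
    -- show χ z₀ = c and μ z₀ * χ (τ z₀) = c
    have hαβ : χ z₀ = c ∧ μ z₀ * χ (τ z₀) = c := by
      by_cases hA : χ z₀ = c
      · refine ⟨hA, ?_⟩
        obtain ⟨x₂, hx₂⟩ : ∃ x, μ x * χ (τ x) ≠ 0 := by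
          by_contra hall; push_neg at hall
          have hz1 : ∀ x, χ (τ x) = 0 := by
            intro x
            rcases mul_eq_zero.mp (hall x) with h | h
            · exact absurd h (hμne x)
            · exact h
          have hz2 : ∀ x, χ x = 0 := fun x => by
            have := hz1 (τ x); rwa [hτinv] at this
          exact hgx₀ (by rw [hz1 x₀, hz2 x₀, mul_zero, add_zero])
        have h := hdag x₂
        rw [hA, sub_self, zero_mul, zero_add] at h
        have := (mul_eq_zero.mp h).resolve_right hx₂
        linear_combination this
      · exfalso
        -- λ := (c - β)/(χ z₀ - c); χ = λ * χ̌ pointwise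
        set β := μ z₀ * χ (τ z₀) with hβ
        set lam := (c - β) / (χ z₀ - c) with hlam
        have hAc : χ z₀ - c ≠ 0 := sub_ne_zero.mpr hA
        have hlameq : ∀ x, χ x = lam * (μ x * χ (τ x)) := by
          intro x
          have h := hdag x
          rw [hlam]
          field_simp
          linear_combination h
        -- χ̌ is multiplicative
        have hchm : ∀ x y, μ (x * y) * χ (τ (x * y)) = (μ x * χ (τ x)) * (μ y * χ (τ y)) := by
          intro x y; rw [hμ, hτ, hχm]; ring
        have hkey : ∀ x y, (lam - lam * lam) * ((μ x * χ (τ x)) * (μ y * χ (τ y))) = 0 := by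
          intro x y
          have h1 : χ (x * y) = lam * ((μ x * χ (τ x)) * (μ y * χ (τ y))) := by
            rw [hlameq (x * y), hchm]
          have h2 : χ (x * y) = (lam * lam) * ((μ x * χ (τ x)) * (μ y * χ (τ y))) := by
            rw [hχm, hlameq x, hlameq y]; ring
          linear_combination h2 - h1
        have hchx0 : μ x₀ * χ (τ x₀) ≠ 0 := by
          intro h
          apply hgx₀
          rw [h, add_zero, hlameq x₀, h, mul_zero]
        have hlam01 : lam - lam * lam = 0 := by
          have h := hkey x₀ x₀
          exact (mul_eq_zero.mp h).resolve_right (mul_ne_zero hchx0 hchx0)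
        have hlam0 : lam ≠ 0 := by
          intro h
          apply hgx₀
          have h1 := hlameq x₀
          rw [h, zero_mul] at h1
          have h2 := hlameq (τ x₀)
          rw [h, zero_mul] at h2
          -- χ x₀ = 0 and χ (τ x₀) = 0
          rw [h1, h2, mul_zero, add_zero]
        have hlam1 : lam = 1 := by
          have : lam * (1 - lam) = 0 := by linear_combination hlam01
          rcases mul_eq_zero.mp this with h | h
          · exact absurd h hlam0
          · linear_combination (-1 : ℂ) * h
        -- then χ = χ̌, so β = χ z₀ and (χ z₀ - c)(χ + χ̌) = 0
        have hββ : β = χ z₀ := by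
          have h := hlameq z₀
          rw [hlam1, one_mul] at h
          rw [hβ, ← h]
        have h := hdag x₀
        rw [hββ] at h
        have h2 := hlameq x₀
        rw [hlam1, one_mul] at h2
        apply hA
        have hzz : (χ z₀ - c) * (χ x₀ + μ x₀ * χ (τ x₀)) = 0 := by
          linear_combination h
        have := (mul_eq_zero.mp hzz).resolve_right hgx₀
        linear_combination this
    obtain ⟨hα, hβc⟩ := hαβ
    refine ⟨χ, hχm, ?_, ?_, ?_⟩
    · rw [hα]; exact hc
    · rw [hα, hβc]
    · intro x
      have h := hfχ x
      rw [← hα] at h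
      linear_combination h / 2
  · rintro ⟨χ, hχm, hχz₀, hcond, hfeq⟩
    constructor
    · intro h0
      have h := hfeq z₀
      rw [h0] at h
      simp only [Pi.zero_apply] at h
      have : χ z₀ * χ z₀ = 0 := by
        linear_combination -h * 2 / 2 - (χ z₀ / 2) * hcond
      exact hχz₀ (mul_self_eq_zero.mp this)
    · intro x y
      have e1 := hμinv y
      have e2 := hcond
      simp only [hfeq, hτ, hμ, hχm, hτinv]
      field_simp
      linear_combination (μ x * μ y * χ (τ x) * χ (τ y) + μ x * χ y * χ (τ x)) * e2
        + (μ x * χ y * χ (τ x) * μ z₀ * χ (τ z₀)) * e1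
end

section
/- If f: S → ℂ is a nonzero solution of the Van Vleck-type equation μ(y)f(xτ(y)z₀) − f(xyz₀) = 2f(x)f(y) for all x,y ∈ S, then f(x) = −μ(x)f(τ(x)) for all x, f(z₀) ≠ 0, f(z₀²) = 0, f(xτ(z₀)z₀) = μ(τ(z₀))f(x)f(z₀), f(xz₀²) = −f(z₀)f(x), and μ(x)f(τ(x)z₀) = f(xz₀). -/
theorem stmt_12 {S : Type*} [Semigroup S] (τ : S → S)
    (hτinv : ∀ x, τ (τ x) = x)
    (hτ : (∀ x y, τ (x * y) = τ x * τ y) ∨ (∀ x y, τ (x * y) = τ y * τ x))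
    (μ : S → ℂ) (hμ : ∀ x y, μ (x * y) = μ x * μ y)
    (hμτ : ∀ x, μ (x * τ x) = 1)
    (z₀ : S) (hz₀ : ∀ x, z₀ * x = x * z₀)
    (f : S → ℂ) (hf0 : f ≠ 0) (hf : ∀ x y, μ y * f (x * τ y * z₀) - f (x * y * z₀) = 2 * f x * f y) :
    (∀ x, f x = -(μ x * f (τ x))) ∧ f z₀ ≠ 0 ∧ f (z₀ * z₀) = 0 ∧
    (∀ x, f (x * τ z₀ * z₀) = μ (τ z₀) * f x * f z₀) ∧
    (∀ x, f (x * (z₀ * z₀)) = -(f z₀ * f x)) ∧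
    (∀ x, μ x * f (τ x * z₀) = f (x * z₀)) := by
  obtain ⟨x₀, hx₀⟩ : ∃ x, f x ≠ 0 := by
    by_contra h; push_neg at h; exact hf0 (funext h)
  have hμ1 : ∀ x, μ x * μ (τ x) = 1 := fun x => by rw [← hμ]; exact hμτ x
  have hμnz : ∀ x, μ x ≠ 0 := fun x => left_ne_zero_of_mul_eq_one (hμ1 x)
  -- τ z₀ is central
  have hT0 : ∀ a, τ z₀ * a = a * τ z₀ := by
    intro a
    rcases hτ with hom | anti
    · conv_lhs => rw [← hτinv a]
      rw [← hom, hz₀ (τ a), hom, hτinv]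
    · conv_lhs => rw [← hτinv a]
      rw [← anti, ← hz₀ (τ a), anti, hτinv]
  have hT2 : ∀ x, τ (x * x) = τ x * τ x := by
    intro x; rcases hτ with hom | anti
    · exact hom x x
    · exact anti x x
  have hTyz : ∀ y, τ (y * z₀) = τ y * τ z₀ := by
    intro y; rcases hτ with hom | anti
    · exact hom y z₀
    · rw [anti y z₀]; exact hT0 (τ y)
  have hT4 : ∀ y, τ (τ y * z₀) = y * τ z₀ := by
    intro y; rw [hTyz (τ y), hτinv]
  -- oddness
  have hodd : ∀ y, f y = -(μ y * f (τ y)) := by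
    intro y
    have h1 := hf x₀ y
    have h2 := hf x₀ (τ y)
    rw [hτinv y] at h2
    have h3 : 2 * f x₀ * (f y + μ y * f (τ y)) = 0 := by
      linear_combination (-1 : ℂ) * h1 - μ y * h2 + f (x₀ * y * z₀) * hμ1 y
    have h4 : f y + μ y * f (τ y) = 0 := by
      rcases mul_eq_zero.mp h3 with h | h
      · rcases mul_eq_zero.mp h with h | h
        · exact absurd h two_ne_zero
        · exact absurd h hx₀
      · exact h
    linear_combination h4
  have hT3 : ∀ x, f (x * τ x) = - f (τ x * x) := by
    intro x; rcases hτ with hom | anti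
    · have h := hodd (x * τ x)
      rw [hom x (τ x), hτinv x, hμτ x] at h
      rw [h]; ring
    · have h1 := hodd (x * τ x)
      rw [anti x (τ x), hτinv x, hμτ x] at h1
      have h2 := hodd (τ x * x)
      rw [anti (τ x) x, hτinv x] at h2
      have hμ2 : μ (τ x * x) = 1 := by rw [hμ, mul_comm, ← hμ, hμτ]
      rw [hμ2] at h2
      have e1 : f (x * τ x) = 0 := by linear_combination h1 / 2
      have e2 : f (τ x * x) = 0 := by linear_combination h2 / 2
      rw [e1, e2, neg_zero]
  -- the key identity (D)
  have hD : ∀ x y, f x * f (y * z₀) - f (x * z₀) * f y = μ y * f (x * τ y) * f z₀ := by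
    intro x y
    have hA := hf (x * z₀) y
    have hB := hf x (y * z₀)
    have hC := hf (x * τ y) z₀
    have e1 : x * z₀ * τ y * z₀ = x * τ y * z₀ * z₀ := by
      rw [mul_assoc x z₀ (τ y), hz₀ (τ y), ← mul_assoc x (τ y) z₀]
    have e2 : x * z₀ * y * z₀ = x * y * z₀ * z₀ := by
      rw [mul_assoc x z₀ y, hz₀ y, ← mul_assoc x y z₀]
    have e3 : x * (y * z₀) * z₀ = x * y * z₀ * z₀ := by
      rw [← mul_assoc x y z₀]
    have e4 : x * τ (y * z₀) * z₀ = x * τ y * τ z₀ * z₀ := by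
      rw [hTyz y, ← mul_assoc x (τ y) (τ z₀)]
    rw [e1, e2] at hA
    rw [e3, e4, hμ y z₀] at hB
    linear_combination (hA + μ y * hC - hB) / 2
  -- identity (G)
  have hG : ∀ x y, f z₀ * f (x * y * z₀) + 2 * f z₀ * f x * f y
      = f (x * z₀) * f (y * z₀) - f (x * z₀ * z₀) * f y := by
    intro x y
    have h1 := hD (x * z₀) y
    have e1 : x * z₀ * τ y = x * τ y * z₀ := by
      rw [mul_assoc x z₀ (τ y), hz₀ (τ y), ← mul_assoc x (τ y) z₀]
    rw [e1] at h1
    have h2 := hf x y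
    linear_combination -h1 - f z₀ * h2
  have hH : ∀ x, 2 * f z₀ * f (x * z₀ * z₀) = f (z₀ * z₀) * f (x * z₀) - 2 * f z₀ ^ 2 * f x :=
    fun x => by linear_combination hG x z₀
  have hJ : ∀ y, 2 * (f z₀ ^ 2 + f (z₀ * z₀ * z₀)) * f y = f (z₀ * z₀) * f (y * z₀) := by
    intro y
    have h1 := hG z₀ y
    rw [hz₀ y] at h1
    linear_combination 2 * h1 - hH y
  have hKey : ∀ y, f (z₀ * z₀) ^ 2 * f y = f (z₀ * z₀) * f z₀ * f (y * z₀) :=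
    fun y => by linear_combination f z₀ * hJ y - f y * hH z₀
  -- if f (· * z₀) is proportional to f, then f = 0 : contradiction machine
  have claim1 : ∀ c : ℂ, (∀ u, f (u * z₀) = c * f u) → False := by
    intro c hc
    have hK : ∀ x y, c * (μ y * f (x * τ y) - f (x * y)) = 2 * f x * f y := by
      intro x y
      have h := hf x y
      rw [hc (x * τ y), hc (x * y)] at h
      linear_combination h
    have hzero : ∀ x, f x = 0 := by
      intro x
      have k1 := hK x x
      have k2 := hK (τ x) (τ x)
      rw [hτinv x] at k2
      have odd1 := hodd (x * x)
      rw [hT2 x, hμ] at odd1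
      have odd2 := hodd (τ x)
      rw [hτinv x] at odd2
      have h3 := hT3 x
      have h5 : (4 : ℂ) * f x ^ 2 = 0 := by
        linear_combination (-1 : ℂ) * k1 - (μ x) ^ 2 * k2 - c * odd1
          - (2 * (μ x) ^ 2 * (f (τ x) - μ (τ x) * f x)) * odd2
          + (c * μ x) * h3
          + (μ x * c * f (τ x * x) - 2 * f x ^ 2 * (μ x * μ (τ x) + 1)) * hμ1 x
      have h6 : f x ^ 2 = 0 := by linear_combination h5 / 4
      exact sq_eq_zero_iff.mp h6
    exact hf0 (funext hzero)
  have hfz₀ : f z₀ ≠ 0 := by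
    intro h0
    refine claim1 (f (x₀ * z₀) / f x₀) (fun u => ?_)
    have h1 := hD u x₀
    rw [h0, mul_zero] at h1
    rw [div_mul_eq_mul_div, eq_div_iff hx₀]
    linear_combination -h1
  have hFz₀ : f (z₀ * z₀) = 0 := by
    by_contra h0
    refine claim1 (f (z₀ * z₀) / f z₀) (fun u => ?_)
    rw [div_mul_eq_mul_div, eq_div_iff hfz₀]
    apply mul_left_cancel₀ h0
    linear_combination -hKey u
  have hfive : ∀ x, f (x * z₀ * z₀) = -(f z₀ * f x) := by
    intro x
    have h1 := hH x
    rw [hFz₀] at h1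
    have h2 : f z₀ * f (x * z₀ * z₀) = f z₀ * -(f z₀ * f x) := by
      linear_combination h1 / 2
    exact mul_left_cancel₀ hfz₀ h2
  refine ⟨hodd, hfz₀, hFz₀, fun x => ?_,
      fun x => by rw [← mul_assoc]; exact hfive x, fun x => ?_⟩
  · have h1 := hf x z₀
    apply mul_left_cancel₀ (hμnz z₀)
    linear_combination h1 + hfive x - f x * f z₀ * hμ1 z₀
  · have h1 := hD x z₀
    rw [hFz₀] at h1
    have h2 : (μ z₀ * f z₀) * f (x * τ z₀) = (μ z₀ * f z₀) * (-(μ (τ z₀) * f (x * z₀))) := by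
      linear_combination -h1 + f z₀ * f (x * z₀) * hμ1 z₀
    have h2' := mul_left_cancel₀ (mul_ne_zero (hμnz z₀) hfz₀) h2
    have h3 := hodd (τ x * z₀)
    rw [hT4 x, hμ, h2'] at h3
    linear_combination μ x * h3 + f (x * z₀) * μ z₀ * μ (τ z₀) * hμ1 x + f (x * z₀) * hμ1 z₀
end

section
/- If f: S → ℂ is a nonzero solution of μ(y)f(xτ(y)z₀) − f(xyz₀) = 2f(x)f(y), then the function g(x) := f(xz₀)/f(z₀) satisfies the μ-d'Alembert equation g(xy) + μ(y)g(xτ(y)) = 2g(x)g(y), and the pair (f, g) satisfies the sine addition law f(xy) = f(x)g(y) + f(y)g(x) for all x,y ∈ S. -/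
theorem stmt_13 {S : Type*} [Semigroup S] (τ : S → S)
    (hτinv : ∀ x, τ (τ x) = x)
    (hτ : (∀ x y, τ (x * y) = τ x * τ y) ∨ (∀ x y, τ (x * y) = τ y * τ x))
    (μ : S → ℂ) (hμ : ∀ x y, μ (x * y) = μ x * μ y)
    (hμτ : ∀ x, μ (x * τ x) = 1)
    (z₀ : S) (hz₀ : ∀ x, z₀ * x = x * z₀)
    (f : S → ℂ) (hf0 : f ≠ 0) (hf : ∀ x y, μ y * f (x * τ y * z₀) - f (x * y * z₀) = 2 * f x * f y) :
    (∀ x y, (fun x => f (x * z₀) / f z₀) (x * y) + μ y * (fun x => f (x * z₀) / f z₀) (x * τ y) =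
      2 * (fun x => f (x * z₀) / f z₀) x * (fun x => f (x * z₀) / f z₀) y) ∧
    (∀ x y, f (x * y) = f x * (fun x => f (x * z₀) / f z₀) y +
      f y * (fun x => f (x * z₀) / f z₀) x) := by
  have hμ2 : ∀ y, μ y * μ (τ y) = 1 := fun y => by rw [← hμ, hμτ]
  obtain ⟨a, ha⟩ : ∃ a, f a ≠ 0 := by
    by_contra h
    push_neg at h
    exact hf0 (funext fun x => h x)
  -- oddness : μ y * f (τ y) = - f y
  have odd : ∀ y, μ y * f (τ y) = - f y := by
    intro y
    have h2 := hf a (τ y)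
    rw [hτinv] at h2
    have h1 := hf a y
    have key : f a * (f y + μ y * f (τ y)) = 0 := by
      linear_combination (-(μ y * h2) - h1 + f (a * y * z₀) * hμ2 y) / 2
    rcases mul_eq_zero.mp key with h | h
    · exact absurd h ha
    · linear_combination h
  -- τ z₀ commutes with everything
  have tcomm : ∀ b, τ z₀ * b = b * τ z₀ := by
    intro b
    rcases hτ with h | h
    · conv_lhs => rw [← hτinv b]
      rw [← h, hz₀, h, hτinv]
    · conv_lhs => rw [← hτinv b]
      rw [← h, ← hz₀, h, hτinv]
  have hτz : ∀ y, τ (y * z₀) = τ y * τ z₀ := by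
    intro y
    rcases hτ with h | h
    · exact h y z₀
    · rw [h y z₀]; exact tcomm (τ y)
  have hswap : ∀ u v : S, u * z₀ * v = u * v * z₀ := by
    intro u v
    rw [mul_assoc, hz₀, ← mul_assoc]
  -- key identity (11)
  have key11 : ∀ x y, f x * f (y * z₀) = f (x * z₀) * f y + f z₀ * (μ y * f (x * τ y)) := by
    intro x y
    have e6 := hf (x * z₀) y
    rw [hswap x (τ y), hswap x y] at e6
    have e9 := hf x (y * z₀)
    rw [hτz y, hμ y z₀, ← mul_assoc x (τ y) (τ z₀), ← mul_assoc x y z₀] at e9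
    have e10 := hf (x * τ y) z₀
    linear_combination (μ y * e10 + e6 - e9) / 2
  -- f z₀ ≠ 0
  have hN : f z₀ ≠ 0 := by
    intro h0
    have hc : ∀ x, f a * f (x * z₀) = f (a * z₀) * f x := by
      intro x
      have k := key11 a x
      rw [h0, zero_mul, add_zero] at k
      exact k
    have hb : f (a * z₀) ≠ 0 := by
      intro hb0
      have e1 : f (a * τ a * z₀) = 0 := by
        have := hc (a * τ a)
        rw [hb0, zero_mul] at this
        exact (mul_eq_zero.mp this).resolve_left ha
      have e2 : f (a * a * z₀) = 0 := by
        have := hc (a * a)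
        rw [hb0, zero_mul] at this
        exact (mul_eq_zero.mp this).resolve_left ha
      have h2 := hf a a
      rw [e1, e2] at h2
      have h5 : f a * f a = 0 := by linear_combination -h2 / 2
      exact ha (mul_self_eq_zero.mp h5)
    have hx : ∀ x, f x = 0 := by
      intro x
      have h3 := hf z₀ x
      rw [hz₀ (τ x), hz₀ x, h0] at h3
      have m1 := hc (τ x * z₀)
      have m2 := hc (τ x)
      have m3 := hc (x * z₀)
      have m4 := hc x
      have key : f (a * z₀) * f (a * z₀) * (μ x * f (τ x) - f x) = 0 := by
        linear_combination (f a * f a) * h3 - μ x * f (a * z₀) * m2 - μ x * f a * m1 +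
          f (a * z₀) * m4 + f a * m3
      have h6 : μ x * f (τ x) - f x = 0 := by
        rcases mul_eq_zero.mp key with h' | h'
        · exact absurd (mul_self_eq_zero.mp h') hb
        · exact h'
      linear_combination (odd x - h6) / 2
    exact ha (hx a)
  have hμz : μ z₀ ≠ 0 := left_ne_zero_of_mul_eq_one (hμ2 z₀)
  -- f (τ z₀ * z₀) = 0
  have hz0t : f (τ z₀ * z₀) = 0 := by
    have k := key11 z₀ z₀
    rw [hz₀ (τ z₀)] at k
    have h1 : f z₀ * (μ z₀ * f (τ z₀ * z₀)) = 0 := by linear_combination -k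
    rcases mul_eq_zero.mp h1 with h | h
    · exact absurd h hN
    rcases mul_eq_zero.mp h with h | h
    · exact absurd h hμz
    · exact h
  -- identity (28)
  have e28 : ∀ x y, f (x * z₀) * f (y * z₀) =
      f (x * z₀ * z₀) * f y + f z₀ * f (x * y * z₀) + 2 * f z₀ * (f x * f y) := by
    intro x y
    have k := key11 (x * z₀) y
    rw [hswap x (τ y)] at k
    have h := hf x y
    linear_combination k + f z₀ * h
  -- identity (31)
  have e31 : ∀ x y, f (x * z₀) * (μ y * f (τ y * z₀) - f (y * z₀)) =
      -2 * f y * (f (x * z₀ * z₀) + f z₀ * f x) := by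
    intro x y
    have A := key11 (x * z₀) (τ y)
    rw [hτinv y, hswap x y] at A
    have B := e28 x y
    linear_combination μ y * A - B + f (x * z₀ * z₀) * odd y + f z₀ * f (x * y * z₀) * hμ2 y
  -- identity (35)
  have e35 : ∀ x, f (z₀ * z₀) * f (x * z₀) = 2 * f z₀ * (f (x * z₀ * z₀) + f z₀ * f x) := by
    intro x
    have h := e31 x z₀
    rw [hz0t] at h
    linear_combination -h
  -- f (τ z₀ * z₀ * z₀)
  have hq : f (τ z₀ * z₀ * z₀) = -(f z₀ * f (τ z₀)) := by
    have h := e35 (τ z₀)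
    rw [hz0t, mul_zero] at h
    have h2 := (mul_eq_zero.mp h.symm).resolve_left (mul_ne_zero two_ne_zero hN)
    linear_combination h2
  -- f (z₀ * z₀ * z₀)
  have hz3 : f (z₀ * z₀ * z₀) = -(f z₀ * f z₀) := by
    have h := hf z₀ z₀
    rw [hz₀ (τ z₀), hq] at h
    linear_combination -h - f z₀ * odd z₀
  -- f (z₀ * z₀) = 0
  have hs : f (z₀ * z₀) = 0 := by
    have h : f (z₀ * z₀) * f (z₀ * z₀) = 0 := by
      linear_combination e35 z₀ + 2 * f z₀ * hz3
    exact mul_self_eq_zero.mp h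
  -- f (x z₀²) = - f z₀ * f x
  have hψ : ∀ x, f (x * z₀ * z₀) = -(f z₀ * f x) := by
    intro x
    have h := e35 x
    rw [hs, zero_mul] at h
    have h2 := (mul_eq_zero.mp h.symm).resolve_left (mul_ne_zero two_ne_zero hN)
    linear_combination h2
  -- sine addition law (multiplied through by f z₀)
  have sine : ∀ x y, f z₀ * f (x * y) = f x * f (y * z₀) + f (x * z₀) * f y := by
    intro x y
    have e6 := hf (x * z₀) y
    rw [hswap x (τ y), hswap x y, hψ (x * τ y), hψ (x * y)] at e6
    linear_combination e6 - key11 x y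
  -- d'Alembert (multiplied through)
  have dal : ∀ x y, f z₀ * (f (x * y * z₀) + μ y * f (x * τ y * z₀)) =
      2 * (f (x * z₀) * f (y * z₀)) := by
    intro x y
    have h1 := hf x y
    have h2 := e28 x y
    rw [hψ x] at h2
    linear_combination f z₀ * h1 - 2 * h2
  refine ⟨fun x y => ?_, fun x y => ?_⟩
  · show f (x * y * z₀) / f z₀ + μ y * (f (x * τ y * z₀) / f z₀) =
      2 * (f (x * z₀) / f z₀) * (f (y * z₀) / f z₀)
    field_simp
    linear_combination dal x y
  · show f (x * y) = f x * (f (y * z₀) / f z₀) + f y * (f (x * z₀) / f z₀)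
    field_simp
    linear_combination sine x y
end

section
/- The nonzero solutions f: S → ℂ of μ(y)f(xτ(y)z₀) − f(xyz₀) = 2f(x)f(y) are exactly the functions f = χ(z₀)·(μ·χ∘τ − χ)/2 where χ: S → ℂ is multiplicative with χ(z₀) ≠ 0 and μ(z₀)χ(τ(z₀)) = −χ(z₀). -/
theorem stmt_15 {S : Type*} [Semigroup S] (τ : S → S)
    (hτinv : ∀ x, τ (τ x) = x)
    (hτ : (∀ x y, τ (x * y) = τ x * τ y) ∨ (∀ x y, τ (x * y) = τ y * τ x))
    (μ : S → ℂ) (hμ : ∀ x y, μ (x * y) = μ x * μ y)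
    (hμτ : ∀ x, μ (x * τ x) = 1)
    (z₀ : S) (hz₀ : ∀ x, z₀ * x = x * z₀)
    (f : S → ℂ) :
    (f ≠ 0 ∧ ∀ x y, μ y * f (x * τ y * z₀) - f (x * y * z₀) = 2 * f x * f y) ↔
    ∃ χ : S → ℂ, (∀ x y, χ (x * y) = χ x * χ y) ∧ χ z₀ ≠ 0 ∧
      μ z₀ * χ (τ z₀) = -χ z₀ ∧
      ∀ x, f x = χ z₀ * (μ x * χ (τ x) - χ x) / 2 := by
  have hμτ' : ∀ x, μ x * μ (τ x) = 1 := by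
    intro x; have := hμτ x; rwa [hμ] at this
  have hμne : ∀ x, μ x ≠ 0 := by
    intro x h
    have := hμτ' x
    rw [h, zero_mul] at this
    exact one_ne_zero this.symm
  constructor
  · rintro ⟨hf0, hE⟩
    obtain ⟨x₀, hx₀⟩ := Function.ne_iff.mp hf0
    simp only [Pi.zero_apply] at hx₀
    -- τ z₀ is central
    have htz : ∀ x, τ z₀ * x = x * τ z₀ := by
      intro x
      rcases hτ with h | h
      · have e : τ (z₀ * τ x) = τ (τ x * z₀) := by rw [hz₀]
        rw [h, h, hτinv] at e
        exact e
      · have e : τ (τ x * z₀) = τ (z₀ * τ x) := by rw [hz₀]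
        rw [h, h, hτinv] at e
        exact e
    have hkey : ∀ x y, x * τ (y * z₀) = x * τ y * τ z₀ := by
      intro x y
      rcases hτ with h | h
      · rw [h, mul_assoc]
      · rw [h, htz (τ y), ← mul_assoc, mul_assoc]
    -- identity (3)
    have h3 : ∀ x y, μ y * f (x * τ y) * f z₀ = f x * f (y * z₀) - f (x * z₀) * f y := by
      intro x y
      have hA := hE x (y * z₀)
      have hB := hE (x * z₀) y
      have hC := hE (x * τ y) z₀
      have e1 : x * τ (y * z₀) * z₀ = x * τ y * τ z₀ * z₀ := by rw [hkey]
      have e2 : x * (y * z₀) * z₀ = x * y * z₀ * z₀ := by rw [mul_assoc x y z₀]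
      have e3 : x * z₀ * τ y * z₀ = x * τ y * z₀ * z₀ := by
        rw [mul_assoc x z₀ (τ y), hz₀ (τ y), ← mul_assoc]
      have e4 : x * z₀ * y * z₀ = x * y * z₀ * z₀ := by
        rw [mul_assoc x z₀ y, hz₀ y, ← mul_assoc]
      rw [e1, e2, hμ] at hA
      rw [e3, e4] at hB
      linear_combination (1/2) * hA - (1/2) * hB - (μ y / 2) * hC
    by_cases hN : f z₀ = 0
    · -- degenerate case: contradiction
      exfalso
      have hprop : ∀ x y, f x * f (y * z₀) = f (x * z₀) * f y := by
        intro x y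
        have h := h3 x y
        rw [hN] at h
        linear_combination -h
      have hd : ∀ y, f (y * z₀) = (f (x₀ * z₀) / f x₀) * f y := by
        intro y
        have h := hprop x₀ y
        field_simp
        linear_combination h
      set lam := f (x₀ * z₀) / f x₀ with hlamdef
      have hE' : ∀ x y, lam * (μ y * f (x * τ y) - f (x * y)) = 2 * f x * f y := by
        intro x y
        have h := hE x y
        rw [hd (x * τ y), hd (x * y)] at h
        linear_combination h
      have hlam : lam ≠ 0 := by
        intro h0
        have h := hE' x₀ x₀
        rw [h0, zero_mul] at h
        have : f x₀ * f x₀ = 0 := by linear_combination -h/2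
        exact hx₀ (mul_self_eq_zero.mp this)
      have hdag : ∀ y, μ y * f (τ y) = f y := by
        intro y
        have h := hE' z₀ y
        rw [hz₀ (τ y), hz₀ y, hd (τ y), hd y, hN] at h
        have h2 : lam * lam * (μ y * f (τ y) - f y) = 0 := by linear_combination h
        have h3' := (mul_eq_zero.mp h2).resolve_left (mul_ne_zero hlam hlam)
        linear_combination h3'
      have hA := hE' x₀ x₀
      have hB := hE' x₀ (τ x₀)
      rw [hτinv] at hB
      have hB' : lam * (f (x₀ * x₀) - μ x₀ * f (x₀ * τ x₀)) = 2 * f x₀ * f x₀ := by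
        linear_combination μ x₀ * hB - lam * f (x₀ * x₀) * (hμτ' x₀) + 2 * f x₀ * (hdag x₀)
      have hz : f x₀ * f x₀ = 0 := by linear_combination (-1/4) * hA - (1/4) * hB'
      exact hx₀ (mul_self_eq_zero.mp hz)
    · -- main case : f z₀ ≠ 0
      have h4 : ∀ x y, f z₀ * f (x * y * z₀) + f z₀ * (2 * f x * f y) =
          f (x * z₀) * f (y * z₀) - f (x * z₀ * z₀) * f y := by
        intro x y
        have hExy := hE x y
        have h3' := h3 (x * z₀) y
        have e : x * z₀ * τ y = x * τ y * z₀ := by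
          rw [mul_assoc x z₀ (τ y), hz₀ (τ y), ← mul_assoc]
        rw [e] at h3'
        linear_combination h3' - f z₀ * hExy
      have h5 : ∀ x, 2 * f z₀ * f (x * z₀ * z₀) =
          f (x * z₀) * f (z₀ * z₀) - 2 * (f z₀)^2 * f x := by
        intro x
        have h := h4 x z₀
        linear_combination h
      have h6 : ∀ x y, 2 * (f z₀)^2 * f (x * y * z₀) =
          2 * f z₀ * (f (x * z₀) * f (y * z₀)) - f (z₀ * z₀) * f (x * z₀) * f y
            - 2 * (f z₀)^2 * (f x * f y) := by
        intro x y
        linear_combination 2 * f z₀ * (h4 x y) - f y * (h5 x)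
      have hP : f (z₀ * z₀) = 0 := by
        by_contra hPne
        have key : ∀ y, f (z₀ * z₀) * (f z₀ * f (y * z₀) - f (z₀ * z₀) * f y) = 0 := by
          intro y
          have h6' := h6 z₀ y
          have e : z₀ * y * z₀ = y * z₀ * z₀ := by rw [hz₀ y]
          rw [e] at h6'
          linear_combination f z₀ * (h5 y) - h6'
        have hprop : ∀ y, f z₀ * f (y * z₀) = f (z₀ * z₀) * f y := by
          intro y
          have h := (mul_eq_zero.mp (key y)).resolve_left hPne
          linear_combination h
        have hzero : ∀ x y, f (x * y) = 0 := by
          intro x y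
          have h := h3 x (τ y)
          rw [hτinv] at h
          have h2 : μ (τ y) * f (x * y) * (f z₀ * f z₀) = 0 := by
            linear_combination f z₀ * h + f x * (hprop (τ y)) - f (τ y) * (hprop x)
          simpa [mul_eq_zero, hμne (τ y), hN] using h2
        have h := hE x₀ x₀
        rw [hzero (x₀ * τ x₀) z₀, hzero (x₀ * x₀) z₀] at h
        have : f x₀ * f x₀ = 0 := by linear_combination -h/2
        exact hx₀ (mul_self_eq_zero.mp this)
      have h7 : ∀ x, f (x * z₀ * z₀) = -f z₀ * f x := by
        intro x
        have h := h5 x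
        rw [hP] at h
        have h2 : (2 * f z₀) * f (x * z₀ * z₀) = (2 * f z₀) * (-f z₀ * f x) := by
          linear_combination h
        exact mul_left_cancel₀ (mul_ne_zero two_ne_zero hN) h2
      have h9 : ∀ x y, f z₀ * f (x * y * z₀) = f (x * z₀) * f (y * z₀)
          - f z₀ * (f x * f y) := by
        intro x y
        have h := h6 x y
        rw [hP] at h
        have h2 : (2 * f z₀) * (f z₀ * f (x * y * z₀)) =
            (2 * f z₀) * (f (x * z₀) * f (y * z₀) - f z₀ * (f x * f y)) := by
          linear_combination h
        exact mul_left_cancel₀ (mul_ne_zero two_ne_zero hN) h2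
      have hiv : ∀ y, μ y * f (τ y * z₀) = f (y * z₀) := by
        intro y
        have h := h3 z₀ y
        rw [hz₀ (τ y), hP] at h
        have h2 : μ y * f (τ y * z₀) * f z₀ = f (y * z₀) * f z₀ := by
          linear_combination h
        exact mul_right_cancel₀ hN h2
      have hiii : ∀ y, μ y * f (τ y) = -f y := by
        intro y
        have h := hE z₀ y
        have e1 : z₀ * τ y * z₀ = τ y * z₀ * z₀ := by rw [hz₀ (τ y)]
        have e2 : z₀ * y * z₀ = y * z₀ * z₀ := by rw [hz₀ y]
        rw [e1, e2, h7 (τ y), h7 y] at h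
        have h2 : μ y * f (τ y) * f z₀ = (-f y) * f z₀ := by linear_combination -h
        exact mul_right_cancel₀ hN h2
      have h8 : ∀ x y, f z₀ * f (x * y) = f x * f (y * z₀) + f (x * z₀) * f y := by
        intro x y
        have h := h3 x (τ y)
        rw [hτinv] at h
        linear_combination μ y * h - f (x * y) * f z₀ * (hμτ' y) + f x * (hiv y)
          - f (x * z₀) * (hiii y)
      obtain ⟨c, hc⟩ : ∃ c : ℂ, c ^ 2 = -f z₀ :=
        ⟨(-f z₀) ^ (((2 : ℕ) : ℂ))⁻¹, Complex.cpow_nat_inv_pow _ two_ne_zero⟩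
      have hcne : c ≠ 0 := by
        intro h0
        rw [h0] at hc
        apply hN
        have : (0 : ℂ) = -f z₀ := by simpa using hc
        linear_combination this
      have hfz : f z₀ = -c ^ 2 := by linear_combination hc
      refine ⟨fun x => -((f (x * z₀) + c * f x) / c ^ 2), ?_, ?_, ?_, ?_⟩
      · intro x y
        show -((f (x * y * z₀) + c * f (x * y)) / c ^ 2) =
          -((f (x * z₀) + c * f x) / c ^ 2) * -((f (y * z₀) + c * f y) / c ^ 2)
        have h9' := h9 x y
        have h8' := h8 x y
        rw [hfz] at h9' h8'
        field_simp
        linear_combination c * h8' + h9'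
      · show -((f (z₀ * z₀) + c * f z₀) / c ^ 2) ≠ 0
        rw [hP, hfz]
        have : -((0 + c * -c ^ 2) / c ^ 2) = c := by field_simp; ring
        rw [this]
        exact hcne
      · show μ z₀ * -((f (τ z₀ * z₀) + c * f (τ z₀)) / c ^ 2) =
          - -((f (z₀ * z₀) + c * f z₀) / c ^ 2)
        have hiv0 := hiv z₀
        have hiii0 := hiii z₀
        field_simp
        linear_combination (-(c:ℂ)) * hiii0 - hiv0 - 2 * hP
      · intro x
        show f x = -((f (z₀ * z₀) + c * f z₀) / c ^ 2) *
          (μ x * -((f (τ x * z₀) + c * f (τ x)) / c ^ 2) -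
            -((f (x * z₀) + c * f x) / c ^ 2)) / 2
        rw [hP, hfz]
        have hXz : -(((0:ℂ) + c * -c ^ 2) / c ^ 2) = c := by field_simp; ring
        rw [hXz]
        have hivx := hiv x
        have hiiix := hiii x
        field_simp
        linear_combination c * hiiix + hivx
  · rintro ⟨χ, hχ, hχz₀, hχτz₀, hform⟩
    have hχτm : ∀ a b, χ (τ (a * b)) = χ (τ a) * χ (τ b) := by
      rcases hτ with h | h <;> intro a b <;> rw [h, hχ] <;> ring
    have hμτm : ∀ a b, μ (τ (a * b)) = μ (τ a) * μ (τ b) := by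
      rcases hτ with h | h <;> intro a b <;> rw [h, hμ] <;> ring
    constructor
    · intro h0
      have h := hform z₀
      rw [h0] at h
      simp only [Pi.zero_apply] at h
      rw [hχτz₀] at h
      have : χ z₀ * χ z₀ = 0 := by linear_combination h
      exact hχz₀ (mul_self_eq_zero.mp this)
    · intro x y
      rw [hform x, hform y, hform (x * τ y * z₀), hform (x * y * z₀)]
      simp only [hμ, hχ, hχτm, hμτm, hτinv]
      linear_combination (-(χ z₀^2/2) * μ x * χ (τ x) * χ y) * (hμτ' y) +
        ((χ z₀/2) * μ x * (χ (τ x) * χ y * (μ y * μ (τ y)) - μ y * χ (τ x) * χ (τ y))) * hχτz₀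
end

section
/- If f: S → ℂ is a nonzero solution of the variant Van Vleck equation μ(y)f(τ(y)xz₀) − f(xyz₀) = 2f(x)f(y) for all x,y ∈ S, then f(z₀) ≠ 0. -/
theorem stmt_16 {S : Type*} [Semigroup S] (τ : S → S)
    (hτinv : ∀ x, τ (τ x) = x)
    (hτ : (∀ x y, τ (x * y) = τ x * τ y) ∨ (∀ x y, τ (x * y) = τ y * τ x))
    (μ : S → ℂ) (hμ : ∀ x y, μ (x * y) = μ x * μ y)
    (hμτ : ∀ x, μ (x * τ x) = 1)
    (z₀ : S) (hz₀ : ∀ x, z₀ * x = x * z₀)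
    (f : S → ℂ) (hf0 : f ≠ 0) (hf : ∀ x y, μ y * f (τ y * x * z₀) - f (x * y * z₀) = 2 * f x * f y) :
    f z₀ ≠ 0 := by
  intro hfz
  obtain ⟨a, ha⟩ : ∃ a, f a ≠ 0 := by
    by_contra h
    push_neg at h
    exact hf0 (funext h)
  have hμ1 : ∀ x, μ x * μ (τ x) = 1 := fun x => by rw [← hμ]; exact hμτ x
  -- τ (y * z₀) = τ z₀ * τ y in both cases
  have hτz : ∀ y, τ (y * z₀) = τ z₀ * τ y := by
    intro y
    rcases hτ with h | h
    · rw [← hz₀, h]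
    · rw [h]
  -- dagger
  have dagger : ∀ x, μ z₀ * f (τ z₀ * x * z₀) = f (x * z₀ * z₀) := by
    intro x
    have h := hf x z₀
    rw [hfz] at h
    linear_combination h
  -- P
  have P : ∀ x y, f (x * z₀) * f y = f x * f (y * z₀) := by
    intro x y
    have h1 := hf (x * z₀) y
    have h2 := hf x (y * z₀)
    rw [hτz, hμ] at h2
    have hd := dagger (τ y * x)
    simp only [mul_assoc, hz₀] at h1 h2 hd
    linear_combination (h2 - h1 - μ y * hd) / 2
  set c := f (a * z₀) / f a with hcdef
  have hc : ∀ x, f (x * z₀) = c * f x := by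
    intro x
    have h := P x a
    rw [hcdef, div_mul_eq_mul_div, eq_div_iff ha]
    linear_combination h
  have hcne : c ≠ 0 := by
    intro h0
    have h := hf a a
    rw [hc, hc, h0] at h
    have h2 : f a * f a = 0 := by linear_combination - h / 2
    exact ha (mul_self_eq_zero.mp h2)
  have hτf : ∀ y, μ y * f (τ y) = f y := by
    intro y
    have h := hf z₀ y
    simp only [hz₀, hc, hfz] at h
    have h2 : c * c * (μ y * f (τ y)) = c * c * f y := by linear_combination h
    exact mul_left_cancel₀ (mul_ne_zero hcne hcne) h2
  -- the reduced equation
  have R : ∀ x y, c * (μ y * f (τ y * x)) - c * f (x * y) = 2 * f x * f y := by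
    intro x y
    have h := hf x y
    rw [hc, hc] at h
    linear_combination h
  have R' : ∀ x y, c * f (y * x) - c * (μ y * f (x * τ y)) = 2 * f x * f y := by
    intro x y
    have h := R x (τ y)
    rw [hτinv] at h
    have h2 := hτf y
    have h3 := hμ1 y
    linear_combination μ y * h + 2 * f x * h2 - c * f (y * x) * h3
  have key : f a * f a = 0 := by
    rcases hτ with hh | hh
    · -- homomorphism case
      have P2 : ∀ x y, c * (μ y * f (x * τ y)) - c * f (y * x) = 2 * f x * f y := by
        intro x y
        have h := R (τ y) (τ x)
        rw [hτinv] at h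
        rw [show τ y * τ x = τ (y * x) from (hh y x).symm] at h
        have h3x := hμ1 x
        have h2x := hτf x
        have h2y := hτf y
        have hyx := hτf (y * x)
        rw [hμ] at hyx
        linear_combination μ x * μ y * h - c * μ y * f (x * τ y) * h3x + c * hyx +
          2 * ((μ x * f (τ x)) * h2y + f y * h2x)
      have h1 := R' a a
      have h2 := P2 a a
      linear_combination (h1 + h2) / (-4)
    · -- anti-homomorphism case
      have P2 : ∀ x y, c * (μ y * f (x * τ y)) - c * f (x * y) = 2 * f x * f y := by
        intro x y
        have h := R (τ y) (τ x)
        rw [hτinv] at h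
        rw [show τ y * τ x = τ (x * y) from (hh x y).symm] at h
        have h3x := hμ1 x
        have h2x := hτf x
        have h2y := hτf y
        have hxy := hτf (x * y)
        rw [hμ] at hxy
        linear_combination μ x * μ y * h - c * μ y * f (x * τ y) * h3x + c * hxy +
          2 * ((μ x * f (τ x)) * h2y + f y * h2x)
      have S : ∀ x y, c * f (y * x) - c * f (x * y) = 4 * f x * f y := by
        intro x y
        linear_combination R' x y + P2 x y
      linear_combination (S a a) / (-4)
  exact ha (mul_self_eq_zero.mp key)
end

section
/- If f: S → ℂ is a nonzero solution of μ(y)f(τ(y)xz₀) − f(xyz₀) = 2f(x)f(y) for all x,y ∈ S, then f(x) = −μ(x)f(τ(x)), μ(y)f(τ(y)x) = −μ(x)f(τ(x)y), f(xτ(z₀)z₀) = μ(τ(z₀))f(z₀)f(x), f(xz₀²) = −f(z₀)f(x), μ(x)f(τ(x)z₀) = f(xz₀), and f(z₀²) = f(z₀τ(z₀)) = 0. -/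
theorem stmt_17 {S : Type*} [Semigroup S] (τ : S → S)
    (hτinv : ∀ x, τ (τ x) = x)
    (hτ : (∀ x y, τ (x * y) = τ x * τ y) ∨ (∀ x y, τ (x * y) = τ y * τ x))
    (μ : S → ℂ) (hμ : ∀ x y, μ (x * y) = μ x * μ y)
    (hμτ : ∀ x, μ (x * τ x) = 1)
    (z₀ : S) (hz₀ : ∀ x, z₀ * x = x * z₀)
    (f : S → ℂ) (hf0 : f ≠ 0) (hf : ∀ x y, μ y * f (τ y * x * z₀) - f (x * y * z₀) = 2 * f x * f y) :
    (∀ x, f x = -(μ x * f (τ x))) ∧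
    (∀ x y, μ y * f (τ y * x) = -(μ x * f (τ x * y))) ∧
    (∀ x, f (x * τ z₀ * z₀) = μ (τ z₀) * f z₀ * f x) ∧
    (∀ x, f (x * (z₀ * z₀)) = -(f z₀ * f x)) ∧
    (∀ x, μ x * f (τ x * z₀) = f (x * z₀)) ∧
    f (z₀ * z₀) = 0 ∧ f (z₀ * τ z₀) = 0 := by
  obtain ⟨a, ha⟩ : ∃ x, f x ≠ 0 := by
    by_contra h
    push_neg at h
    exact hf0 (funext h)
  have hμτ1 : ∀ x, μ x * μ (τ x) = 1 := fun x => by rw [← hμ]; exact hμτ x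
  have hμne : ∀ x, μ x ≠ 0 := by
    intro x hx
    have h := hμτ1 x
    rw [hx, zero_mul] at h
    exact one_ne_zero h.symm
  -- centrality of τ z₀
  have hτz₀c : ∀ x, τ z₀ * x = x * τ z₀ := by
    intro x
    rcases hτ with hh | ha'
    · calc τ z₀ * x = τ z₀ * τ (τ x) := by rw [hτinv]
        _ = τ (z₀ * τ x) := (hh z₀ (τ x)).symm
        _ = τ (τ x * z₀) := by rw [hz₀]
        _ = τ (τ x) * τ z₀ := hh (τ x) z₀
        _ = x * τ z₀ := by rw [hτinv]
    · calc τ z₀ * x = τ z₀ * τ (τ x) := by rw [hτinv]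
        _ = τ (τ x * z₀) := (ha' (τ x) z₀).symm
        _ = τ (z₀ * τ x) := by rw [hz₀]
        _ = τ (τ x) * τ z₀ := ha' z₀ (τ x)
        _ = x * τ z₀ := by rw [hτinv]
  -- claim (1): oddness
  have key : ∀ x, f x + μ x * f (τ x) = 0 := by
    intro x
    have k : (f x + μ x * f (τ x)) * (f x + μ x * f (τ x)) = 0 := by
      have I1 := hf (τ x) (τ x)
      have I2 := hf x (τ x)
      have I3 := hf (τ x) x
      have I4 := hf x x
      rw [hτinv] at I1 I2
      linear_combination (-(I4 + μ x * I2 + μ x * I3 + μ x * μ x * I1))/2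
        + (f (x*x*z₀) + μ x * f (x * τ x * z₀))/2 * hμτ1 x
    exact mul_self_eq_zero.mp k
  have c1 : ∀ x, f x = -(μ x * f (τ x)) := fun x => eq_neg_of_add_eq_zero_left (key x)
  have codd : ∀ x, μ x * f (τ x) = -(f x) := fun x => eq_neg_of_add_eq_zero_right (key x)
  have fτ : ∀ x, f (τ x) = -(μ (τ x) * f x) := by
    intro x
    have h := c1 (τ x)
    rwa [hτinv x] at h
  have slide : ∀ x, μ x * f (τ x * z₀) = -(μ z₀ * f (x * τ z₀)) := by
    intro x
    have h := c1 (τ x * z₀)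
    have harg : τ (τ x * z₀) = x * τ z₀ := by
      rcases hτ with hh | ha'
      · rw [hh, hτinv]
      · rw [ha', hτinv]; exact hτz₀c x
    rw [harg, hμ] at h
    linear_combination μ x * h - (μ z₀ * f (x * τ z₀)) * hμτ1 x
  -- the four branch facts
  obtain ⟨F1, F2, F3, C2⟩ :
      f (τ z₀ * z₀) = 0 ∧
      (∀ x y, f (x * τ z₀ * z₀) * f y = f x * f (y * τ z₀ * z₀)) ∧
      (∀ x y, (f (x * z₀) + μ z₀ * f (x * τ z₀)) * f y
          = f x * (f (y * z₀) + μ z₀ * f (y * τ z₀))) ∧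
      (∀ x y, μ y * f (τ y * x) = -(μ x * f (τ x * y))) := by
    rcases hτ with hhom | hanti
    · -- homomorphism case
      have star : ∀ x y z, μ z * f (τ z * x) * f y + f (x * y) * f z = f x * f (y * z) := by
        intro x y z
        have e1 := hf x (y * z)
        have e2 := hf (τ z * x) y
        have e3 := hf (x * y) z
        rw [hhom, hμ, mul_assoc (τ y) (τ z) x, ← mul_assoc x y z] at e1
        rw [← mul_assoc (τ z) x y] at e3
        linear_combination e1/2 - (μ z)/2 * e2 - e3/2
      have fyty : ∀ y, f y * f (y * τ y) = 0 := by
        intro y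
        have s := star y y (τ y)
        rw [hτinv] at s
        linear_combination -s + f (y * y) * fτ y
      have ceL : ∀ y, f y ≠ 0 → ∀ x, f (y * x) = f (x * y) := by
        intro y hy x
        have h0 : f (y * τ y) = 0 := (mul_eq_zero.mp (fyty y)).resolve_left hy
        have s := star x y (τ y)
        rw [hτinv, h0, mul_zero, fτ y] at s
        have h1 : (f (y * x) - f (x * y)) * (μ (τ y) * f y) = 0 := by linear_combination s
        rcases mul_eq_zero.mp h1 with h | h
        · exact sub_eq_zero.mp h
        · exact absurd h (mul_ne_zero (hμne (τ y)) hy)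
      have central : ∀ u v, f (u * v) = f (v * u) := by
        intro u v
        by_cases hu : f u = 0
        · by_cases hv : f v = 0
          · have s1 := star u v a
            rw [hu, hv] at s1
            have h1 : f (u * v) = 0 := by
              have : f (u * v) * f a = 0 := by linear_combination s1
              exact (mul_eq_zero.mp this).resolve_right ha
            have s2 := star v u a
            rw [hu, hv] at s2
            have h2 : f (v * u) = 0 := by
              have : f (v * u) * f a = 0 := by linear_combination s2
              exact (mul_eq_zero.mp this).resolve_right ha
            rw [h1, h2]
          · exact (ceL v hv u).symm
        · exact ceL u hu v
      have C2 : ∀ x y, μ y * f (τ y * x) = -(μ x * f (τ x * y)) := by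
        intro x y
        have h := c1 (τ x * y)
        rw [hhom, hτinv, hμ] at h
        have hc := central x (τ y)
        linear_combination μ x * h - μ y * f (x * τ y) * hμτ1 x - μ y * hc
      have F1 : f (τ z₀ * z₀) = 0 := by
        have s := star a (τ z₀) z₀
        rw [hτz₀c a, fτ z₀] at s
        have k : f a * f (τ z₀ * z₀) = 0 := by
          linear_combination -s - (f (a * τ z₀) * f z₀) * hμτ1 z₀
        exact (mul_eq_zero.mp k).resolve_left ha
      have F2 : ∀ x y, f (x * τ z₀ * z₀) * f y = f x * f (y * τ z₀ * z₀) := by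
        intro x y
        have s := star x (τ z₀ * z₀) y
        rw [F1, mul_zero, zero_add,
          show x * (τ z₀ * z₀) = x * τ z₀ * z₀ from (mul_assoc x (τ z₀) z₀).symm,
          show τ z₀ * z₀ * y = y * τ z₀ * z₀ from by
            rw [mul_assoc, hz₀ y, ← mul_assoc, hτz₀c y]] at s
        exact s
      have F3 : ∀ x y, (f (x * z₀) + μ z₀ * f (x * τ z₀)) * f y
          = f x * (f (y * z₀) + μ z₀ * f (y * τ z₀)) := by
        intro x y
        have s1 := star x y z₀
        have s2 := star x y (τ z₀)
        rw [hτz₀c x] at s1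
        rw [hτinv, hz₀ x, fτ z₀] at s2
        linear_combination s1 + μ z₀ * s2 - (f (x * z₀) * f y - f (x * y) * f z₀) * hμτ1 z₀
      exact ⟨F1, F2, F3, C2⟩
    · -- anti-homomorphism case
      have C2 : ∀ x y, μ y * f (τ y * x) = -(μ x * f (τ x * y)) := by
        intro x y
        have h := c1 (τ y * x)
        rw [hanti, hτinv, hμ] at h
        linear_combination μ y * h - (μ x * f (τ x * y)) * hμτ1 y
      have V : ∀ x y, f x * f (y * z₀) = f (x * z₀) * f y + f z₀ * (μ y * f (τ y * x)) := by
        intro x y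
        have e1 := hf x (y * z₀)
        have e2 := hf (τ y * x) z₀
        have e3 := hf (x * z₀) y
        rw [hanti, hμ, mul_assoc (τ z₀) (τ y) x] at e1
        rw [← mul_assoc (τ y) x z₀, mul_assoc x z₀ y, hz₀ y] at e3
        linear_combination -e1/2 + (μ y)/2 * e2 + e3/2
      have Vτ : ∀ x y, f x * f (y * τ z₀)
          = f (x * τ z₀) * f y - f z₀ * μ (τ z₀) * (μ y * f (τ y * x)) := by
        intro x y
        have e1 := hf x (y * τ z₀)
        have e2 := hf (τ y * x) (τ z₀)
        have e3 := hf (x * τ z₀) y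
        rw [hanti, hτinv, hμ, mul_assoc z₀ (τ y) x] at e1
        rw [hτinv, fτ z₀] at e2
        rw [← mul_assoc (τ y) x (τ z₀), mul_assoc x (τ z₀) y, hτz₀c y] at e3
        linear_combination (-e1)/2 + (μ y)/2 * e2 + e3/2
      have F1 : f (τ z₀ * z₀) = 0 := by
        have v := V (τ z₀) a
        have harg : τ a * τ z₀ = τ (a * z₀) := by rw [← hanti z₀ a, hz₀ a]
        rw [harg, fτ z₀] at v
        have codd' := codd (a * z₀)
        rw [hμ] at codd'
        have k : μ z₀ * (f (τ z₀ * z₀) * f a) = 0 := by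
          linear_combination -μ z₀ * v - (f z₀ * f (a * z₀)) * hμτ1 z₀ - f z₀ * codd'
        have k2 := (mul_eq_zero.mp k).resolve_left (hμne z₀)
        exact (mul_eq_zero.mp k2).resolve_right ha
      have F3 : ∀ x y, (f (x * z₀) + μ z₀ * f (x * τ z₀)) * f y
          = f x * (f (y * z₀) + μ z₀ * f (y * τ z₀)) := by
        intro x y
        have v := V x y
        have w := Vτ x y
        linear_combination -v - μ z₀ * w + (f z₀ * (μ y * f (τ y * x))) * hμτ1 z₀
      have F2 : ∀ x y, f (x * τ z₀ * z₀) * f y = f x * f (y * τ z₀ * z₀) := by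
        intro x y
        have e5 := Vτ x (y * z₀)
        rw [hμ, show y * z₀ * τ z₀ = y * τ z₀ * z₀ from by
          rw [mul_assoc, ← hτz₀c z₀, ← mul_assoc]] at e5
        have t1 := C2 x (y * z₀)
        rw [hμ, ← mul_assoc (τ x) y z₀] at t1
        have e6 := V (x * τ z₀) y
        have t2 := C2 (x * τ z₀) y
        rw [hanti, hτinv, hμ, mul_assoc z₀ (τ x) y, hz₀ (τ x * y)] at t2
        linear_combination -e5 - e6 + f z₀ * μ (τ z₀) * t1 - f z₀ * t2
      exact ⟨F1, F2, F3, C2⟩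
  -- common part
  have hP2 : ∀ x, μ z₀ * f (x * τ z₀ * z₀) - f (x * z₀ * z₀) = 2 * f x * f z₀ := by
    intro x
    have e := hf x z₀
    rwa [hτz₀c x] at e
  have hP3 : ∀ y, μ y * f (τ y * z₀ * z₀) - f (y * z₀ * z₀) = 2 * f z₀ * f y := by
    intro y
    have e := hf z₀ y
    rwa [hz₀ y] at e
  have hD : ∀ x, f (x * z₀ * z₀) * f a = f x * f (a * z₀ * z₀) := by
    intro x
    linear_combination -f a * hP2 x + f x * hP2 a + μ z₀ * F2 x a
  have hDa : f (a * z₀ * z₀) = -(f z₀ * f a) := by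
    have k : (f (a * z₀ * z₀) + f z₀ * f a) * f a = 0 := by
      linear_combination (-(f a))/2 * hP3 a + (μ a)/2 * hD (τ a) + (f (a * z₀ * z₀))/2 * codd a
    exact eq_neg_of_add_eq_zero_left ((mul_eq_zero.mp k).resolve_right ha)
  have claim4' : ∀ x, f (x * z₀ * z₀) = -(f z₀ * f x) := by
    intro x
    have k2 : (f (x * z₀ * z₀) + f z₀ * f x) * f a = 0 := by
      linear_combination hD x + f x * hDa
    exact eq_neg_of_add_eq_zero_left ((mul_eq_zero.mp k2).resolve_right ha)
  have hPa : f (a * τ z₀ * z₀) = μ (τ z₀) * f z₀ * f a := by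
    linear_combination μ (τ z₀) * hP2 a - f (a * τ z₀ * z₀) * hμτ1 z₀ + μ (τ z₀) * hDa
  have claim3 : ∀ x, f (x * τ z₀ * z₀) = μ (τ z₀) * f z₀ * f x := by
    intro x
    have k3 : (f (x * τ z₀ * z₀) - μ (τ z₀) * f z₀ * f x) * f a = 0 := by
      linear_combination F2 x a + f x * hPa
    exact sub_eq_zero.mp ((mul_eq_zero.mp k3).resolve_right ha)
  have hBxz : ∀ x, f (x * z₀ * z₀) + μ z₀ * f (x * z₀ * τ z₀) = 0 := by
    intro x
    rw [show x * z₀ * τ z₀ = x * τ z₀ * z₀ from by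
      rw [mul_assoc, ← hτz₀c z₀, ← mul_assoc]]
    linear_combination claim4' x + μ z₀ * claim3 x + (f z₀ * f x) * hμτ1 z₀
  have h0 : ∀ x y, f (x * z₀) * (f (y * z₀) + μ z₀ * f (y * τ z₀)) = 0 := by
    intro x y
    linear_combination f y * hBxz x - F3 (x * z₀) y
  have hez : ∃ w, f (w * z₀) ≠ 0 := by
    by_contra h
    push_neg at h
    have e := hf a a
    rw [h (τ a * a), h (a * a)] at e
    have h2 : f a * f a = 0 := by linear_combination (-(1:ℂ))/2 * e
    exact ha (mul_self_eq_zero.mp h2)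
  obtain ⟨w, hw⟩ := hez
  have hB : ∀ y, f (y * z₀) + μ z₀ * f (y * τ z₀) = 0 := by
    intro y
    exact (mul_eq_zero.mp (h0 w y)).resolve_left hw
  have claim5 : ∀ x, μ x * f (τ x * z₀) = f (x * z₀) := by
    intro x
    linear_combination slide x - hB x
  have goal7 : f (z₀ * τ z₀) = 0 := by rw [← hτz₀c z₀]; exact F1
  have goal6 : f (z₀ * z₀) = 0 := by linear_combination hB z₀ - μ z₀ * goal7
  have goal4 : ∀ x, f (x * (z₀ * z₀)) = -(f z₀ * f x) := by
    intro x
    rw [← mul_assoc]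
    exact claim4' x
  exact ⟨c1, C2, claim3, goal4, claim5, goal6, goal7⟩
end

section
/- If f: S → ℂ is a nonzero solution of μ(y)f(τ(y)xz₀) − f(xyz₀) = 2f(x)f(y), then g(x) := f(xz₀)/f(z₀) is a nonzero solution of the variant d'Alembert equation g(xy) + μ(y)g(τ(y)x) = 2g(x)g(y), and the pair (f,g) satisfies the sine addition law f(xy) = f(x)g(y) + f(y)g(x) for all x,y ∈ S. -/
private lemma no_sol {S : Type*} [Semigroup S] (τ : S → S)
    (hτinv : ∀ x, τ (τ x) = x)
    (hτ : (∀ x y, τ (x * y) = τ x * τ y) ∨ (∀ x y, τ (x * y) = τ y * τ x))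
    (μ : S → ℂ) (hμ : ∀ x y, μ (x * y) = μ x * μ y)
    (hμτ : ∀ x, μ (x * τ x) = 1)
    (h : S → ℂ)
    (hA : ∀ x y, μ y * h (τ y * x) = h (x * y) + 2 * h x * h y) :
    ∀ x, h x = 0 := by
  by_contra hc
  push_neg at hc
  obtain ⟨a, ha⟩ := hc
  have hμ1 : ∀ x, μ x * μ (τ x) = 1 := fun x => by rw [← hμ]; exact hμτ x
  have hμ0 : ∀ x, μ x ≠ 0 := by
    intro x hx
    have h1 := hμ1 x
    rw [hx, zero_mul] at h1
    exact zero_ne_one h1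
  rcases hτ with hhom | hanti
  · -- homomorphism case
    have hC : ∀ x y z, h x * h (y * z) =
        h (x * y) * h z + h (x * z) * h y + 2 * h x * h y * h z := by
      intro x y z
      have e1 := hA x (y * z)
      rw [hhom y z, mul_assoc (τ y) (τ z) x, hμ y z, ← mul_assoc x y z] at e1
      have e2 := hA (τ z * x) y
      rw [mul_assoc (τ z) x y] at e2
      have e3 := hA (x * y) z
      have e4 := hA x z
      linear_combination (μ z * e2 + e3 + 2 * h y * e4 - e1) / 2
    have hD1 : ∀ x, h (x * x) = -2 * (h x * h x) := by
      intro x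
      have e := hC x x a
      have e2 : h a * (h (x * x) + 2 * (h x * h x)) = 0 := by linear_combination -e
      have e3 := (mul_eq_zero.mp e2).resolve_left ha
      linear_combination e3
    have hD2 : ∀ x, h (τ x * x) = 0 := by
      intro x
      have e := hA x x
      rw [hD1 x] at e
      have e2 : μ x * h (τ x * x) = 0 := by linear_combination e
      exact (mul_eq_zero.mp e2).resolve_left (hμ0 x)
    have hD3 : ∀ x, h (τ x) * (μ x * h (τ x) + h x) = 0 := by
      intro x
      have e := hA (τ x) x
      rw [hD2 x, hD1 (τ x)] at e
      linear_combination (-e) / 2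
    have hD4 : ∀ x, h x * (μ (τ x) * h x + h (τ x)) = 0 := by
      intro x
      have e := hA x (τ x)
      rw [hτinv x, hD1 x] at e
      have e2 := hD2 (τ x)
      rw [hτinv x] at e2
      rw [e2] at e
      linear_combination (-e) / 2
    have hT : ∀ x, h (τ x) = -(μ (τ x) * h x) := by
      intro x
      by_cases hx : h x = 0
      · have e := hD3 x
        rw [hx] at e
        have e2 : h (τ x) * h (τ x) * μ x = 0 := by linear_combination e
        have e3 := (mul_eq_zero.mp e2).resolve_right (hμ0 x)
        rw [hx, mul_self_eq_zero.mp e3]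
        ring
      · have e := (mul_eq_zero.mp (hD4 x)).resolve_left hx
        linear_combination e
    have hz : ∀ x y, h (τ y * x) = 0 := by
      intro x y
      have k1 : τ (y * τ x) = τ y * x := by rw [hhom y (τ x), hτinv x]
      have t1 := hT (y * τ x)
      rw [k1, hμ (τ y) x] at t1
      have e2 := hA y (τ x)
      rw [hτinv x, hT x] at e2
      have e3 := hA x y
      linear_combination (t1 + μ (τ y) * μ x * e2 + μ (τ y) * μ x * μ (τ x) * e3
        - h (τ y * x) * (μ (τ y) * μ y) * hμ1 x - h (τ y * x) * hμ1 y) / 2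
    have habs : ∀ u v, h (u * v) = 0 := by
      intro u v
      have e := hz v (τ u)
      rw [hτinv u] at e
      exact e
    have e := hA a a
    rw [hz a a, habs a a] at e
    have e2 : h a * h a = 0 := by linear_combination -e / 2
    exact ha (mul_self_eq_zero.mp e2)
  · -- anti-homomorphism case
    have hC2 : ∀ x y z, h (x * y * z) + 2 * h x * h (y * z) =
        h (x * z * y) + 2 * h (x * z) * h y + 2 * h (x * y) * h z + 4 * h x * h y * h z := by
      intro x y z
      have e1 := hA x (y * z)
      rw [hanti y z, mul_assoc (τ z) (τ y) x, hμ y z, ← mul_assoc x y z] at e1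
      have e2 := hA (τ y * x) z
      rw [mul_assoc (τ y) x z] at e2
      have e3 := hA (x * z) y
      have e4 := hA x y
      linear_combination μ y * e2 + e3 + 2 * h z * e4 - e1
    have hC3 : ∀ x y z, h x * (h (y * z) + h (z * y)) =
        2 * h (x * z) * h y + 2 * h (x * y) * h z + 4 * h x * h y * h z := by
      intro x y z
      linear_combination (hC2 x y z + hC2 x z y) / 2
    have hR : ∀ y z, h z * h z * (h (y * y) + 2 * (h y * h y))
        + h y * h y * (h (z * z) + 2 * (h z * h z)) = 0 := by
      intro y z
      linear_combination (-(h z * hC3 y y z + h y * hC3 z y z)) / 2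
    have hδa : h (a * a) + 2 * (h a * h a) = 0 := by
      have e := hR a a
      have e2 : h a * h a * ((h (a * a) + 2 * (h a * h a)) * 2) = 0 := by linear_combination e
      have e3 := (mul_eq_zero.mp e2).resolve_left (mul_self_ne_zero.mpr ha)
      linear_combination e3 / 2
    have hD1 : ∀ x, h (x * x) = -2 * (h x * h x) := by
      intro x
      have e := hR x a
      have e2 : h a * h a * (h (x * x) + 2 * (h x * h x)) = 0 := by
        linear_combination e - h x * h x * hδa
      have e3 := (mul_eq_zero.mp e2).resolve_left (mul_self_ne_zero.mpr ha)
      linear_combination e3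
    have hD2 : ∀ x, h (τ x * x) = 0 := by
      intro x
      have e := hA x x
      rw [hD1 x] at e
      have e2 : μ x * h (τ x * x) = 0 := by linear_combination e
      exact (mul_eq_zero.mp e2).resolve_left (hμ0 x)
    have hD3 : ∀ x, h (τ x) * (μ x * h (τ x) + h x) = 0 := by
      intro x
      have e := hA (τ x) x
      rw [hD2 x, hD1 (τ x)] at e
      linear_combination (-e) / 2
    have hD4 : ∀ x, h x * (μ (τ x) * h x + h (τ x)) = 0 := by
      intro x
      have e := hA x (τ x)
      rw [hτinv x, hD1 x] at e
      have e2 := hD2 (τ x)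
      rw [hτinv x] at e2
      rw [e2] at e
      linear_combination (-e) / 2
    have hT : ∀ x, h (τ x) = -(μ (τ x) * h x) := by
      intro x
      by_cases hx : h x = 0
      · have e := hD3 x
        rw [hx] at e
        have e2 : h (τ x) * h (τ x) * μ x = 0 := by linear_combination e
        have e3 := (mul_eq_zero.mp e2).resolve_right (hμ0 x)
        rw [hx, mul_self_eq_zero.mp e3]
        ring
      · have e := (mul_eq_zero.mp (hD4 x)).resolve_left hx
        linear_combination e
    have hswap : ∀ x y, μ y * h (τ y * x) = -(μ x * h (τ x * y)) := by
      intro x y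
      have k1 : τ (τ x * y) = τ y * x := by rw [hanti (τ x) y, hτinv x]
      have t1 := hT (τ x * y)
      rw [k1, hμ (τ y) x] at t1
      linear_combination μ y * t1 - μ x * h (τ x * y) * hμ1 y
    have hK1 : ∀ x y, h (x * y) + h (y * x) = -4 * h x * h y := by
      intro x y
      linear_combination -(hA x y) - hA y x + hswap x y
    have hK2 : ∀ x y z, h (x * z) * h y + h (x * y) * h z = -4 * h x * h y * h z := by
      intro x y z
      linear_combination (h x * hK1 y z - hC3 x y z) / 2
    have hma : ∀ x, h (x * a) = -2 * h x * h a := by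
      intro x
      have e : (h (x * a) + 2 * h x * h a) * h a = 0 := by linear_combination hK2 x a a / 2
      have e2 := (mul_eq_zero.mp e).resolve_right ha
      linear_combination e2
    have hmul : ∀ x z, h (x * z) = -2 * h x * h z := by
      intro x z
      have e : (h (x * z) + 2 * h x * h z) * h a = 0 := by
        linear_combination hK2 x a z - h z * hma x
      have e2 := (mul_eq_zero.mp e).resolve_right ha
      linear_combination e2
    have e := hA a a
    rw [hmul (τ a) a, hmul a a, hT a] at e
    have e2 : h a * h a = 0 := by linear_combination e / 2 - h a * h a * hμ1 a
    exact ha (mul_self_eq_zero.mp e2)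

theorem stmt_18 {S : Type*} [Semigroup S] (τ : S → S)
    (hτinv : ∀ x, τ (τ x) = x)
    (hτ : (∀ x y, τ (x * y) = τ x * τ y) ∨ (∀ x y, τ (x * y) = τ y * τ x))
    (μ : S → ℂ) (hμ : ∀ x y, μ (x * y) = μ x * μ y)
    (hμτ : ∀ x, μ (x * τ x) = 1)
    (z₀ : S) (hz₀ : ∀ x, z₀ * x = x * z₀)
    (f : S → ℂ) (hf0 : f ≠ 0) (hf : ∀ x y, μ y * f (τ y * x * z₀) - f (x * y * z₀) = 2 * f x * f y) :
    (fun x => f (x * z₀) / f z₀) ≠ 0 ∧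
    (∀ x y, (fun x => f (x * z₀) / f z₀) (x * y) + μ y * (fun x => f (x * z₀) / f z₀) (τ y * x) =
      2 * (fun x => f (x * z₀) / f z₀) x * (fun x => f (x * z₀) / f z₀) y) ∧
    (∀ x y, f (x * y) = f x * (fun x => f (x * z₀) / f z₀) y +
      f y * (fun x => f (x * z₀) / f z₀) x) := by
  obtain ⟨a, ha⟩ := Function.ne_iff.mp hf0
  simp only [Pi.zero_apply] at ha
  have hμ1 : ∀ x, μ x * μ (τ x) = 1 := fun x => by rw [← hμ]; exact hμτ x
  have hμ0 : ∀ x, μ x ≠ 0 := by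
    intro x hx
    have h1 := hμ1 x
    rw [hx, zero_mul] at h1
    exact zero_ne_one h1
  -- τ z₀ is central
  have hστ : ∀ s, τ z₀ * s = s * τ z₀ := by
    intro s
    rcases hτ with hhom | hanti
    · calc τ z₀ * s = τ z₀ * τ (τ s) := by rw [hτinv]
        _ = τ (z₀ * τ s) := (hhom _ _).symm
        _ = τ (τ s * z₀) := by rw [hz₀]
        _ = τ (τ s) * τ z₀ := hhom _ _
        _ = s * τ z₀ := by rw [hτinv]
    · calc τ z₀ * s = τ z₀ * τ (τ s) := by rw [hτinv]
        _ = τ (τ s * z₀) := (hanti _ _).symm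
        _ = τ (z₀ * τ s) := by rw [hz₀]
        _ = τ (τ s) * τ z₀ := hanti _ _
        _ = s * τ z₀ := by rw [hτinv]
  have hτzm : ∀ y, τ (y * z₀) = τ y * τ z₀ := by
    intro y
    rcases hτ with hhom | hanti
    · exact hhom y z₀
    · rw [hanti y z₀, hστ (τ y)]
  -- key identity (5)
  have h5 : ∀ x y, f z₀ * (μ y * f (τ y * x)) = f x * f (y * z₀) - f (x * z₀) * f y := by
    intro x y
    have e3 := hf (x * z₀) y
    rw [show τ y * (x * z₀) * z₀ = τ y * x * z₀ * z₀ by simp only [mul_assoc],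
        show x * z₀ * y * z₀ = x * y * z₀ * z₀ by
          rw [mul_assoc x z₀ y, hz₀ y, ← mul_assoc x y z₀]] at e3
    have e2 := hf x (y * z₀)
    rw [hμ y z₀, hτzm y,
        show τ y * τ z₀ * x * z₀ = τ z₀ * (τ y * x) * z₀ by
          rw [← hστ (τ y), mul_assoc (τ z₀) (τ y) x],
        show x * (y * z₀) * z₀ = x * y * z₀ * z₀ by rw [← mul_assoc x y z₀]] at e2
    have es := hf (τ y * x) z₀
    linear_combination (e2 - e3 - μ y * es) / 2
  -- identity (7)
  have h7 : ∀ x y, f z₀ * f (x * y * z₀) =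
      f (x * z₀) * f (y * z₀) - f (x * z₀ * z₀) * f y - 2 * f z₀ * f x * f y := by
    intro x y
    have e5 := h5 (x * z₀) y
    rw [← mul_assoc (τ y) x z₀] at e5
    linear_combination e5 - f z₀ * hf x y
  -- f z₀ ≠ 0
  have hfz : f z₀ ≠ 0 := by
    intro h0
    have hφ : ∀ u, f a * f (u * z₀) = f (a * z₀) * f u := by
      intro u
      have e := h5 a u
      rw [h0] at e
      linear_combination -e
    have hfaz : f (a * z₀) ≠ 0 := by
      intro hl
      have hφ0 : ∀ u, f (u * z₀) = 0 := by
        intro u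
        have e := hφ u
        rw [hl, zero_mul] at e
        exact (mul_eq_zero.mp e).resolve_left ha
      have e := hf a a
      rw [hφ0 (τ a * a), hφ0 (a * a)] at e
      have e2 : f a * f a = 0 := by linear_combination -e / 2
      exact ha (mul_self_eq_zero.mp e2)
    have hA : ∀ x y, μ y * ((fun x => f a * f x / f (a * z₀)) (τ y * x)) =
        (fun x => f a * f x / f (a * z₀)) (x * y)
          + 2 * ((fun x => f a * f x / f (a * z₀)) x) * ((fun x => f a * f x / f (a * z₀)) y) := by
      intro x y
      have e2 : μ y * (f (a * z₀) * f (τ y * x)) - f (a * z₀) * f (x * y)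
          = 2 * f a * f x * f y := by
        linear_combination f a * hf x y - μ y * hφ (τ y * x) + hφ (x * y)
      simp only
      field_simp
      linear_combination e2
    have := no_sol τ hτinv hτ μ hμ hμτ (fun x => f a * f x / f (a * z₀)) hA a
    simp only [div_eq_zero_iff, mul_eq_zero] at this
    rcases this with (h1 | h1) | h1
    · exact ha h1
    · exact ha h1
    · exact hfaz h1
  -- f (τ z₀ * z₀) = 0
  have h12 : f (τ z₀ * z₀) = 0 := by
    have e := h5 z₀ z₀
    have e2 : f z₀ * (μ z₀ * f (τ z₀ * z₀)) = 0 := by linear_combination e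
    have e3 := (mul_eq_zero.mp e2).resolve_left hfz
    exact (mul_eq_zero.mp e3).resolve_left (hμ0 z₀)
  -- f (τ z₀) = -(μ (τ z₀) * f z₀)
  have h14 : f (τ z₀) = -(μ (τ z₀) * f z₀) := by
    have e13 : ∀ x, f (x * z₀) * (f z₀ * μ (τ z₀) + f (τ z₀)) = 0 := by
      intro x
      have e := h5 x (τ z₀)
      rw [hτinv z₀, hz₀ x, h12] at e
      linear_combination e
    by_cases hK : f z₀ * μ (τ z₀) + f (τ z₀) = 0
    · linear_combination hK
    · exfalso
      have hφ0 : ∀ x, f (x * z₀) = 0 := fun x => (mul_eq_zero.mp (e13 x)).resolve_right hK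
      have e := h7 a a
      rw [hφ0 (a * a), hφ0 a, hφ0 (a * z₀)] at e
      have e2 : f z₀ * (f a * f a) = 0 := by linear_combination e / 2
      exact ha (mul_self_eq_zero.mp ((mul_eq_zero.mp e2).resolve_left hfz))
  -- identity (11)
  have h11 : ∀ x, 2 * f z₀ * f (x * z₀ * z₀) =
      f (z₀ * z₀) * f (x * z₀) - 2 * f z₀ * f z₀ * f x := by
    intro x
    have e1 := h5 (x * z₀) z₀
    rw [← mul_assoc (τ z₀) x z₀] at e1
    linear_combination e1 - f z₀ * hf x z₀
  -- (15)
  have h15 : f (τ z₀ * z₀ * z₀) = μ (τ z₀) * (f z₀ * f z₀) := by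
    have e := h11 (τ z₀)
    rw [h12, h14] at e
    have e2 : f z₀ * (f (τ z₀ * z₀ * z₀) - μ (τ z₀) * (f z₀ * f z₀)) = 0 := by
      linear_combination e / 2
    have e3 := (mul_eq_zero.mp e2).resolve_left hfz
    linear_combination e3
  -- (17)
  have h17 : f (z₀ * z₀ * z₀) = -(f z₀ * f z₀) := by
    have e := hf z₀ (τ z₀)
    rw [hτinv z₀, ← hστ z₀, h15, h14] at e
    have e2 : μ (τ z₀) * (f (z₀ * z₀ * z₀) + f z₀ * f z₀) = 0 := by linear_combination e
    have e3 := (mul_eq_zero.mp e2).resolve_left (hμ0 (τ z₀))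
    linear_combination e3
  -- f (z₀ * z₀) = 0
  have hφz : f (z₀ * z₀) = 0 := by
    have e := h11 z₀
    rw [h17] at e
    have e2 : f (z₀ * z₀) * f (z₀ * z₀) = 0 := by linear_combination -e
    exact mul_self_eq_zero.mp e2
  -- T2
  have hT2 : ∀ x, f (x * z₀ * z₀) = -(f z₀ * f x) := by
    intro x
    have e := h11 x
    rw [hφz] at e
    have e2 : f z₀ * (2 * (f (x * z₀ * z₀) + f z₀ * f x)) = 0 := by linear_combination e
    have e3 := (mul_eq_zero.mp e2).resolve_left hfz
    linear_combination e3 / 2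
  -- T3
  have hT3 : ∀ y, μ y * f (τ y) = -(f y) := by
    intro y
    have e := hf z₀ y
    rw [hT2 (τ y), hz₀ y, hT2 y] at e
    have e2 : f z₀ * (μ y * f (τ y) + f y) = 0 := by linear_combination -e
    have e3 := (mul_eq_zero.mp e2).resolve_left hfz
    linear_combination e3
  -- T4
  have hT4 : ∀ y, μ y * f (τ y * z₀) = f (y * z₀) := by
    intro y
    have e := h5 z₀ y
    rw [hφz] at e
    have e2 : f z₀ * (μ y * f (τ y * z₀) - f (y * z₀)) = 0 := by linear_combination e
    have e3 := (mul_eq_zero.mp e2).resolve_left hfz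
    linear_combination e3
  -- sine addition
  have hSL : ∀ x y, f z₀ * f (y * x) = f x * f (y * z₀) + f (x * z₀) * f y := by
    intro x y
    have e := h5 x (τ y)
    rw [hτinv y] at e
    linear_combination μ y * e + f x * hT4 y - f (x * z₀) * hT3 y - f z₀ * f (y * x) * hμ1 y
  -- (G)
  have hG : ∀ x y, f z₀ * f (x * y * z₀) =
      f (x * z₀) * f (y * z₀) - f z₀ * f x * f y := by
    intro x y
    linear_combination h7 x y - f y * hT2 x
  refine ⟨?_, ?_, ?_⟩
  · intro hg
    have h0 : ∀ u, f (u * z₀) = 0 := by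
      intro u
      have e := congrFun hg u
      simp only [Pi.zero_apply] at e
      exact (div_eq_zero_iff.mp e).resolve_right hfz
    have e := hG a a
    rw [h0 (a * a), h0 a] at e
    have e2 : f z₀ * (f a * f a) = 0 := by linear_combination e
    exact ha (mul_self_eq_zero.mp ((mul_eq_zero.mp e2).resolve_left hfz))
  · intro x y
    simp only
    field_simp
    linear_combination f z₀ * hf x y + 2 * hG x y
  · intro x y
    simp only
    field_simp
    linear_combination hSL y x
end

section
/- The nonzero solutions f: S → ℂ of μ(y)f(τ(y)xz₀) − f(xyz₀) = 2f(x)f(y) are exactly the functions f = χ(z₀)·(μ·χ∘τ − χ)/2 where χ: S → ℂ is multiplicative with χ(z₀) ≠ 0 and μ(z₀)χ(τ(z₀)) = −χ(z₀). -/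
theorem stmt_19 {S : Type*} [Semigroup S] (τ : S → S)
    (hτinv : ∀ x, τ (τ x) = x)
    (hτ : (∀ x y, τ (x * y) = τ x * τ y) ∨ (∀ x y, τ (x * y) = τ y * τ x))
    (μ : S → ℂ) (hμ : ∀ x y, μ (x * y) = μ x * μ y)
    (hμτ : ∀ x, μ (x * τ x) = 1)
    (z₀ : S) (hz₀ : ∀ x, z₀ * x = x * z₀)
    (f : S → ℂ) :
    (f ≠ 0 ∧ ∀ x y, μ y * f (τ y * x * z₀) - f (x * y * z₀) = 2 * f x * f y) ↔
    ∃ χ : S → ℂ, (∀ x y, χ (x * y) = χ x * χ y) ∧ χ z₀ ≠ 0 ∧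
      μ z₀ * χ (τ z₀) = -χ z₀ ∧
      ∀ x, f x = χ z₀ * (μ x * χ (τ x) - χ x) / 2 := by
  have hμμ : ∀ x, μ x * μ (τ x) = 1 := fun x => by rw [← hμ]; exact hμτ x
  have hμne : ∀ x, μ x ≠ 0 := by
    intro x hx
    have := hμμ x
    rw [hx, zero_mul] at this
    exact zero_ne_one this
  constructor
  · rintro ⟨hf, hE⟩
    obtain ⟨u, hu⟩ := Function.ne_iff.mp hf
    simp only [Pi.zero_apply] at hu
    have hE' : ∀ x y, μ y * f (τ y * x * z₀) = f (x * y * z₀) + 2 * f x * f y := by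
      intro x y; linear_combination hE x y
    -- degenerate case lemma: if f (x*z₀) is proportional to f x, contradiction
    have hdeg : ∀ l : ℂ, (∀ x, f (x * z₀) = l * f x) → False := by
      intro l hl
      by_cases hl0 : l = 0
      · have h := hE u u
        rw [hl (τ u * u), hl (u * u), hl0] at h
        simp only [zero_mul, mul_zero, sub_zero, zero_sub] at h
        have : f u * f u = 0 := by linear_combination -h / 2
        exact hu (mul_self_eq_zero.mp this)
      · have hP : ∀ x y, l * (μ y * f (τ y * x)) = l * f (x * y) + 2 * f x * f y := by
          intro x y
          have h := hE x y
          rw [hl (τ y * x), hl (x * y)] at h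
          linear_combination h
        rcases hτ with hhom | hanti
        · -- homomorphism case
          have hT1 : ∀ x y, l * (μ x * μ y * f (τ (y * x))) =
              l * f (y * x) + 2 * (f x * f y) + 2 * (μ x * f (τ x)) * f y := by
            intro x y
            have h1 := hP (τ x) y
            rw [← hhom y x] at h1
            have h2 := hP y x
            have h3 : l * (l * (μ x * μ y * f (τ (y * x)))) =
                l * (l * f (y * x) + 2 * (f x * f y) + 2 * (μ x * f (τ x)) * f y) := by
              linear_combination (l * μ x) * h1 + l * h2
            exact mul_left_cancel₀ hl0 h3
          have key : ∀ x y, (f x + μ x * f (τ x)) * (f y + μ y * f (τ y)) = 0 := by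
            intro x y
            have t1 := hT1 x y
            have t2 := hT1 (τ x) (τ y)
            rw [← hhom y x, hτinv (y * x), hτinv x] at t2
            linear_combination (-(1 : ℂ) / 2) * t1 + (-(μ x * μ y) / 2) * t2 +
              ((l * f (y * x) * μ y * μ (τ y) - 2 * μ y * f x * f (τ y)) / 2) * hμμ x +
              ((l * f (y * x)) / 2) * hμμ y
          have hstar : ∀ x, μ x * f (τ x) = -f x := by
            intro x
            have k := key x x
            have h := mul_self_eq_zero.mp k
            linear_combination h
          have hzero : ∀ x y, f (τ y * x) = 0 := by
            intro x y
            have e1 := hstar (τ y * x)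
            rw [hhom (τ y) x, hτinv y, hμ (τ y) x] at e1
            have e2 := hP y (τ x)
            rw [hτinv x] at e2
            have e3 := hP x y
            have hmul : 2 * (l * f (x * y) + 2 * (f x * f y)) = 0 := by
              linear_combination (l * μ y) * e1 + μ x * e2 - e3 -
                (l * μ x * f (y * τ x)) * hμμ y - (l * f (x * y)) * hμμ x +
                (2 * f y) * hstar x
            have h5 : l * (μ y * f (τ y * x)) = 0 := by
              linear_combination e3 + hmul / 2
            rcases mul_eq_zero.mp h5 with h | h
            · exact absurd h hl0
            · rcases mul_eq_zero.mp h with h' | h'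
              · exact absurd h' (hμne y)
              · exact h'
          have hall : ∀ x y, f (x * y) = 0 := by
            intro x y
            have h := hzero y (τ x)
            rwa [hτinv x] at h
          have h8 := hP u u
          rw [hzero u u, hall u u] at h8
          have h9 : f u * f u = 0 := by linear_combination -h8 / 2
          exact hu (mul_self_eq_zero.mp h9)
        · -- anti-homomorphism case
          have hT1 : ∀ x y, l * (μ x * μ y * f (τ (x * y))) =
              l * f (y * x) + 2 * (f x * f y) + 2 * (μ x * f (τ x)) * f y := by
            intro x y
            have h1 := hP (τ x) y
            rw [← hanti x y] at h1
            have h2 := hP y x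
            have h3 : l * (l * (μ x * μ y * f (τ (x * y)))) =
                l * (l * f (y * x) + 2 * (f x * f y) + 2 * (μ x * f (τ x)) * f y) := by
              linear_combination (l * μ x) * h1 + l * h2
            exact mul_left_cancel₀ hl0 h3
          have key : ∀ x y, (f x + μ x * f (τ x)) * (f y + μ y * f (τ y)) = 0 := by
            intro x y
            have t1 := hT1 x y
            have t2 := hT1 (τ x) (τ y)
            rw [← hanti y x, hτinv (y * x), hτinv x, ← hanti x y] at t2
            linear_combination (-(1 : ℂ) / 2) * t1 + (-(μ x * μ y) / 2) * t2 +
              ((l * f (y * x) * μ y * μ (τ y) - 2 * μ y * f x * f (τ y)) / 2) * hμμ x +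
              ((l * f (y * x)) / 2) * hμμ y
          have hstar : ∀ x, μ x * f (τ x) = -f x := by
            intro x
            have k := key x x
            have h := mul_self_eq_zero.mp k
            linear_combination h
          have hU : ∀ x y, l * f (x * y) + l * f (y * x) + 4 * (f x * f y) = 0 := by
            intro x y
            have e1 := hstar (τ y * x)
            rw [hanti (τ y) x, hτinv y, hμ (τ y) x] at e1
            have e2 := hP y x
            have e3 := hP x y
            linear_combination (l * μ y) * e1 - (l * μ x * f (τ x * y)) * hμμ y - e2 - e3
          have hA3 : ∀ x y z, 2 * (l * f (x * y * z)) =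
              -(4 * (f x * f (y * z))) + 4 * (f y * f (z * x)) - 4 * (f z * f (x * y)) := by
            intro x y z
            have u1 := hU x (y * z)
            have u2 := hU y (z * x)
            have u3 := hU z (x * y)
            rw [← mul_assoc x y z] at u1
            rw [← mul_assoc y z x] at u2
            rw [← mul_assoc z x y] at u3
            linear_combination u1 - u2 + u3
          have hτyy : ∀ y, f (τ y * y) = 0 := by
            intro y
            have h := hP y y
            have h2 := hU y y
            have h3 : l * (μ y * f (τ y * y)) = 0 := by linear_combination h + h2 / 2
            rcases mul_eq_zero.mp h3 with h | h
            · exact absurd h hl0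
            · rcases mul_eq_zero.mp h with h' | h'
              · exact absurd h' (hμne y)
              · exact h'
          have hyτy : ∀ y, l * (μ y * f (y * τ y)) = 4 * (f y * f y) := by
            intro y
            have u' := hU (τ y) y
            rw [hτyy y] at u'
            linear_combination μ y * u' - 4 * f y * hstar y
          have hfyx : ∀ x y, f y * f (y * x) = 0 := by
            intro x y
            have A1 := hA3 (τ y) x y
            have A2 := hP (x * y) y
            rw [← mul_assoc (τ y) x y] at A2
            have A3' := hA3 x y y
            have A4 := hU y y
            have A5 := hyτy y
            have A6 := hstar y
            have A7 := hP x y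
            have h4 : 4 * (l * (f y * f (y * x))) = 0 := by
              linear_combination (l * μ y) * A1 - (2 * l) * A2 - l * A3' +
                (2 * f x) * A4 + (4 * f x) * A5 - (4 * l * f (x * y)) * A6 - (4 * f y) * A7
            rcases mul_eq_zero.mp h4 with h | h
            · norm_num at h
            · rcases mul_eq_zero.mp h with h' | h'
              · exact absurd h' hl0
              · exact h'
          have h := hfyx z₀ u
          rw [hl u] at h
          rcases mul_eq_zero.mp h with h' | h'
          · exact hu h'
          · rcases mul_eq_zero.mp h' with h'' | h''
            · exact hl0 h''
            · exact hu h''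
    -- key identity hM
    have hM : ∀ x y, f z₀ * (μ y * f (τ y * x)) =
        f x * f (y * z₀) - f (x * z₀) * f y := by
      rcases hτ with hhom | hanti
      · intro x y
        have s1 := hE' x (z₀ * y)
        rw [hhom z₀ y, hμ z₀ y, hz₀ y, ← mul_assoc x y z₀] at s1
        have s2 := hE' (τ y * x) z₀
        rw [← mul_assoc (τ z₀) (τ y) x] at s2
        have s3 := hE' (x * z₀) y
        rw [← mul_assoc (τ y) x z₀,
          show x * z₀ * y = x * y * z₀ from by
            rw [mul_assoc x z₀ y, hz₀ y, ← mul_assoc x y z₀]] at s3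
        linear_combination (1 / 2 : ℂ) * s1 - (μ y / 2) * s2 - (1 / 2 : ℂ) * s3
      · intro x y
        have s1 := hE' x (y * z₀)
        rw [hanti y z₀, hμ y z₀, ← mul_assoc x y z₀] at s1
        have s2 := hE' (τ y * x) z₀
        rw [← mul_assoc (τ z₀) (τ y) x] at s2
        have s3 := hE' (x * z₀) y
        rw [← mul_assoc (τ y) x z₀,
          show x * z₀ * y = x * y * z₀ from by
            rw [mul_assoc x z₀ y, hz₀ y, ← mul_assoc x y z₀]] at s3
        linear_combination (1 / 2 : ℂ) * s1 - (μ y / 2) * s2 - (1 / 2 : ℂ) * s3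
    -- f z₀ ≠ 0
    have ha : f z₀ ≠ 0 := by
      intro ha0
      apply hdeg (f (u * z₀) / f u)
      intro x
      have m := hM x u
      rw [ha0, zero_mul] at m
      field_simp
      linear_combination m
    have hN : ∀ x y, f z₀ * f (x * y * z₀) + 2 * (f z₀ * f x * f y) =
        f (x * z₀) * f (y * z₀) - f (x * z₀ * z₀) * f y := by
      intro x y
      have m := hM (x * z₀) y
      rw [← mul_assoc (τ y) x z₀] at m
      have e := hE' x y
      linear_combination m - f z₀ * e
    have hbkey : ∀ y, f (z₀ * z₀) * (f z₀ * f (y * z₀) - f (z₀ * z₀) * f y) = 0 := by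
      intro y
      have n2y := hN y z₀
      have n3y := hN z₀ y
      rw [hz₀ y] at n3y
      have n1 := hN z₀ z₀
      linear_combination f z₀ * n2y - (2 * f z₀) * n3y + f y * n1
    have hb : f (z₀ * z₀) = 0 := by
      by_contra hb0
      apply hdeg (f (z₀ * z₀) / f z₀)
      intro x
      have h := hbkey x
      have h2 := (mul_eq_zero.mp h).resolve_left hb0
      field_simp
      linear_combination h2
    have hVII : ∀ x, f (x * z₀ * z₀) = -(f z₀ * f x) := by
      intro x
      have n2x := hN x z₀
      rw [hb] at n2x
      have h : f z₀ * (f (x * z₀ * z₀) + f z₀ * f x) = 0 := by linear_combination n2x / 2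
      have h2 := (mul_eq_zero.mp h).resolve_left ha
      linear_combination h2
    have hI : ∀ x y, f z₀ * f (x * y * z₀) = f (x * z₀) * f (y * z₀) - f z₀ * f x * f y := by
      intro x y
      linear_combination hN x y - f y * hVII x
    have hII : ∀ x y, f z₀ * f (x * y) = f x * f (y * z₀) + f (x * z₀) * f y := by
      intro x y
      have i := hI (x * z₀) y
      rw [show x * z₀ * y = x * y * z₀ from by
        rw [mul_assoc x z₀ y, hz₀ y, ← mul_assoc x y z₀]] at i
      have v1 := hVII (x * y)
      have v2 := hVII x
      have h : f z₀ * (f z₀ * f (x * y) - f x * f (y * z₀) - f (x * z₀) * f y) = 0 := by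
        linear_combination -i + f z₀ * v1 - f (y * z₀) * v2
      have h2 := (mul_eq_zero.mp h).resolve_left ha
      linear_combination h2
    have hV : ∀ y, μ y * f (τ y * z₀) = f (y * z₀) := by
      intro y
      have m := hM z₀ y
      rw [hb] at m
      have m' : f z₀ * (μ y * f (τ y * z₀)) = f z₀ * f (y * z₀) := by linear_combination m
      exact mul_left_cancel₀ ha m'
    have hVI : ∀ y, μ y * f (τ y) = -f y := by
      intro y
      have hX : f (u * z₀ * z₀) ≠ 0 := by
        rw [hVII u]
        exact neg_ne_zero.mpr (mul_ne_zero ha hu)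
      have hFτ := hV (τ y)
      rw [hτinv y] at hFτ
      have e1 := hII (τ y) (u * z₀)
      have e2 := hM (u * z₀) y
      have hkey : f (u * z₀ * z₀) * (f (τ y) + μ (τ y) * f y) = 0 := by
        linear_combination μ (τ y) * e2 - (f z₀ * f (τ y * (u * z₀))) * hμμ y - e1 +
          f (u * z₀) * hFτ
      have h2 := (mul_eq_zero.mp hkey).resolve_left hX
      linear_combination μ y * h2 - f y * hμμ y
    obtain ⟨c, hc⟩ : ∃ c : ℂ, c ^ 2 = -f z₀ := IsAlgClosed.exists_pow_nat_eq _ zero_lt_two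
    have hcne : c ≠ 0 := by
      intro h
      rw [h] at hc
      simp only [ne_eq, zero_pow, OfNat.ofNat_ne_zero, not_false_eq_true] at hc
      exact ha (by linear_combination hc)
    refine ⟨fun x => (f (x * z₀) + c * f x) / f z₀, ?_, ?_, ?_, ?_⟩
    · intro x y
      show (f (x * y * z₀) + c * f (x * y)) / f z₀ =
        (f (x * z₀) + c * f x) / f z₀ * ((f (y * z₀) + c * f y) / f z₀)
      rw [div_mul_div_comm, div_eq_div_iff ha (mul_ne_zero ha ha)]
      linear_combination f z₀ * hI x y + (f z₀ * c) * hII x y - (f z₀ * f x * f y) * hc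
    · show (f (z₀ * z₀) + c * f z₀) / f z₀ ≠ 0
      rw [hb, zero_add]
      exact div_ne_zero (mul_ne_zero hcne ha) ha
    · show μ z₀ * ((f (τ z₀ * z₀) + c * f (τ z₀)) / f z₀) =
        -((f (z₀ * z₀) + c * f z₀) / f z₀)
      rw [hb, zero_add]
      have hv := hV z₀
      rw [hb] at hv
      have hw := hVI z₀
      field_simp
      linear_combination hv + c * hw
    · intro x
      show f x = (f (z₀ * z₀) + c * f z₀) / f z₀ *
        (μ x * ((f (τ x * z₀) + c * f (τ x)) / f z₀) - (f (x * z₀) + c * f x) / f z₀) / 2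
      rw [hb, zero_add]
      have hvx := hV x
      have hwx := hVI x
      field_simp
      linear_combination 2 * f x * hc - c * hvx - c ^ 2 * hwx
  · rintro ⟨χ, hχm, hχ0, hχz, hfx⟩
    have hχτ : ∀ x y, χ (τ (x * y)) = χ (τ x) * χ (τ y) := by
      rcases hτ with h | h <;> intro x y <;> rw [h x y, hχm] <;> ring
    constructor
    · intro h0
      apply hχ0
      have hz : f z₀ = 0 := by rw [h0]; rfl
      have h1 := hfx z₀
      rw [hz, hχz] at h1
      have : χ z₀ * χ z₀ = 0 := by linear_combination h1
      exact mul_self_eq_zero.mp this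
    · intro x y
      rw [hfx (τ y * x * z₀), hfx (x * y * z₀), hfx x, hfx y]
      have m1 : μ (τ y * x * z₀) = μ (τ y) * μ x * μ z₀ := by rw [hμ, hμ]
      have m2 : μ (x * y * z₀) = μ x * μ y * μ z₀ := by rw [hμ, hμ]
      have c1 : χ (τ y * x * z₀) = χ (τ y) * χ x * χ z₀ := by rw [hχm, hχm]
      have c2 : χ (x * y * z₀) = χ x * χ y * χ z₀ := by rw [hχm, hχm]
      have c3 : χ (τ (τ y * x * z₀)) = χ y * χ (τ x) * χ (τ z₀) := by
        rw [hχτ (τ y * x) z₀, hχτ (τ y) x, hτinv y]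
      have c4 : χ (τ (x * y * z₀)) = χ (τ x) * χ (τ y) * χ (τ z₀) := by
        rw [hχτ (x * y) z₀, hχτ x y]
      rw [m1, m2, c1, c2, c3, c4]
      linear_combination (χ z₀ / 2 * μ x * χ (τ x) * μ y * (μ (τ y) * χ y - χ (τ y))) * hχz +
        (-(χ z₀ ^ 2) / 2 * μ x * χ (τ x) * χ y) * hμμ y
end
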